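/- arXiv:2208.08260 — 6 statements merged into one kernel-verified Lean document; each statement's English description precedes it below -/
import Mathlib

section
/- Let t0 > 0 and let z : [t0, ∞) → H be a continuously differentiable solution of the perturbed steepest descent equation ż(t) + ∇f(z(t)) = g(t) for all t ≥ t0, where the perturbation g : [t0, ∞) → H satisfies ∫_{t0}^∞ ‖g(t)‖ dt < ∞ and ∫_{t0}^∞ t‖g(t)‖² dt < ∞. Then the following integral estimates hold: ∫_{t0}^∞ t‖ż(t)‖² dt < ∞, ∫_{t0}^∞ t‖∇f(z(t))‖² dt < ∞, and ∫_{t0}^∞ (f(z(t)) − inf_H f) dt < ∞. -/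
open MeasureTheory Filter Set
open scoped Topology RealInnerProductSpace

private lemma le_of_deriv_nonpos' {φ : ℝ → ℝ} {a b : ℝ} (hab : a ≤ b)
    (hcont : ContinuousOn φ (Icc a b))
    (hderiv : ∀ t ∈ Ioo a b, ∃ d, d ≤ 0 ∧ HasDerivAt φ d t) : φ b ≤ φ a := by
  have hdiff : DifferentiableOn ℝ φ (interior (Icc a b)) := by
    rw [interior_Icc]
    intro t ht
    obtain ⟨d, _, hd⟩ := hderiv t ht
    exact hd.differentiableAt.differentiableWithinAt
  have hanti : AntitoneOn φ (Icc a b) := by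
    refine antitoneOn_of_deriv_nonpos (convex_Icc a b) hcont hdiff ?_
    rw [interior_Icc]
    intro t ht
    obtain ⟨d, hd0, hd⟩ := hderiv t ht
    rw [hd.deriv]; exact hd0
  exact hanti (left_mem_Icc.2 hab) (right_mem_Icc.2 hab) hab

private lemma grad_convex_ineq {H : Type*} [NormedAddCommGroup H] [InnerProductSpace ℝ H]
    [CompleteSpace H] {f : H → ℝ} {v x : H} (hconv : ConvexOn ℝ Set.univ f)
    (hx : HasGradientAt f v x) (y : H) : f x + ⟪v, y - x⟫ ≤ f y := by
  have hcurve : HasDerivAt (fun s : ℝ => x + s • (y - x)) (y - x) 0 := by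
    simpa using ((hasDerivAt_id (0 : ℝ)).smul_const (y - x)).const_add x
  have hx' : HasFDerivAt f ((InnerProductSpace.toDual ℝ H) v) (x + (0:ℝ) • (y - x)) := by
    simpa using hx.hasFDerivAt
  have hφ : HasDerivAt (fun s : ℝ => f (x + s • (y - x))) ⟪v, y - x⟫ 0 := by
    simpa [Function.comp_def] using hx'.comp_hasDerivAt 0 hcurve
  have hφc : ConvexOn ℝ Set.univ (fun s : ℝ => f (x + s • (y - x))) := by
    refine ⟨convex_univ, fun a _ b _ s t hs ht hst => ?_⟩
    have ht' : t = 1 - s := by linarith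
    subst ht'
    have h1 : x + (s • a + (1 - s) • b) • (y - x)
        = s • (x + a • (y - x)) + (1 - s) • (x + b • (y - x)) := by
      match_scalars <;> (simp only [smul_eq_mul]; ring)
    show f (x + (s • a + (1 - s) • b) • (y - x))
        ≤ s • f (x + a • (y - x)) + (1 - s) • f (x + b • (y - x))
    rw [h1]
    exact hconv.2 (Set.mem_univ _) (Set.mem_univ _) hs ht hst
  have hs := hφc.le_slope_of_hasDerivWithinAt_Ioi (Set.mem_univ (0:ℝ)) (Set.mem_univ (1:ℝ))
    one_pos hφ.hasDerivWithinAt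
  rw [slope_def_field] at hs
  simp at hs
  linarith

private lemma primitive_facts {v : ℝ → ℝ} {t0 : ℝ} (hcont : ContinuousOn v (Ici t0)) :
    (∀ t ∈ Ioi t0, HasDerivAt (fun T => ∫ s in t0..T, v s) (v t) t) ∧
    (∀ T, t0 ≤ T → ContinuousOn (fun T => ∫ s in t0..T, v s) (Icc t0 T)) ∧
    (∀ T, t0 ≤ T → IntervalIntegrable v MeasureTheory.volume t0 T) := by
  have hII : ∀ T, t0 ≤ T → IntervalIntegrable v MeasureTheory.volume t0 T := by
    intro T hT
    exact (hcont.mono (by rw [uIcc_of_le hT]; exact Icc_subset_Ici_self)).intervalIntegrable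
  refine ⟨fun t ht => ?_, fun T hT => ?_, hII⟩
  · exact intervalIntegral.integral_hasDerivAt_right (hII t (le_of_lt ht))
      (ContinuousOn.stronglyMeasurableAtFilter isOpen_Ioi (hcont.mono Ioi_subset_Ici_self) t ht)
      (hcont.continuousAt (Ici_mem_nhds ht))
  · have := intervalIntegral.continuousOn_primitive_interval' (hII T hT) left_mem_uIcc
    rwa [uIcc_of_le hT] at this
/-- Perturbed steepest descent: integral estimates of velocities, gradients and values. -/
theorem perturbed_steepest_descent_integral_estimates
    {H : Type*} [NormedAddCommGroup H] [InnerProductSpace ℝ H] [CompleteSpace H]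
    (f : H → ℝ) (f' : H → H)
    (hconv : ConvexOn ℝ Set.univ f)
    (hgrad : ∀ x, HasGradientAt f (f' x) x)
    (hlip : ∀ s : Set H, Bornology.IsBounded s → ∃ K : NNReal, LipschitzOnWith K f' s)
    (hmin : ∃ z, ∀ y, f z ≤ f y)
    (t0 : ℝ) (ht0 : 0 < t0)
    (z z' g : ℝ → H)
    (hz : ∀ t ∈ Ici t0, HasDerivAt z (z' t) t)
    (hz'cont : ContinuousOn z' (Ici t0))
    (heq : ∀ t ∈ Ici t0, z' t + f' (z t) = g t)
    (hg1 : IntegrableOn (fun t => ‖g t‖) (Ici t0))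
    (hg2 : IntegrableOn (fun t => t * ‖g t‖ ^ 2) (Ici t0)) :
    IntegrableOn (fun t => t * ‖z' t‖ ^ 2) (Ici t0) ∧
    IntegrableOn (fun t => t * ‖f' (z t)‖ ^ 2) (Ici t0) ∧
    IntegrableOn (fun t => f (z t) - ⨅ x, f x) (Ici t0) := by
  classical
  obtain ⟨xs, hxs⟩ := hmin
  have hinf : (⨅ x, f x) = f xs :=
    le_antisymm (ciInf_le ⟨f xs, by rintro v ⟨y, rfl⟩; exact hxs y⟩ xs) (le_ciInf hxs)
  -- continuity facts
  have hf'cont : Continuous f' := by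
    rw [continuous_iff_continuousAt]
    intro x
    obtain ⟨K, hK⟩ := hlip (Metric.closedBall x 1) Metric.isBounded_closedBall
    exact hK.continuousOn.continuousAt (Metric.closedBall_mem_nhds x one_pos)
  have hfcont : Continuous f := by
    rw [continuous_iff_continuousAt]
    exact fun x => (hgrad x).hasFDerivAt.continuousAt
  have hzcont : ContinuousOn z (Ici t0) := fun t ht => (hz t ht).continuousAt.continuousWithinAt
  have hgcont : ContinuousOn g (Ici t0) :=
    (hz'cont.add (hf'cont.comp_continuousOn hzcont)).congr fun t ht => (heq t ht).symm
  -- the value function q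
  set q : ℝ → ℝ := fun t => f (z t) - f xs with hqdef
  have hq0 : ∀ t, 0 ≤ q t := fun t => sub_nonneg.2 (hxs (z t))
  have hqcont : ContinuousOn q (Ici t0) :=
    (hfcont.comp_continuousOn hzcont).sub continuousOn_const
  have hqderiv : ∀ t ∈ Ici t0, HasDerivAt q ⟪f' (z t), z' t⟫ t := by
    intro t ht
    have : HasDerivAt (fun t => f (z t)) ⟪f' (z t), z' t⟫ t := by
      simpa [Function.comp_def] using (hgrad (z t)).hasFDerivAt.comp_hasDerivAt t (hz t ht)
    exact this.sub_const _
  -- the energy u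
  set u : ℝ → ℝ := fun t => 1 + ⟪z t - xs, z t - xs⟫ / 2 with hudef
  have hu1 : ∀ t, 1 ≤ u t := by
    intro t
    have := real_inner_self_nonneg (x := z t - xs)
    simp only [hudef]; linarith
  have hwu : ∀ t, ‖z t - xs‖ ≤ u t := by
    intro t
    have h1 : ⟪z t - xs, z t - xs⟫ = ‖z t - xs‖ ^ 2 := real_inner_self_eq_norm_sq _
    simp only [hudef, h1]
    nlinarith [sq_nonneg (‖z t - xs‖ - 1)]
  have hucont : ContinuousOn u (Ici t0) :=
    continuousOn_const.add
      (((hzcont.sub continuousOn_const).inner (hzcont.sub continuousOn_const)).div_const 2)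
  have huderiv : ∀ t ∈ Ici t0, HasDerivAt u ⟪z t - xs, z' t⟫ t := by
    intro t ht
    have h1 : HasDerivAt (fun t => z t - xs) (z' t) t := (hz t ht).sub_const xs
    have h2 := ((h1.inner ℝ h1).div_const 2).const_add 1
    have h3 : (⟪z t - xs, z' t⟫ + ⟪z' t, z t - xs⟫) / 2 = ⟪z t - xs, z' t⟫ := by
      rw [real_inner_comm (z' t)]; ring
    rw [h3] at h2
    exact h2
  -- key differential inequality
  have hkey : ∀ t ∈ Ici t0, ⟪z t - xs, z' t⟫ ≤ ‖g t‖ * ‖z t - xs‖ - q t := by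
    intro t ht
    have hz'eq : z' t = g t - f' (z t) := eq_sub_of_add_eq (heq t ht)
    have hgi : f (z t) + ⟪f' (z t), xs - z t⟫ ≤ f xs :=
      grad_convex_ineq hconv (hgrad (z t)) xs
    have h2 : q t ≤ ⟪f' (z t), z t - xs⟫ := by
      have hneg : ⟪f' (z t), xs - z t⟫ = -⟪f' (z t), z t - xs⟫ := by
        rw [← inner_neg_right, neg_sub]
      rw [hneg] at hgi
      simp only [hqdef]; linarith
    have h3 : ⟪z t - xs, g t⟫ ≤ ‖g t‖ * ‖z t - xs‖ := by
      calc ⟪z t - xs, g t⟫ ≤ ‖z t - xs‖ * ‖g t‖ := real_inner_le_norm _ _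
        _ = ‖g t‖ * ‖z t - xs‖ := mul_comm _ _
    calc ⟪z t - xs, z' t⟫ = ⟪z t - xs, g t⟫ - ⟪f' (z t), z t - xs⟫ := by
          rw [hz'eq, inner_sub_right, real_inner_comm (z t - xs) (f' (z t))]
      _ ≤ ‖g t‖ * ‖z t - xs‖ - q t := by linarith
  -- primitives
  obtain ⟨hNderiv, hNcont, hNII⟩ := primitive_facts (hgcont.norm)
  set N : ℝ → ℝ := fun T => ∫ s in t0..T, ‖g s‖ with hNdef
  set G : ℝ := ∫ s in Ici t0, ‖g s‖ with hGdef
  have hN0 : ∀ T, t0 ≤ T → 0 ≤ N T := fun T hT =>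
    intervalIntegral.integral_nonneg hT fun s _ => norm_nonneg _
  have hNle : ∀ T, t0 ≤ T → N T ≤ G := by
    intro T hT
    have h1 : N T = ∫ s in Ioc t0 T, ‖g s‖ := intervalIntegral.integral_of_le hT
    rw [h1, hGdef]
    exact setIntegral_mono_set hg1 (Eventually.of_forall fun s => norm_nonneg _)
      (HasSubset.Subset.eventuallyLE (Ioc_subset_Icc_self.trans Icc_subset_Ici_self))
  -- Step 1 : boundedness of the trajectory
  set R : ℝ := Real.exp (Real.log (u t0) + G) with hRdef
  have hR0 : 0 ≤ R := (Real.exp_pos _).le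
  have hbound : ∀ t ∈ Ici t0, ‖z t - xs‖ ≤ R := by
    intro T hT
    have hmono : Real.log (u T) - N T ≤ Real.log (u t0) - N t0 := by
      refine le_of_deriv_nonpos' (φ := fun t => Real.log (u t) - N t) hT ?_ ?_
      · exact ((hucont.mono Icc_subset_Ici_self).log fun t ht =>
          (lt_of_lt_of_le one_pos (hu1 t)).ne').sub (hNcont T hT)
      · intro t ht
        have ht' : t ∈ Ici t0 := ht.1.le
        have hupos : (0:ℝ) < u t := lt_of_lt_of_le one_pos (hu1 t)
        have hd1 : HasDerivAt (fun t => Real.log (u t)) (⟪z t - xs, z' t⟫ / u t) t :=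
          (huderiv t ht').log hupos.ne'
        refine ⟨_, ?_, hd1.sub (hNderiv t ht.1)⟩
        have h5 : ⟪z t - xs, z' t⟫ ≤ ‖g t‖ * u t := by
          have := hkey t ht'
          nlinarith [hq0 t, hwu t, norm_nonneg (g t)]
        have : ⟪z t - xs, z' t⟫ / u t ≤ ‖g t‖ := by
          rw [div_le_iff₀ hupos]; exact h5
        linarith
    have hN00 : N t0 = 0 := intervalIntegral.integral_same
    have hlog : Real.log (u T) ≤ Real.log (u t0) + G := by
      have := hNle T hT
      rw [hN00] at hmono; linarith
    have huT : u T ≤ R := by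
      rw [hRdef, ← Real.exp_log (lt_of_lt_of_le one_pos (hu1 T))]
      exact Real.exp_le_exp.2 hlog
    exact le_trans (hwu T) huT
  -- Step 2 : integral bound on values
  obtain ⟨hQderiv, hQcont, hQII⟩ := primitive_facts hqcont
  set Q : ℝ → ℝ := fun T => ∫ s in t0..T, q s with hQdef
  have hQbdd : ∀ T, t0 ≤ T → Q T ≤ u t0 + R * G := by
    intro T hT
    have hmono : u T + Q T - R * N T ≤ u t0 + Q t0 - R * N t0 := by
      refine le_of_deriv_nonpos' (φ := fun t => u t + Q t - R * N t) hT ?_ ?_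
      · exact ((hucont.mono Icc_subset_Ici_self).add (hQcont T hT)).sub
          (continuousOn_const.mul (hNcont T hT))
      · intro t ht
        have ht' : t ∈ Ici t0 := ht.1.le
        refine ⟨_, ?_, ((huderiv t ht').add (hQderiv t ht.1)).sub
          ((hNderiv t ht.1).const_mul R)⟩
        have h4 := hkey t ht'
        have h5 := hbound t ht'
        nlinarith [norm_nonneg (g t)]
    have hQ00 : Q t0 = 0 := intervalIntegral.integral_same
    have hN00 : N t0 = 0 := intervalIntegral.integral_same
    have h6 := hNle T hT
    have h7 := hu1 T
    nlinarith [hu1 t0]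
  have hqIoc : ∀ T : ℝ, IntegrableOn q (Ioc t0 T) := by
    intro T
    rcases le_or_gt t0 T with h | h
    · exact (hQII T h).1
    · rw [Ioc_eq_empty (not_lt.2 h.le)]; exact integrableOn_empty
  have hclaim3 : IntegrableOn q (Ici t0) := by
    rw [integrableOn_Ici_iff_integrableOn_Ioi]
    refine integrableOn_Ioi_of_intervalIntegral_norm_bounded (u t0 + R * G) t0
      (fun T => hqIoc T) (tendsto_id (α := ℝ)) ?_
    filter_upwards [eventually_ge_atTop t0] with T hT
    have heqn : (∫ s in t0..T, ‖q s‖) = Q T :=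
      intervalIntegral.integral_congr fun s _ => Real.norm_of_nonneg (hq0 s)
    rw [heqn]
    exact hQbdd T hT
  -- Step 3 : weighted integral bound on velocities
  have havcont : ContinuousOn (fun s => s * ‖z' s‖ ^ 2) (Ici t0) :=
    continuousOn_id.mul (hz'cont.norm.pow 2)
  have hbvcont : ContinuousOn (fun s => s * ‖g s‖ ^ 2) (Ici t0) :=
    continuousOn_id.mul (hgcont.norm.pow 2)
  obtain ⟨hAderiv, hAcont, hAII⟩ := primitive_facts havcont
  obtain ⟨hBderiv, hBcont, hBII⟩ := primitive_facts hbvcont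
  set A : ℝ → ℝ := fun T => ∫ s in t0..T, s * ‖z' s‖ ^ 2 with hAdef
  set B : ℝ → ℝ := fun T => ∫ s in t0..T, s * ‖g s‖ ^ 2 with hBdef
  set G2 : ℝ := ∫ s in Ici t0, s * ‖g s‖ ^ 2 with hG2def
  have hBle : ∀ T, t0 ≤ T → B T ≤ G2 := by
    intro T hT
    have h1 : B T = ∫ s in Ioc t0 T, s * ‖g s‖ ^ 2 := intervalIntegral.integral_of_le hT
    rw [h1, hG2def]
    refine setIntegral_mono_set hg2 ?_ (HasSubset.Subset.eventuallyLE (Ioc_subset_Icc_self.trans Icc_subset_Ici_self))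
    rw [EventuallyLE, ae_restrict_iff' measurableSet_Ici]
    filter_upwards with s hs
    exact mul_nonneg (le_trans ht0.le hs) (sq_nonneg _)
  have hAbdd : ∀ T, t0 ≤ T → A T ≤ 2 * (t0 * q t0) + 2 * (u t0 + R * G) + G2 := by
    intro T hT
    have hmono : T * q T + A T / 2 - Q T - B T / 2
        ≤ t0 * q t0 + A t0 / 2 - Q t0 - B t0 / 2 := by
      refine le_of_deriv_nonpos' (φ := fun t => t * q t + A t / 2 - Q t - B t / 2) hT ?_ ?_
      · exact (((continuousOn_id.mul (hqcont.mono Icc_subset_Ici_self)).add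
          ((hAcont T hT).div_const 2)).sub (hQcont T hT)).sub ((hBcont T hT).div_const 2)
      · intro t ht
        have ht' : t ∈ Ici t0 := ht.1.le
        have htpos : (0:ℝ) < t := lt_trans ht0 ht.1
        refine ⟨_, ?_, ((((hasDerivAt_id t).mul (hqderiv t ht')).add
          ((hAderiv t ht.1).div_const 2)).sub (hQderiv t ht.1)).sub
          ((hBderiv t ht.1).div_const 2)⟩
        have hz'eq : f' (z t) = g t - z' t := by
          have := heq t ht'; rw [← this]; abel
        have hip : ⟪f' (z t), z' t⟫ = ⟪g t, z' t⟫ - ‖z' t‖ ^ 2 := by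
          rw [hz'eq, inner_sub_left, real_inner_self_eq_norm_sq]
        have hns : ‖g t - z' t‖ ^ 2 = ‖g t‖ ^ 2 - 2 * ⟪g t, z' t⟫ + ‖z' t‖ ^ 2 :=
          norm_sub_sq_real _ _
        have h9 : (0:ℝ) ≤ t * ‖g t - z' t‖ ^ 2 := mul_nonneg htpos.le (sq_nonneg _)
        rw [hns] at h9
        simp only [id_eq]
        rw [hip]
        nlinarith [h9]
    have hA0 : A t0 = 0 := intervalIntegral.integral_same
    have hB0 : B t0 = 0 := intervalIntegral.integral_same
    have hQ0 : Q t0 = 0 := intervalIntegral.integral_same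
    have h9 := hQbdd T hT
    have h10 := hBle T hT
    have h11 : 0 ≤ T * q T := mul_nonneg (le_trans ht0.le hT) (hq0 T)
    rw [hA0, hB0, hQ0] at hmono
    have hmono' : T * q T + A T / 2 - Q T - B T / 2 ≤ t0 * q t0 := by linarith
    have hgen : ∀ aT qTT QTT BTT cq uu gg : ℝ, qTT + aT/2 - QTT - BTT/2 ≤ cq →
        QTT ≤ uu → BTT ≤ gg → 0 ≤ qTT → aT ≤ 2*cq + 2*uu + gg := by
      intro aT qTT QTT BTT cq uu gg w1 w2 w3 w4; linarith
    exact hgen (A T) (T * q T) (Q T) (B T) (t0 * q t0) (u t0 + R * G) G2 hmono' h9 h10 h11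
  have havIoc : ∀ T : ℝ, IntegrableOn (fun s => s * ‖z' s‖ ^ 2) (Ioc t0 T) := by
    intro T
    rcases le_or_gt t0 T with h | h
    · exact (hAII T h).1
    · rw [Ioc_eq_empty (not_lt.2 h.le)]; exact integrableOn_empty
  have hclaim1 : IntegrableOn (fun t => t * ‖z' t‖ ^ 2) (Ici t0) := by
    rw [integrableOn_Ici_iff_integrableOn_Ioi]
    refine integrableOn_Ioi_of_intervalIntegral_norm_bounded
      (2 * (t0 * q t0) + 2 * (u t0 + R * G) + G2) t0
      (fun T => havIoc T) (tendsto_id (α := ℝ)) ?_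
    filter_upwards [eventually_ge_atTop t0] with T hT
    have heqn : (∫ s in t0..T, ‖s * ‖z' s‖ ^ 2‖) = A T := by
      refine intervalIntegral.integral_congr fun s hs => ?_
      rw [uIcc_of_le hT] at hs
      exact Real.norm_of_nonneg (mul_nonneg (le_trans ht0.le hs.1) (sq_nonneg _))
    rw [heqn]
    exact hAbdd T hT
  -- Claim 2 by comparison
  have hclaim2 : IntegrableOn (fun t => t * ‖f' (z t)‖ ^ 2) (Ici t0) := by
    have hbig : IntegrableOn
        (fun t => 2 * (t * ‖z' t‖ ^ 2) + 2 * (t * ‖g t‖ ^ 2)) (Ici t0) :=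
      (hclaim1.const_mul 2).add (hg2.const_mul 2)
    refine hbig.mono' ?_ ?_
    · exact (continuousOn_id.mul
        ((hf'cont.comp_continuousOn hzcont).norm.pow 2)).aestronglyMeasurable measurableSet_Ici
    · rw [ae_restrict_iff' measurableSet_Ici]
      filter_upwards with t ht
      have htpos : (0:ℝ) ≤ t := le_trans ht0.le ht
      have hz'eq : f' (z t) = g t - z' t := by
        have := heq t ht; rw [← this]; abel
      have h1 : ‖f' (z t)‖ ≤ ‖g t‖ + ‖z' t‖ := by
        rw [hz'eq]; exact norm_sub_le _ _
      have h2 : ‖f' (z t)‖ ^ 2 ≤ 2 * ‖g t‖ ^ 2 + 2 * ‖z' t‖ ^ 2 := by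
        nlinarith [norm_nonneg (f' (z t)), norm_nonneg (g t), norm_nonneg (z' t),
          sq_nonneg (‖g t‖ - ‖z' t‖)]
      have h3 : ‖t * ‖f' (z t)‖ ^ 2‖ = t * ‖f' (z t)‖ ^ 2 :=
        Real.norm_of_nonneg (mul_nonneg htpos (sq_nonneg _))
      rw [h3]
      nlinarith
  refine ⟨hclaim1, hclaim2, ?_⟩
  have : (fun t => f (z t) - ⨅ x, f x) = q := by
    funext t; rw [hinf]
  rw [this]
  exact hclaim3
end

section
/- Let t0 > 0 and let z : [t0, ∞) → H be a continuously differentiable solution of the perturbed steepest descent equation ż(t) + ∇f(z(t)) = g(t) for all t ≥ t0, where the perturbation g : [t0, ∞) → H satisfies ∫_{t0}^∞ ‖g(t)‖ dt < ∞ and ∫_{t0}^∞ t‖g(t)‖² dt < ∞. Then f(z(t)) − inf_H f = o(1/t) as t → ∞ (i.e., t·(f(z(t)) − inf_H f) → 0), and z(t) converges weakly as t → ∞ to some point of S = argmin_H f, i.e., there exists x* ∈ S such that ⟨z(t) − x*, v⟩ → 0 as t → ∞ for every v ∈ H. -/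
open MeasureTheory Filter Set
open scoped Topology RealInnerProductSpace

-- auxiliary lemmas
lemma my_tendsto_of_antitoneOn {t0 : ℝ} {F : ℝ → ℝ} (hF : AntitoneOn F (Ici t0))
    {c : ℝ} (hc : ∀ t ∈ Ici t0, c ≤ F t) : ∃ L, Tendsto F atTop (𝓝 L) := by
  have hne : (F '' Ici t0).Nonempty := ⟨F t0, mem_image_of_mem F self_mem_Ici⟩
  have hbdd : BddBelow (F '' Ici t0) := ⟨c, by rintro y ⟨t, ht, rfl⟩; exact hc t ht⟩
  refine ⟨sInf (F '' Ici t0), Metric.tendsto_atTop.2 fun ε hε => ?_⟩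
  obtain ⟨y, ⟨t1, ht1, rfl⟩, hy⟩ := (csInf_lt_iff hbdd hne).mp
    (lt_add_of_pos_right (sInf (F '' Ici t0)) hε)
  refine ⟨t1, fun t ht => ?_⟩
  have ht' : t ∈ Ici t0 := le_trans ht1 ht
  have h1 : sInf (F '' Ici t0) ≤ F t := csInf_le hbdd (mem_image_of_mem F ht')
  have h2 : F t ≤ F t1 := hF ht1 ht' ht
  rw [Real.dist_eq, abs_lt]
  constructor <;> linarith

lemma my_exists_primitive {t0 : ℝ} {φ : ℝ → ℝ} (hφc : ContinuousOn φ (Ici t0)) :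
    ∃ G : ℝ → ℝ, ContinuousOn G (Ici t0) ∧ G t0 = 0 ∧
      (∀ t ∈ Ioi t0, HasDerivAt G (φ t) t) ∧
      (∀ T, t0 ≤ T → G T = ∫ u in Ioc t0 T, φ u) := by
  set φ' : ℝ → ℝ := (Ici t0).indicator φ with hφ'
  have hIcc : ∀ b : ℝ, IntegrableOn φ' (Icc t0 b) := by
    intro b
    have h1 : IntegrableOn φ (Icc t0 b) :=
      (hφc.mono Icc_subset_Ici_self).integrableOn_compact isCompact_Icc
    exact (integrableOn_congr_fun (fun x hx => (indicator_of_mem (Icc_subset_Ici_self hx) φ).symm)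
      measurableSet_Icc).mp h1
  have hII : ∀ b : ℝ, t0 ≤ b → IntervalIntegrable φ' volume t0 b := by
    intro b hb
    rw [intervalIntegrable_iff_integrableOn_Ioc_of_le hb]
    exact (hIcc b).mono_set Ioc_subset_Icc_self
  refine ⟨fun t => ∫ u in t0..t, φ' u, ?_, by simp, ?_, ?_⟩
  · intro t ht
    have hcont : ContinuousOn (fun t => ∫ u in t0..t, φ' u) (Icc t0 (t + 1)) := by
      have hle : t0 ≤ t + 1 := by linarith [mem_Ici.mp ht]
      have := intervalIntegral.continuousOn_primitive_interval
        (a := t0) (b := t + 1) (μ := volume) (f := φ')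
        (by rw [uIcc_of_le hle]; exact hIcc _)
      rwa [uIcc_of_le hle] at this
    refine (hcont.continuousWithinAt ⟨mem_Ici.mp ht, by linarith⟩).mono_of_mem_nhdsWithin ?_
    have heq : Icc t0 (t + 1) = Ici t0 ∩ Iic (t + 1) := (Ici_inter_Iic).symm
    rw [heq]
    exact inter_mem_nhdsWithin _ (Iic_mem_nhds (by linarith))
  · intro t ht
    have htt0 : t0 < t := ht
    have hmeas : StronglyMeasurableAtFilter φ' (𝓝 t) volume := by
      refine ⟨univ, univ_mem, ?_⟩
      have h0 : AEStronglyMeasurable φ (volume.restrict (Ici t0)) :=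
        hφc.aestronglyMeasurable measurableSet_Ici
      have h1 : AEStronglyMeasurable φ' volume := by
        rw [hφ', aestronglyMeasurable_indicator_iff measurableSet_Ici]
        exact h0
      exact h1.restrict (s := univ) |>.mono_measure (by simp)
    have hca : ContinuousAt φ' t := by
      have h1 : ContinuousAt φ t := hφc.continuousAt (Ici_mem_nhds htt0)
      refine h1.congr ?_
      filter_upwards [Ici_mem_nhds htt0] with u hu
      exact (indicator_of_mem hu φ).symm
    have key : HasDerivAt (fun u => ∫ x in t0..u, φ' x) (φ' t) t :=
      intervalIntegral.integral_hasDerivAt_right (hII t htt0.le) hmeas hca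
    have : φ' t = φ t := indicator_of_mem (le_of_lt htt0) φ
    rw [this] at key
    exact key
  · intro T hT
    show ∫ u in t0..T, φ' u = ∫ u in Ioc t0 T, φ u
    rw [intervalIntegral.integral_of_le hT]
    exact setIntegral_congr_fun measurableSet_Ioc
      (fun x hx => indicator_of_mem (le_of_lt hx.1 : t0 ≤ x) φ)

lemma my_antitoneOn {t0 : ℝ} {A A' : ℝ → ℝ}
    (hAc : ContinuousOn A (Ici t0)) (hAd : ∀ t ∈ Ioi t0, HasDerivAt A (A' t) t)
    (hA0 : ∀ t ∈ Ioi t0, A' t ≤ 0) : AntitoneOn A (Ici t0) := by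
  refine antitoneOn_of_hasDerivWithinAt_nonpos (convex_Ici t0) hAc (f' := A') ?_ ?_ <;>
    rw [interior_Ici]
  · exact fun t ht => (hAd t ht).hasDerivWithinAt
  · exact hA0

lemma my_integral_Ioc_le {t0 : ℝ} {φ : ℝ → ℝ} (hφi : IntegrableOn φ (Ici t0))
    (hφ0 : ∀ t ∈ Ici t0, 0 ≤ φ t) (T : ℝ) :
    ∫ u in Ioc t0 T, φ u ≤ ∫ u in Ioi t0, φ u :=
  setIntegral_mono_set (hφi.mono_set Ioi_subset_Ici_self)
    ((ae_restrict_iff' measurableSet_Ioi).2 (ae_of_all _ fun x hx => hφ0 x (Ioi_subset_Ici_self hx)))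
    (HasSubset.Subset.eventuallyLE Ioc_subset_Ioi_self)

lemma my_tendsto_integral_Ioc {t0 : ℝ} {φ : ℝ → ℝ} (hφi : IntegrableOn φ (Ici t0)) :
    Tendsto (fun T => ∫ u in Ioc t0 T, φ u) atTop (𝓝 (∫ u in Ioi t0, φ u)) := by
  have h1 : IntegrableOn φ (Ioi t0) := hφi.mono_set Ioi_subset_Ici_self
  refine (intervalIntegral_tendsto_integral_Ioi t0 h1 tendsto_id).congr' ?_
  filter_upwards [eventually_ge_atTop t0] with T hT
  show ∫ x in t0..T, φ x = _
  rw [intervalIntegral.integral_of_le hT]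

lemma my_descent {t0 : ℝ} {F F' ψ : ℝ → ℝ}
    (hFc : ContinuousOn F (Ici t0))
    (hF : ∀ t ∈ Ioi t0, HasDerivAt F (F' t) t)
    (hψc : ContinuousOn ψ (Ici t0)) (hψi : IntegrableOn ψ (Ici t0))
    (hψ0 : ∀ t ∈ Ici t0, 0 ≤ ψ t)
    (hle : ∀ t ∈ Ioi t0, F' t ≤ ψ t)
    {c : ℝ} (hc : ∀ t ∈ Ici t0, c ≤ F t) :
    ∃ L, Tendsto F atTop (𝓝 L) := by
  obtain ⟨G, hGc, hG0, hGd, hGval⟩ := my_exists_primitive hψc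
  have hanti : AntitoneOn (fun t => F t - G t) (Ici t0) := by
    refine my_antitoneOn (hFc.sub hGc) (A' := fun t => F' t - ψ t)
      (fun t ht => (hF t ht).sub (hGd t ht)) (fun t ht => by linarith [hle t ht])
  have hGb : ∀ t ∈ Ici t0, G t ≤ ∫ u in Ioi t0, ψ u := fun t ht => by
    rw [hGval t ht]; exact my_integral_Ioc_le hψi hψ0 t
  obtain ⟨LA, hLA⟩ := my_tendsto_of_antitoneOn hanti
    (c := c - ∫ u in Ioi t0, ψ u) (fun t ht => by linarith [hc t ht, hGb t ht])
  have hGt : Tendsto G atTop (𝓝 (∫ u in Ioi t0, ψ u)) := by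
    refine (my_tendsto_integral_Ioc hψi).congr' ?_
    filter_upwards [eventually_ge_atTop t0] with T hT
    exact (hGval T hT).symm
  refine ⟨LA + ∫ u in Ioi t0, ψ u, ?_⟩
  have := hLA.add hGt
  refine this.congr fun t => by ring

lemma my_integral_bound {t0 : ℝ} {F F' φ ψ : ℝ → ℝ}
    (hFc : ContinuousOn F (Ici t0))
    (hF : ∀ t ∈ Ioi t0, HasDerivAt F (F' t) t)
    (hφc : ContinuousOn φ (Ici t0))
    (hψc : ContinuousOn ψ (Ici t0)) (hψi : IntegrableOn ψ (Ici t0))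
    (hψ0 : ∀ t ∈ Ici t0, 0 ≤ ψ t)
    (hle : ∀ t ∈ Ioi t0, F' t + φ t ≤ ψ t)
    {c : ℝ} (hc : ∀ t ∈ Ici t0, c ≤ F t) :
    ∀ T, t0 ≤ T → ∫ u in Ioc t0 T, φ u ≤ F t0 - c + ∫ u in Ioi t0, ψ u := by
  obtain ⟨Gφ, hGφc, hGφ0, hGφd, hGφval⟩ := my_exists_primitive hφc
  obtain ⟨Gψ, hGψc, hGψ0, hGψd, hGψval⟩ := my_exists_primitive hψc
  have hanti : AntitoneOn (fun t => F t + Gφ t - Gψ t) (Ici t0) := by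
    refine my_antitoneOn ((hFc.add hGφc).sub hGψc) (A' := fun t => F' t + φ t - ψ t)
      (fun t ht => ((hF t ht).add (hGφd t ht)).sub (hGψd t ht))
      (fun t ht => by linarith [hle t ht])
  intro T hT
  have h1 := hanti self_mem_Ici (mem_Ici.mpr hT) hT
  simp only [hGφ0, hGψ0] at h1
  have h2 : Gψ T ≤ ∫ u in Ioi t0, ψ u := by
    rw [hGψval T hT]; exact my_integral_Ioc_le hψi hψ0 T
  have h3 := hc T (mem_Ici.mpr hT)
  rw [← hGφval T hT]
  linarith

lemma my_grad_ineq {H : Type*} [NormedAddCommGroup H] [InnerProductSpace ℝ H]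
    [CompleteSpace H] {f : H → ℝ} {f' : H → H} (hconv : ConvexOn ℝ univ f)
    (hgrad : ∀ x, HasGradientAt f (f' x) x) (x y : H) :
    f x + ⟪f' x, y - x⟫ ≤ f y := by
  set c : ℝ → H := fun s => x + s • (y - x) with hc
  have hcd : ∀ s : ℝ, HasDerivAt c (y - x) s := fun s => by
    simpa [hc] using ((hasDerivAt_id s).smul_const (y - x)).const_add x
  have hφd : ∀ s : ℝ, HasDerivAt (fun s => f (c s)) ⟪f' (c s), y - x⟫ s := fun s => by
    have h1 := (hgrad (c s)).hasFDerivAt.comp_hasDerivAt s (hcd s)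
    exact (by simpa [InnerProductSpace.toDual_apply_apply] using h1 :
      HasDerivAt (f ∘ c) ⟪f' (c s), y - x⟫ s)
  have hφconv : ConvexOn ℝ univ (fun s : ℝ => f (c s)) := by
    have h2 := hconv.comp_affineMap (AffineMap.lineMap x y : ℝ →ᵃ[ℝ] H)
    simp only [preimage_univ] at h2
    have harg : ∀ s : ℝ, c s = (AffineMap.lineMap x y : ℝ →ᵃ[ℝ] H) s := fun s => by
      rw [AffineMap.lineMap_apply_module]; simp [hc]; module
    have heq : (fun s : ℝ => f (c s)) = f ∘ ⇑(AffineMap.lineMap x y : ℝ →ᵃ[ℝ] H) :=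
      funext fun s => congrArg f (harg s)
    rw [heq]; exact h2
  have h3 := hφconv.le_slope_of_hasDerivAt (mem_univ (0:ℝ)) (mem_univ (1:ℝ))
    zero_lt_one (hφd 0)
  have hc0 : c 0 = x := by simp [hc]
  have hc1 : c 1 = y := by simp [hc]
  rw [slope_def_field, hc0] at h3
  simp only [hc0, hc1, div_one, sub_zero] at h3
  linarith [h3]

lemma my_weak_cluster {H : Type*} [NormedAddCommGroup H] [InnerProductSpace ℝ H]
    [CompleteSpace H] {z : ℝ → H} {t0 M : ℝ}
    (hM : ∀ t ∈ Ici t0, ‖z t‖ ≤ M) (V : Ultrafilter ℝ) (hV : ↑V ≤ (atTop : Filter ℝ)) :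
    ∃ xh : H, ∀ w : H, Tendsto (fun t => (⟪z t, w⟫ : ℝ)) V (𝓝 ⟪xh, w⟫) := by
  have hb : ∀ w : H, ∀ᶠ t in (atTop : Filter ℝ),
      (⟪z t, w⟫ : ℝ) ∈ Icc (-(M * ‖w‖)) (M * ‖w‖) := by
    intro w
    filter_upwards [eventually_ge_atTop t0] with t ht
    have h1 : |(⟪z t, w⟫ : ℝ)| ≤ M * ‖w‖ :=
      le_trans (abs_real_inner_le_norm _ _)
        (mul_le_mul_of_nonneg_right (hM t ht) (norm_nonneg w))
    exact ⟨(abs_le.mp h1).1, (abs_le.mp h1).2⟩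
  have hlim : ∀ w : H, ∃ a : ℝ, Tendsto (fun t => (⟪z t, w⟫ : ℝ)) V (𝓝 a) := by
    intro w
    obtain ⟨a, _, ha⟩ := (isCompact_Icc (a := -(M * ‖w‖)) (b := M * ‖w‖)).ultrafilter_le_nhds
      (V.map (fun t => (⟪z t, w⟫ : ℝ)))
      (by rw [Ultrafilter.coe_map, le_principal_iff, mem_map]
          exact hV (hb w))
    rw [Ultrafilter.coe_map] at ha
    exact ⟨a, ha⟩
  choose φ hφ using hlim
  have hadd : ∀ w1 w2 : H, φ (w1 + w2) = φ w1 + φ w2 := by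
    intro w1 w2
    refine tendsto_nhds_unique (hφ (w1 + w2)) ?_
    exact ((hφ w1).add (hφ w2)).congr fun t => (inner_add_right _ _ _).symm
  have hsmul : ∀ (c : ℝ) (w : H), φ (c • w) = c * φ w := by
    intro c w
    refine tendsto_nhds_unique (hφ (c • w)) ?_
    exact ((hφ w).const_mul c).congr fun t => (real_inner_smul_right _ _ _).symm
  have hbnd : ∀ w : H, ‖φ w‖ ≤ M * ‖w‖ := by
    intro w
    rw [Real.norm_eq_abs]
    refine le_of_tendsto (hφ w).abs ?_
    refine Eventually.mono (Eventually.filter_mono hV (hb w)) fun t ht => ?_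
    exact abs_le.mpr ⟨ht.1, ht.2⟩
  let Φ : H →ₗ[ℝ] ℝ :=
    { toFun := φ
      map_add' := hadd
      map_smul' := hsmul }
  let E : H →L[ℝ] ℝ := Φ.mkContinuous M hbnd
  refine ⟨(InnerProductSpace.toDual ℝ H).symm E, fun w => ?_⟩
  rw [InnerProductSpace.toDual_symm_apply]
  exact hφ w


/-- Perturbed steepest descent: o(1/t) convergence of values and weak convergence of the
trajectory towards a minimizer of `f`. -/
theorem perturbed_steepest_descent_value_rate_and_weak_convergence
    {H : Type*} [NormedAddCommGroup H] [InnerProductSpace ℝ H] [CompleteSpace H]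
    (f : H → ℝ) (f' : H → H)
    (hconv : ConvexOn ℝ Set.univ f)
    (hgrad : ∀ x, HasGradientAt f (f' x) x)
    (hlip : ∀ s : Set H, Bornology.IsBounded s → ∃ K : NNReal, LipschitzOnWith K f' s)
    (hmin : ∃ z, ∀ y, f z ≤ f y)
    (t0 : ℝ) (ht0 : 0 < t0)
    (z z' g : ℝ → H)
    (hz : ∀ t ∈ Ici t0, HasDerivAt z (z' t) t)
    (hz'cont : ContinuousOn z' (Ici t0))
    (heq : ∀ t ∈ Ici t0, z' t + f' (z t) = g t)
    (hg1 : IntegrableOn (fun t => ‖g t‖) (Ici t0))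
    (hg2 : IntegrableOn (fun t => t * ‖g t‖ ^ 2) (Ici t0)) :
    Tendsto (fun t => t * (f (z t) - ⨅ x, f x)) atTop (nhds 0) ∧
    ∃ xstar : H, (∀ y, f xstar ≤ f y) ∧
      ∀ v : H, Tendsto (fun t => ⟪z t - xstar, v⟫) atTop (nhds 0) := by
  obtain ⟨x0, hx0⟩ := hmin
  set m := ⨅ x, f x with hm
  have hbdd : BddBelow (range f) := ⟨f x0, by rintro y ⟨u, rfl⟩; exact hx0 u⟩
  have hmx0 : m = f x0 := le_antisymm (ciInf_le hbdd x0) (le_ciInf hx0)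
  have hmle : ∀ y, m ≤ f y := fun y => hmx0 ▸ hx0 y
  -- continuity facts
  have hzc : ContinuousOn z (Ici t0) := fun t ht =>
    (hz t ht).continuousAt.continuousWithinAt
  have hf'c : ∀ x : H, ContinuousAt f' x := by
    intro x
    obtain ⟨K, hK⟩ := hlip (Metric.closedBall x 1) Metric.isBounded_closedBall
    exact hK.continuousOn.continuousAt (Metric.closedBall_mem_nhds x one_pos)
  have hfzc : ContinuousOn (fun t => f' (z t)) (Ici t0) := fun t ht =>
    ((hf'c (z t)).comp (hz t ht).continuousAt).continuousWithinAt
  have hgc : ContinuousOn g (Ici t0) := (hz'cont.add hfzc).congr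
    (fun t ht => (heq t ht).symm)
  have hgn : ContinuousOn (fun t => ‖g t‖) (Ici t0) := hgc.norm
  have hz'eq : ∀ t ∈ Ici t0, z' t = g t - f' (z t) := fun t ht =>
    eq_sub_of_add_eq (heq t ht)
  -- values E
  set E : ℝ → ℝ := fun t => f (z t) with hE
  have hEd : ∀ t ∈ Ici t0, HasDerivAt E (⟪f' (z t), z' t⟫) t := by
    intro t ht
    have h1 := (hgrad (z t)).hasFDerivAt.comp_hasDerivAt t (hz t ht)
    exact (by simpa [InnerProductSpace.toDual_apply_apply] using h1 :
      HasDerivAt (f ∘ z) ⟪f' (z t), z' t⟫ t)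
  have hEc : ContinuousOn E (Ici t0) := fun t ht =>
    (hEd t ht).continuousAt.continuousWithinAt
  have hEm : ∀ t, m ≤ E t := fun t => hmle (z t)
  -- gradient inequality at z t
  have hgi : ∀ (x : H) (t : ℝ), E t + ⟪f' (z t), x - z t⟫ ≤ f x := fun x t =>
    my_grad_ineq hconv hgrad (z t) x
  -- derivative of q x
  have hqd : ∀ (x : H), ∀ t ∈ Ici t0,
      HasDerivAt (fun t => ‖z t - x‖ ^ 2) (2 * ⟪z' t, z t - x⟫) t := by
    intro x t ht
    have h1 := HasDerivAt.inner ℝ ((hz t ht).sub_const x) ((hz t ht).sub_const x)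
    have h2 : (fun t => (⟪z t - x, z t - x⟫ : ℝ)) = fun t => ‖z t - x‖ ^ 2 :=
      funext fun t => real_inner_self_eq_norm_sq _
    rw [h2] at h1
    rw [show (2:ℝ) * ⟪z' t, z t - x⟫ = ⟪z t - x, z' t⟫ + ⟪z' t, z t - x⟫ by
      rw [real_inner_comm]; ring]
    exact h1
  -- bound on q' for minimizers
  have hq'le : ∀ (x : H), (∀ y, f x ≤ f y) → ∀ t ∈ Ici t0,
      2 * ⟪z' t, z t - x⟫ ≤ 2 * ‖g t‖ * ‖z t - x‖ - 2 * (E t - m) := by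
    intro x hxmin t ht
    have h1 : z' t = g t - f' (z t) := hz'eq t ht
    have h2 : (⟪z' t, z t - x⟫ : ℝ) = ⟪g t, z t - x⟫ - ⟪f' (z t), z t - x⟫ := by
      rw [h1, inner_sub_left]
    have h3 : (⟪g t, z t - x⟫ : ℝ) ≤ ‖g t‖ * ‖z t - x‖ := real_inner_le_norm _ _
    have h4 : E t - f x ≤ ⟪f' (z t), z t - x⟫ := by
      have := hgi x t
      have h5 : (⟪f' (z t), x - z t⟫ : ℝ) = -⟪f' (z t), z t - x⟫ := by
        rw [← inner_neg_right]; congr 1; abel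
      rw [h5] at this; linarith
    have h6 : f x = m := le_antisymm (hmx0 ▸ hxmin x0) (hmle x)
    rw [h2]; rw [h6] at h4; linarith
  -- boundedness of the trajectory
  have hq0b : ∃ C : ℝ, 0 ≤ C ∧ ∀ t ∈ Ici t0, ‖z t - x0‖ ≤ C := by
    obtain ⟨G1, hG1c, hG10, hG1d, hG1val⟩ := my_exists_primitive hgn
    set I1 : ℝ := ∫ u in Ioi t0, ‖g u‖ with hI1
    have hG1b : ∀ t ∈ Ici t0, G1 t ≤ I1 := fun t ht => by
      rw [hG1val t ht]
      exact my_integral_Ioc_le hg1 (fun u _ => norm_nonneg _) t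
    set w : ℝ → ℝ := fun t => (‖z t - x0‖ ^ 2 + 1) * Real.exp (-G1 t) with hw
    have hwanti : AntitoneOn w (Ici t0) := by
      refine my_antitoneOn
        (A' := fun t => (2 * ⟪z' t, z t - x0⟫) * Real.exp (-G1 t) +
          (‖z t - x0‖ ^ 2 + 1) * (Real.exp (-G1 t) * -‖g t‖)) ?_ ?_ ?_
      · exact (((hzc.sub continuousOn_const).norm.pow 2).add continuousOn_const).mul
          (hG1c.neg.rexp)
      · intro t ht
        exact (((hqd x0 t (Ioi_subset_Ici_self ht)).add_const 1).mul ((hG1d t ht).neg.exp))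
      · intro t ht
        have hexp : 0 < Real.exp (-G1 t) := Real.exp_pos _
        have h1 := hq'le x0 hx0 t (Ioi_subset_Ici_self ht)
        have h2 : 0 ≤ E t - m := by linarith [hEm t]
        have h3 : 2 * ‖g t‖ * ‖z t - x0‖ ≤ ‖g t‖ * (‖z t - x0‖ ^ 2 + 1) := by
          nlinarith [sq_nonneg (‖z t - x0‖ - 1), norm_nonneg (g t)]
        have h4 : 2 * ⟪z' t, z t - x0⟫ ≤ ‖g t‖ * (‖z t - x0‖ ^ 2 + 1) := by linarith
        have h5 : (2 * ⟪z' t, z t - x0⟫) * Real.exp (-G1 t) ≤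
            (‖g t‖ * (‖z t - x0‖ ^ 2 + 1)) * Real.exp (-G1 t) :=
          mul_le_mul_of_nonneg_right h4 hexp.le
        nlinarith [h5]
    set C2 : ℝ := (‖z t0 - x0‖ ^ 2 + 1) * Real.exp I1 with hC2
    have hq2 : ∀ t ∈ Ici t0, ‖z t - x0‖ ^ 2 ≤ C2 := by
      intro t ht
      have h1 := hwanti self_mem_Ici ht (mem_Ici.mp ht)
      rw [hw] at h1
      simp only [hG10, neg_zero, Real.exp_zero, mul_one] at h1
      have h2 : Real.exp (-G1 t) = (Real.exp (G1 t))⁻¹ := by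
        rw [← Real.exp_neg]
      have hexp : 0 < Real.exp (G1 t) := Real.exp_pos _
      rw [h2] at h1
      have h3 : ‖z t - x0‖ ^ 2 + 1 ≤ (‖z t0 - x0‖ ^ 2 + 1) * Real.exp (G1 t) := by
        calc ‖z t - x0‖ ^ 2 + 1 = (‖z t - x0‖ ^ 2 + 1) * (Real.exp (G1 t))⁻¹ *
              Real.exp (G1 t) := by field_simp
          _ ≤ (‖z t0 - x0‖ ^ 2 + 1) * Real.exp (G1 t) :=
              mul_le_mul_of_nonneg_right h1 hexp.le
      have h4 : Real.exp (G1 t) ≤ Real.exp I1 := Real.exp_le_exp.2 (hG1b t ht)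
      have h5 : (‖z t0 - x0‖ ^ 2 + 1) * Real.exp (G1 t) ≤ C2 := by
        rw [hC2]
        exact mul_le_mul_of_nonneg_left h4 (by positivity)
      linarith
    refine ⟨Real.sqrt C2, Real.sqrt_nonneg _, fun t ht => ?_⟩
    rw [show ‖z t - x0‖ = Real.sqrt (‖z t - x0‖ ^ 2) by
      rw [Real.sqrt_sq (norm_nonneg _)]]
    exact Real.sqrt_le_sqrt (hq2 t ht)
  obtain ⟨C, hC0, hCb⟩ := hq0b
  have hzb : ∀ t ∈ Ici t0, ‖z t‖ ≤ C + ‖x0‖ := by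
    intro t ht
    have := norm_sub_norm_le (z t) x0
    linarith [hCb t ht]
  -- integrability of E - m
  have hEmc : ContinuousOn (fun t => E t - m) (Ici t0) := hEc.sub continuousOn_const
  have hEmi : IntegrableOn (fun t => E t - m) (Ici t0) := by
    have hψc : ContinuousOn (fun t => (2 * C) * ‖g t‖) (Ici t0) := continuousOn_const.mul hgn
    have hψi : IntegrableOn (fun t => (2 * C) * ‖g t‖) (Ici t0) := hg1.const_mul _
    have hψ0 : ∀ t ∈ Ici t0, 0 ≤ (2 * C) * ‖g t‖ := fun t _ => by positivity
    have hφc : ContinuousOn (fun t => 2 * (E t - m)) (Ici t0) := continuousOn_const.mul hEmc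
    have hb := my_integral_bound (F := fun t => ‖z t - x0‖ ^ 2)
      (F' := fun t => 2 * ⟪z' t, z t - x0⟫)
      (φ := fun t => 2 * (E t - m)) (ψ := fun t => (2 * C) * ‖g t‖)
      ((hzc.sub continuousOn_const).norm.pow 2)
      (fun t ht => hqd x0 t (Ioi_subset_Ici_self ht)) hφc hψc hψi hψ0
      (fun t ht => by
        have h1 := hq'le x0 hx0 t (Ioi_subset_Ici_self ht)
        have h2 : 2 * ‖g t‖ * ‖z t - x0‖ ≤ (2 * C) * ‖g t‖ := by
          nlinarith [norm_nonneg (g t), hCb t (Ioi_subset_Ici_self ht)]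
        linarith)
      (c := 0) (fun t ht => by positivity)
    rw [integrableOn_Ici_iff_integrableOn_Ioi]
    refine integrableOn_Ioi_of_intervalIntegral_norm_bounded
      ((‖z t0 - x0‖ ^ 2 - 0 + ∫ u in Ioi t0, (2 * C) * ‖g u‖) / 2) t0 (fun i => ?_)
      tendsto_id ?_
    · refine ((hEmc.mono ?_).integrableOn_compact
        (isCompact_Icc (a := t0) (b := max t0 i))).mono_set ?_
      · exact Icc_subset_Ici_self
      · exact fun u hu => ⟨le_of_lt hu.1, le_trans hu.2 (le_max_right _ _)⟩
    · filter_upwards [eventually_ge_atTop t0] with i hi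
      show (∫ u in t0..(id i), ‖E u - m‖) ≤ _
      rw [id, intervalIntegral.integral_of_le hi]
      have h1 : ∫ u in Ioc t0 i, ‖E u - m‖ = ∫ u in Ioc t0 i, (E u - m) :=
        setIntegral_congr_fun measurableSet_Ioc
          (fun u _ => by rw [Real.norm_eq_abs, abs_of_nonneg (by linarith [hEm u])])
      rw [h1]
      have h2 := hb i hi
      have h3 : ∫ u in Ioc t0 i, 2 * (E u - m) = 2 * ∫ u in Ioc t0 i, (E u - m) :=
        integral_const_mul 2 _
      rw [h3] at h2
      linarith
  set Iv : ℝ := ∫ u in Ioi t0, (E u - m) with hIv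
  have hIv0 : 0 ≤ Iv := setIntegral_nonneg measurableSet_Ioi (fun u _ => by linarith [hEm u])
  have hIocIv : ∀ t2 T : ℝ, t0 ≤ t2 → ∫ u in Ioc t2 T, (E u - m) ≤ Iv := by
    intro t2 T h2
    refine setIntegral_mono_set (hEmi.mono_set Ioi_subset_Ici_self) ?_ ?_
    · refine (ae_restrict_iff' measurableSet_Ioi).2 (ae_of_all _ fun u _ => ?_)
      simp only [Pi.zero_apply]
      linarith [hEm u]
    · exact HasSubset.Subset.eventuallyLE (fun u hu => lt_of_le_of_lt h2 hu.1)
  -- E tends to m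
  have hE'le : ∀ t ∈ Ioi t0, (⟪f' (z t), z' t⟫ : ℝ) ≤ ‖g t‖ ^ 2 / 4 := by
    intro t ht
    have h1 := hz'eq t (Ioi_subset_Ici_self ht)
    have h2 : (⟪f' (z t), z' t⟫ : ℝ) = ⟪f' (z t), g t⟫ - ⟪f' (z t), f' (z t)⟫ := by
      rw [h1, inner_sub_right]
    have h3 : (⟪f' (z t), g t⟫ : ℝ) ≤ ‖f' (z t)‖ * ‖g t‖ := real_inner_le_norm _ _
    have h4 : (⟪f' (z t), f' (z t)⟫ : ℝ) = ‖f' (z t)‖ ^ 2 := real_inner_self_eq_norm_sq _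
    rw [h2, h4]
    nlinarith [sq_nonneg (‖f' (z t)‖ - ‖g t‖ / 2)]
  have hψEi : IntegrableOn (fun t => ‖g t‖ ^ 2 / 4) (Ici t0) := by
    have hdom : IntegrableOn (fun t => (1 / (4 * t0)) * (t * ‖g t‖ ^ 2)) (Ici t0) :=
      hg2.const_mul _
    refine hdom.mono' (((hgn.pow 2).div_const 4).aestronglyMeasurable measurableSet_Ici) ?_
    rw [ae_restrict_iff' measurableSet_Ici]
    refine ae_of_all _ fun t ht => ?_
    have ht' : t0 ≤ t := ht
    rw [Real.norm_eq_abs, abs_of_nonneg (by positivity)]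
    have key : t0 * ‖g t‖ ^ 2 ≤ t * ‖g t‖ ^ 2 :=
      mul_le_mul_of_nonneg_right ht' (sq_nonneg _)
    rw [div_le_iff₀ (by norm_num : (0:ℝ) < 4)]
    rw [one_div, inv_mul_eq_div, div_mul_eq_mul_div, le_div_iff₀ (by positivity)]
    nlinarith [key, ht0]
  have hEt : Tendsto E atTop (𝓝 m) := by
    obtain ⟨l, hl⟩ := my_descent hEc (fun t ht => hEd t (Ioi_subset_Ici_self ht))
      (ψ := fun t => ‖g t‖ ^ 2 / 4) ((hgn.pow 2).div_const 4) hψEi (fun t _ => by positivity) hE'le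
      (c := m) (fun t _ => hEm t)
    have hge : m ≤ l := ge_of_tendsto hl (Eventually.of_forall hEm)
    have hle : l ≤ m := by
      by_contra hcon
      push_neg at hcon
      set δ := l - m with hδdef
      have hδ : 0 < δ := by simp only [hδdef]; linarith
      have hev : ∀ᶠ t in (atTop : Filter ℝ), δ / 2 < E t - m := by
        have h1 : ∀ᶠ t in (atTop : Filter ℝ), l - δ / 2 < E t :=
          hl.eventually (eventually_gt_nhds (by linarith))
        exact h1.mono fun t ht => by simp only [hδdef] at *; linarith
      obtain ⟨t1, ht1⟩ := eventually_atTop.mp (hev.and (eventually_ge_atTop t0))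
      set t2 := max t1 t0 with ht2def
      have ht2 : t0 ≤ t2 := le_max_right _ _
      set T := t2 + 2 * (Iv + 1) / δ with hTdef
      have hT2 : t2 ≤ T := by
        have : 0 ≤ 2 * (Iv + 1) / δ := by positivity
        simp only [hTdef]; linarith
      have hconst : (δ / 2) * (T - t2) ≤ ∫ u in Ioc t2 T, (E u - m) := by
        have h1 : ∫ u in Ioc t2 T, (δ / 2) ≤ ∫ u in Ioc t2 T, (E u - m) := by
          refine setIntegral_mono_on (integrableOn_const measure_Ioc_lt_top.ne)
            (hEmi.mono_set fun u hu => mem_Ici.mpr (le_of_lt (lt_of_le_of_lt ht2 hu.1)))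
            measurableSet_Ioc fun u hu => ?_
          exact le_of_lt (ht1 u (le_of_lt (lt_of_le_of_lt (le_max_left _ _) hu.1))).1
        rw [setIntegral_const, measureReal_def, Real.volume_Ioc, ENNReal.toReal_ofReal (by linarith),
          smul_eq_mul, mul_comm] at h1
        exact h1
      have hub := hIocIv t2 T ht2
      have harith : (δ / 2) * (T - t2) = Iv + 1 := by
        simp only [hTdef]
        field_simp
        ring
      rw [harith] at hconst
      linarith
    have : l = m := le_antisymm hle hge
    rwa [this] at hl
  -- t * (E t - m) tends to 0
  have hRt : Tendsto (fun t => t * (E t - m)) atTop (𝓝 0) := by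
    have hRd : ∀ t ∈ Ici t0, HasDerivAt (fun t => t * (E t - m))
        (1 * (E t - m) + t * ⟪f' (z t), z' t⟫) t := by
      intro t ht
      exact (hasDerivAt_id t).mul ((hEd t ht).sub_const m)
    have hRc : ContinuousOn (fun t => t * (E t - m)) (Ici t0) :=
      continuousOn_id.mul hEmc
    have hψRc : ContinuousOn (fun t => (E t - m) + t * ‖g t‖ ^ 2 / 4) (Ici t0) :=
      hEmc.add ((continuousOn_id.mul (hgn.pow 2)).div_const 4)
    have hψRi : IntegrableOn (fun t => (E t - m) + t * ‖g t‖ ^ 2 / 4) (Ici t0) :=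
      hEmi.add (hg2.div_const 4)
    have hψR0 : ∀ t ∈ Ici t0, 0 ≤ (E t - m) + t * ‖g t‖ ^ 2 / 4 := by
      intro t ht
      have ht' : (0:ℝ) < t := lt_of_lt_of_le ht0 ht
      have h1 : (0:ℝ) ≤ t * ‖g t‖ ^ 2 / 4 := by positivity
      linarith [hEm t]
    have hRle : ∀ t ∈ Ioi t0, 1 * (E t - m) + t * ⟪f' (z t), z' t⟫ ≤
        (E t - m) + t * ‖g t‖ ^ 2 / 4 := by
      intro t ht
      have ht' : (0:ℝ) < t := lt_trans ht0 ht
      have h1 := mul_le_mul_of_nonneg_left (hE'le t ht) ht'.le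
      rw [mul_div_assoc]
      linarith
    obtain ⟨LR, hLR⟩ := my_descent hRc (fun t ht => hRd t (Ioi_subset_Ici_self ht))
      hψRc hψRi hψR0 hRle (c := 0)
      (fun t ht => by
        have ht' : (0:ℝ) < t := lt_of_lt_of_le ht0 ht
        have h2 : (0:ℝ) ≤ E t - m := by linarith [hEm t]
        positivity)
    have hLR0 : 0 ≤ LR := by
      refine ge_of_tendsto hLR ?_
      filter_upwards [eventually_ge_atTop t0] with t ht
      have ht' : (0:ℝ) < t := lt_of_lt_of_le ht0 ht
      have h2 : (0:ℝ) ≤ E t - m := by linarith [hEm t]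
      positivity
    have hLRle : LR ≤ 0 := by
      by_contra hcon
      push_neg at hcon
      have hev : ∀ᶠ t in (atTop : Filter ℝ), LR / 2 < t * (E t - m) :=
        hLR.eventually (eventually_gt_nhds (by linarith))
      obtain ⟨t1, ht1⟩ := eventually_atTop.mp (hev.and (eventually_ge_atTop t0))
      set t2 := max t1 t0 with ht2def
      have ht2 : t0 ≤ t2 := le_max_right _ _
      have ht2pos : 0 < t2 := lt_of_lt_of_le ht0 ht2
      set T := t2 * Real.exp (2 * (Iv + 1) / LR) with hTdef
      have hexp1 : 1 ≤ Real.exp (2 * (Iv + 1) / LR) := by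
        rw [Real.one_le_exp_iff]
        positivity
      have hT2 : t2 ≤ T := by
        calc t2 = t2 * 1 := (mul_one t2).symm
        _ ≤ T := mul_le_mul_of_nonneg_left hexp1 ht2pos.le
      have hlog : Real.log (T / t2) = 2 * (Iv + 1) / LR := by
        rw [hTdef, mul_comm, mul_div_assoc, div_self (ne_of_gt ht2pos), mul_one,
          Real.log_exp]
      have hinvint : IntegrableOn (fun u : ℝ => u⁻¹) (Ioc t2 T) := by
        refine ((continuousOn_inv₀.mono ?_).integrableOn_compact
          (isCompact_Icc (a := t2) (b := T))).mono_set Ioc_subset_Icc_self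
        intro u hu
        exact ne_of_gt (lt_of_lt_of_le ht2pos hu.1)
      have hmono : ∫ u in Ioc t2 T, (LR / 2) * u⁻¹ ≤ ∫ u in Ioc t2 T, (E u - m) := by
        refine setIntegral_mono_on (hinvint.const_mul _)
          (hEmi.mono_set fun u hu => mem_Ici.mpr (le_of_lt (lt_of_le_of_lt ht2 hu.1)))
          measurableSet_Ioc fun u hu => ?_
        have hu1 : t1 ≤ u := le_of_lt (lt_of_le_of_lt (le_max_left _ _) hu.1)
        have hupos : 0 < u := lt_of_le_of_lt ht2pos.le hu.1
        have h1 := (ht1 u hu1).1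
        rw [mul_comm (LR / 2) u⁻¹, inv_mul_eq_div, div_le_iff₀ hupos]
        nlinarith [h1]
      have hval : ∫ u in Ioc t2 T, (LR / 2) * u⁻¹ = (LR / 2) * Real.log (T / t2) := by
        rw [integral_const_mul]
        congr 1
        rw [← intervalIntegral.integral_of_le hT2]
        refine integral_inv ?_
        rw [uIcc_of_le hT2]
        intro hmem
        exact absurd hmem.1 (not_le.mpr ht2pos)
      have hub := hIocIv t2 T ht2
      rw [hval, hlog] at hmono
      have harith : (LR / 2) * (2 * (Iv + 1) / LR) = Iv + 1 := by
        field_simp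
      rw [harith] at hmono
      linarith
    have : LR = 0 := le_antisymm hLRle hLR0
    rwa [this] at hLR
  refine ⟨hRt, ?_⟩
  -- q-limits for minimizers
  have hqlim : ∀ x : H, (∀ y, f x ≤ f y) →
      ∃ L, Tendsto (fun t => ‖z t - x‖ ^ 2) atTop (𝓝 L) := by
    intro x hxmin
    set Cx := C + ‖x0 - x‖ with hCx
    have hCx0 : 0 ≤ Cx := by positivity
    have hCxb : ∀ t ∈ Ici t0, ‖z t - x‖ ≤ Cx := by
      intro t ht
      have h1 : dist (z t) x ≤ dist (z t) x0 + dist x0 x := dist_triangle _ _ _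
      rw [dist_eq_norm, dist_eq_norm, dist_eq_norm] at h1
      have := hCb t ht
      simp only [hCx]
      linarith
    refine my_descent ((hzc.sub continuousOn_const).norm.pow 2)
      (fun t ht => hqd x t (Ioi_subset_Ici_self ht))
      (ψ := fun t => 2 * Cx * ‖g t‖) (continuousOn_const.mul hgn) (hg1.const_mul (2 * Cx)) (fun t _ => by positivity)
      (fun t ht => ?_) (c := 0) (fun t _ => by positivity)
    have h1 := hq'le x hxmin t (Ioi_subset_Ici_self ht)
    have h2 : 2 * ‖g t‖ * ‖z t - x‖ ≤ 2 * Cx * ‖g t‖ := by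
      nlinarith [norm_nonneg (g t), hCxb t (Ioi_subset_Ici_self ht)]
    linarith [hEm t]
  -- weak cluster points are minimizers
  have hcluster : ∀ V : Ultrafilter ℝ, ↑V ≤ (atTop : Filter ℝ) →
      ∃ xh : H, (∀ y, f xh ≤ f y) ∧
        ∀ w : H, Tendsto (fun t => (⟪z t, w⟫ : ℝ)) V (𝓝 ⟪xh, w⟫) := by
    intro V hV
    obtain ⟨xh, hxh⟩ := my_weak_cluster hzb V hV
    refine ⟨xh, ?_, hxh⟩
    have hflim : Tendsto E V (𝓝 m) := hEt.mono_left hV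
    have hRHS : Tendsto (fun t => f xh + ((⟪z t, f' xh⟫ : ℝ) - ⟪xh, f' xh⟫)) V
        (𝓝 (f xh + ((⟪xh, f' xh⟫ : ℝ) - ⟪xh, f' xh⟫))) :=
      ((hxh (f' xh)).sub_const _).const_add _
    have hptwise : ∀ t, f xh + ((⟪z t, f' xh⟫ : ℝ) - ⟪xh, f' xh⟫) ≤ E t := by
      intro t
      have h1 := my_grad_ineq hconv hgrad xh (z t)
      have h2 : (⟪f' xh, z t - xh⟫ : ℝ) = ⟪z t, f' xh⟫ - ⟪xh, f' xh⟫ := by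
        rw [inner_sub_right, real_inner_comm (f' xh) (z t), real_inner_comm (f' xh) xh]
      rw [h2] at h1
      exact h1
    have hfin : f xh ≤ m := by
      have h3 := le_of_tendsto_of_tendsto' hRHS hflim hptwise
      simpa using h3
    intro y
    exact le_trans hfin (hmle y)
  obtain ⟨U, hU⟩ := Filter.exists_ultrafilter_le (atTop : Filter ℝ)
  obtain ⟨xstar, hxstarmin, hxstar⟩ := hcluster U hU
  refine ⟨xstar, hxstarmin, fun v => ?_⟩
  rw [tendsto_iff_ultrafilter]
  intro V hV
  obtain ⟨xh, hxhmin, hxh⟩ := hcluster V hV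
  -- Opial: xh = xstar
  have hxeq : xh = xstar := by
    obtain ⟨Ls, hLs⟩ := hqlim xstar hxstarmin
    obtain ⟨Lh, hLh⟩ := hqlim xh hxhmin
    have hinner : Tendsto (fun t => (⟪z t, xstar - xh⟫ : ℝ)) atTop
        (𝓝 ((‖xstar‖ ^ 2 - ‖xh‖ ^ 2 - (Ls - Lh)) / 2)) := by
      have hdt : Tendsto (fun t => ‖z t - xstar‖ ^ 2 - ‖z t - xh‖ ^ 2) atTop
          (𝓝 (Ls - Lh)) := hLs.sub hLh
      have hptw : ∀ t, (⟪z t, xstar - xh⟫ : ℝ) =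
          (‖xstar‖ ^ 2 - ‖xh‖ ^ 2 - (‖z t - xstar‖ ^ 2 - ‖z t - xh‖ ^ 2)) / 2 := by
        intro t
        have h1 : ‖z t - xstar‖ ^ 2 = ‖z t‖ ^ 2 - 2 * ⟪z t, xstar⟫ + ‖xstar‖ ^ 2 :=
          norm_sub_sq_real _ _
        have h2 : ‖z t - xh‖ ^ 2 = ‖z t‖ ^ 2 - 2 * ⟪z t, xh⟫ + ‖xh‖ ^ 2 :=
          norm_sub_sq_real _ _
        have h3 : (⟪z t, xstar - xh⟫ : ℝ) = ⟪z t, xstar⟫ - ⟪z t, xh⟫ :=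
          inner_sub_right _ _ _
        rw [h3, h1, h2]
        ring
      exact ((hdt.const_sub _).div_const 2).congr (fun t => (hptw t).symm)
    have hUt : Tendsto (fun t => (⟪z t, xstar - xh⟫ : ℝ)) U
        (𝓝 ⟪xstar, xstar - xh⟫) := hxstar _
    have hVt : Tendsto (fun t => (⟪z t, xstar - xh⟫ : ℝ)) V
        (𝓝 ⟪xh, xstar - xh⟫) := hxh _
    have e1 : (⟪xstar, xstar - xh⟫ : ℝ) = (‖xstar‖ ^ 2 - ‖xh‖ ^ 2 - (Ls - Lh)) / 2 :=
      tendsto_nhds_unique hUt (hinner.mono_left hU)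
    have e2 : (⟪xh, xstar - xh⟫ : ℝ) = (‖xstar‖ ^ 2 - ‖xh‖ ^ 2 - (Ls - Lh)) / 2 :=
      tendsto_nhds_unique hVt (hinner.mono_left hV)
    have hzero : (⟪xstar - xh, xstar - xh⟫ : ℝ) = 0 := by
      rw [inner_sub_left]
      linarith
    have hsub : xstar - xh = 0 := inner_self_eq_zero.mp hzero
    have : xstar = xh := by
      have := sub_eq_zero.mp hsub
      exact this
    exact this.symm
  subst hxeq
  have h1 : Tendsto (fun t => (⟪z t, v⟫ : ℝ) - ⟪xh, v⟫) V (𝓝 (⟪xh, v⟫ - ⟪xh, v⟫)) :=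
    (hxh v).sub_const _
  rw [sub_self] at h1
  refine h1.congr fun t => ?_
  rw [inner_sub_left]
end

section
/- Let α > 1, s0 > 0, and let x : [s0, ∞) → H be a twice continuously differentiable solution of the inertial system with implicit Hessian driven damping ẍ(s) + (α/s)·ẋ(s) + ∇f(x(s) + (s/(α−1))·ẋ(s)) = 0 for all s ≥ s0. Then ∫_{s0}^∞ s³‖∇f(x(s) + (s/(α−1))·ẋ(s))‖² ds < ∞, and ‖∇f(x(s) + (s/(α−1))·ẋ(s))‖ = o(1/s²) as s → ∞, i.e., s²·‖∇f(x(s) + (s/(α−1))·ẋ(s))‖ → 0 as s → ∞. -/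
set_option maxHeartbeats 1000000
open MeasureTheory Filter Set
open scoped Topology RealInnerProductSpace

section aux
variable {H : Type*} [NormedAddCommGroup H] [InnerProductSpace ℝ H] [CompleteSpace H]

lemma subgrad {f : H → ℝ} {f' : H → H} (hconv : ConvexOn ℝ Set.univ f)
    (hgrad : ∀ x, HasGradientAt f (f' x) x) (p q : H) :
    f p + ⟪f' p, q - p⟫ ≤ f q := by
  set c : ℝ →ᵃ[ℝ] H := AffineMap.lineMap p q with hc
  have hφc : ConvexOn ℝ Set.univ (f ∘ c) := by
    simpa using hconv.comp_affineMap c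
  have hcd : HasDerivAt c (q - p) 0 := by
    have : HasDerivAt (fun t : ℝ => p + t • (q - p)) (q - p) 0 := by
      simpa using ((hasDerivAt_id (0:ℝ)).smul_const (q - p)).const_add p
    refine this.congr_deriv ?_ |>.congr_of_eventuallyEq ?_
    · rfl
    · filter_upwards with t
      simp [hc, AffineMap.lineMap_apply, smul_sub]
      abel
  have hφd : HasDerivAt (f ∘ c) ⟪f' p, q - p⟫ 0 := by
    have := (hgrad (c 0)).hasFDerivAt.comp_hasDerivAt 0 hcd
    simpa [hc, AffineMap.lineMap_apply] using this
  have := hφc.le_slope_of_hasDerivAt (mem_univ (0:ℝ)) (mem_univ 1) one_pos hφd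
  simp [slope_def_field, hc, AffineMap.lineMap_apply] at this
  linarith
end aux

lemma telescope (φ : ℝ → ℝ) (C a b : ℝ) (hC : 0 ≤ C) (hab : a ≤ b)
    (h : ∀ s t, a ≤ s → s ≤ t → t ≤ b → φ t ≤ φ s + C * (t - s) ^ 2) :
    φ b ≤ φ a := by
  refine le_of_forall_pos_le_add fun ε hε => ?_
  obtain ⟨n, hn⟩ := exists_nat_gt (max 1 (C * (b - a) ^ 2 / ε))
  have hn1 : (1:ℝ) ≤ n := le_trans (le_max_left _ _) hn.le
  have hnpos : (0:ℝ) < n := by linarith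
  set d : ℝ := (b - a) / n with hd
  have hd0 : 0 ≤ d := div_nonneg (by linarith) hnpos.le
  have key : ∀ i : ℕ, (i : ℝ) ≤ n → φ (a + i * d) ≤ φ a + i * (C * d ^ 2) := by
    intro i
    induction i with
    | zero => simp
    | succ i ih =>
      intro hi
      have hi' : (i : ℝ) ≤ n := by push_cast at hi ⊢; linarith
      have h1 : a ≤ a + i * d := by nlinarith [mul_nonneg (Nat.cast_nonneg (α := ℝ) i) hd0]
      have h2 : a + i * d ≤ a + (i + 1 : ℕ) * d := by
        push_cast; nlinarith
      have h3 : a + (i + 1 : ℕ) * d ≤ b := by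
        push_cast
        have : ((i:ℝ) + 1) * d ≤ n * d := by push_cast at hi; nlinarith [hd0]
        have hnd : (n:ℝ) * d = b - a := by rw [hd]; field_simp
        linarith
      have := h _ _ h1 h2 h3
      have heq : (a + (i + 1 : ℕ) * d) - (a + i * d) = d := by push_cast; ring
      rw [heq] at this
      calc φ (a + (i + 1 : ℕ) * d) ≤ φ (a + i * d) + C * d ^ 2 := this
        _ ≤ φ a + i * (C * d ^ 2) + C * d ^ 2 := by linarith [ih hi']
        _ = φ a + (i + 1 : ℕ) * (C * d ^ 2) := by push_cast; ring
  have hb : a + n * d = b := by rw [hd]; field_simp; ring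
  have := key n le_rfl
  rw [hb] at this
  have hfin : (n:ℝ) * (C * d ^ 2) ≤ ε := by
    have : (n:ℝ) * (C * d ^ 2) = C * (b - a) ^ 2 / n := by
      rw [hd]; field_simp
    rw [this]
    rw [div_le_iff₀ hnpos]
    have h2 : C * (b - a) ^ 2 / ε < n := lt_of_le_of_lt (le_max_right _ _) hn
    rw [div_lt_iff₀ hε] at h2
    nlinarith
  linarith

/-- Implicit Hessian driven damping: integral estimate and o(1/s²) rate for the gradients. -/
theorem implicit_hessian_damping_gradient_estimates
    {H : Type*} [NormedAddCommGroup H] [InnerProductSpace ℝ H] [CompleteSpace H]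
    (f : H → ℝ) (f' : H → H)
    (hconv : ConvexOn ℝ Set.univ f)
    (hgrad : ∀ x, HasGradientAt f (f' x) x)
    (hlip : ∀ s : Set H, Bornology.IsBounded s → ∃ K : NNReal, LipschitzOnWith K f' s)
    (hmin : ∃ z, ∀ y, f z ≤ f y)
    (α s0 : ℝ) (hα : 1 < α) (hs0 : 0 < s0)
    (x x' x'' : ℝ → H)
    (hx : ∀ s ∈ Ici s0, HasDerivAt x (x' s) s)
    (hx' : ∀ s ∈ Ici s0, HasDerivAt x' (x'' s) s)
    (hx''cont : ContinuousOn x'' (Ici s0))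
    (heq : ∀ s ∈ Ici s0,
      x'' s + (α / s) • x' s + f' (x s + (s / (α - 1)) • x' s) = 0) :
    IntegrableOn (fun s => s ^ 3 * ‖f' (x s + (s / (α - 1)) • x' s)‖ ^ 2) (Ici s0) ∧
    Tendsto (fun s => s ^ 2 * ‖f' (x s + (s / (α - 1)) • x' s)‖) atTop (nhds 0) := by
  obtain ⟨z, hz⟩ := hmin
  have hc : (0:ℝ) < α - 1 := by linarith
  set c : ℝ := α - 1 with hcdef
  set y : ℝ → H := fun s => x s + (s / c) • x' s with hydef
  set u : ℝ → H := fun s => f' (y s) with hudef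
  -- continuity facts
  have hf'cont : Continuous f' := by
    rw [continuous_iff_continuousAt]; intro p
    obtain ⟨K, hK⟩ := hlip (Metric.closedBall p 1) Metric.isBounded_closedBall
    exact hK.continuousOn.continuousAt (Metric.closedBall_mem_nhds p one_pos)
  have hxc : ContinuousOn x (Ici s0) := fun s hs => (hx s hs).continuousAt.continuousWithinAt
  have hx'c : ContinuousOn x' (Ici s0) := fun s hs => (hx' s hs).continuousAt.continuousWithinAt
  have hyc : ContinuousOn y (Ici s0) := by
    apply hxc.add
    exact (continuousOn_id.div_const c).smul hx'c
  have huc : ContinuousOn u (Ici s0) := hf'cont.comp_continuousOn hyc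
  -- derivative of y
  have hyd : ∀ s ∈ Ici s0, HasDerivAt y (-((s / c) • u s)) s := by
    intro s hs
    have hsne : s ≠ 0 := (lt_of_lt_of_le hs0 hs).ne'
    have h1 : HasDerivAt (fun t => (t / c) • x' t) ((s / c) • x'' s + (1/c) • x' s) s := by
      exact HasDerivAt.smul ((hasDerivAt_id s).div_const c) (hx' s hs)
    have h2 : HasDerivAt y (x' s + ((s/c) • x'' s + (1/c) • x' s)) s := (hx s hs).add h1
    have h3 : x'' s + (α / s) • x' s + u s = 0 := heq s hs
    have hx''eq : x'' s = -((α/s) • x' s) - u s := by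
      linear_combination (norm := module) h3
    rw [hx''eq] at h2
    convert h2 using 1
    match_scalars <;> field_simp <;> ring
  
  set g : ℝ → ℝ := fun s => f (y s) with hgdef
  have hgd : ∀ s ∈ Ici s0, HasDerivAt g (-((s/c) * ‖u s‖^2)) s := by
    intro s hs
    have h1 := (hgrad (y s)).hasFDerivAt.comp_hasDerivAt s (hyd s hs)
    have h2 : (InnerProductSpace.toDual ℝ H (f' (y s))) (-((s / c) • u s))
        = -((s/c) * ‖u s‖^2) := by
      have hfu : f' (y s) = u s := rfl
      rw [InnerProductSpace.toDual_apply_apply, inner_neg_right, real_inner_smul_right,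
        hfu, real_inner_self_eq_norm_sq]
    rw [h2] at h1
    exact h1
  have hgc : ContinuousOn g (Ici s0) := fun s hs => ((hgd s hs).continuousAt).continuousWithinAt
  set q : ℝ → ℝ := fun s => ⟪y s - z, y s - z⟫ with hqdef
  have hqd : ∀ s ∈ Ici s0,
      HasDerivAt q (2 * ⟪y s - z, -((s/c) • u s)⟫) s := by
    intro s hs
    have h1 : HasDerivAt (fun t => y t - z) (-((s/c) • u s)) s := (hyd s hs).sub_const z
    have := h1.inner ℝ h1
    refine this.congr_deriv ?_
    rw [real_inner_comm]
    ring
  have hq0 : ∀ s, 0 ≤ q s := fun s => real_inner_self_nonneg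
  have hv0 : ∀ s, 0 ≤ g s - f z := fun s => by have := hz (y s); simp [hgdef]; linarith
  -- pointwise bound on q'
  have hq'le : ∀ s ∈ Ici s0, 2 * ((s/c) * (g s - f z)) ≤ -(2 * ⟪y s - z, -((s/c) • u s)⟫) := by
    intro s hs
    have hsub := subgrad hconv hgrad (y s) z
    have hsc : 0 < s / c := div_pos (lt_of_lt_of_le hs0 hs) hc
    have h1 : ⟪y s - z, -((s/c) • u s)⟫ = -((s/c) * ⟪u s, y s - z⟫) := by
      rw [inner_neg_right, real_inner_smul_right, real_inner_comm]
    rw [h1]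
    have h2 : g s - f z ≤ ⟪u s, y s - z⟫ := by
      have : ⟪u s, z - y s⟫ = -⟪u s, y s - z⟫ := by
        rw [← inner_neg_right]; congr 1; abel
      have hfu : f' (y s) = u s := rfl
      rw [hfu, this] at hsub
      show f (y s) - f z ≤ _
      linarith
    nlinarith
  -- Energy function
  set E : ℝ → ℝ := fun s => (s^2/(2*c)) * (g s - f z) with hEdef
  have hEd : ∀ s ∈ Ici s0,
      HasDerivAt E ((s/c) * (g s - f z) + (s^2/(2*c)) * (-((s/c) * ‖u s‖^2))) s := by
    intro s hs
    have h1 : HasDerivAt (fun t : ℝ => t^2/(2*c)) (s/c) s := by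
      have := (hasDerivAt_pow 2 s).div_const (2*c)
      refine this.congr_deriv ?_
      ring
    have := h1.mul ((hgd s hs).sub_const (f z))
    exact this
  have hE0 : ∀ s, 0 ≤ E s := fun s =>
    mul_nonneg (div_nonneg (sq_nonneg s) (by linarith)) (hv0 s)
  -- interval integrability of the relevant functions on [s0, T]
  have hcont1 : ContinuousOn (fun σ => σ^3 * ‖u σ‖^2) (Ici s0) := by
    exact (continuousOn_pow 3).mul ((huc.norm).pow 2)
  have hcont2 : ContinuousOn (fun σ => (σ/c) * (g σ - f z)) (Ici s0) :=
    (continuousOn_id.div_const c).mul (hgc.sub continuousOn_const)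
  have hcont3 : ContinuousOn (fun σ => 2 * ⟪y σ - z, -((σ/c) • u σ)⟫) (Ici s0) := by
    apply ContinuousOn.mul continuousOn_const
    exact ContinuousOn.inner (hyc.sub continuousOn_const)
      (((continuousOn_id.div_const c).smul huc).neg)
  -- the key uniform bound
  set B : ℝ := 2*c^2 * (q s0 / 2 + E s0) with hBdef
  have hkey : ∀ T, s0 ≤ T → (∫ σ in s0..T, σ^3 * ‖u σ‖^2) ≤ B := by
    intro T hT
    have huIcc : uIcc s0 T = Icc s0 T := uIcc_of_le hT
    have hsub : Icc s0 T ⊆ Ici s0 := fun t ht => ht.1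
    have hi1 : IntervalIntegrable (fun σ => σ^3 * ‖u σ‖^2) volume s0 T :=
      (hcont1.mono (huIcc ▸ hsub)).intervalIntegrable
    have hi2 : IntervalIntegrable (fun σ => (σ/c) * (g σ - f z)) volume s0 T :=
      (hcont2.mono (huIcc ▸ hsub)).intervalIntegrable
    have hi3 : IntervalIntegrable (fun σ => 2 * ⟪y σ - z, -((σ/c) • u σ)⟫) volume s0 T :=
      (hcont3.mono (huIcc ▸ hsub)).intervalIntegrable
    -- FTC for q
    have hqT : q T - q s0 = ∫ σ in s0..T, 2 * ⟪y σ - z, -((σ/c) • u σ)⟫ := by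
      rw [intervalIntegral.integral_eq_sub_of_hasDerivAt
        (fun t ht => hqd t (hsub (huIcc ▸ ht))) hi3]
    -- FTC for E
    have hET : E T - E s0 = ∫ σ in s0..T,
        ((σ/c) * (g σ - f z) + (σ^2/(2*c)) * (-((σ/c) * ‖u σ‖^2))) := by
      rw [intervalIntegral.integral_eq_sub_of_hasDerivAt
        (fun t ht => hEd t (hsub (huIcc ▸ ht))) ?_]
      have : ContinuousOn (fun σ => (σ/c) * (g σ - f z) + (σ^2/(2*c)) * (-((σ/c) * ‖u σ‖^2)))
          (Ici s0) := by
        apply hcont2.add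
        apply ContinuousOn.mul ((continuousOn_pow 2).div_const (2*c))
        exact (((continuousOn_id.div_const c).mul ((huc.norm).pow 2))).neg
      exact (this.mono (huIcc ▸ hsub)).intervalIntegrable
    -- bound on ∫ (σ/c)(g - fz)
    have hbound1 : (∫ σ in s0..T, (σ/c) * (g σ - f z)) ≤ q s0 / 2 := by
      have hi3' : IntervalIntegrable (fun σ => -(2 * ⟪y σ - z, -((σ/c) • u σ)⟫)) volume s0 T :=
        hi3.neg
      have hi2' : IntervalIntegrable (fun σ => 2 * ((σ/c) * (g σ - f z))) volume s0 T :=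
        hi2.const_mul 2
      have hmono := intervalIntegral.integral_mono_on (μ := volume) hT hi2' hi3'
        (fun σ hσ => hq'le σ (hsub hσ))
      rw [intervalIntegral.integral_const_mul, intervalIntegral.integral_neg] at hmono
      have hqT' : q T ≥ 0 := hq0 T
      linarith [hqT ▸ hmono]
    -- split the E integral
    have hi4 : IntervalIntegrable (fun σ => (σ^2/(2*c)) * (-((σ/c) * ‖u σ‖^2))) volume s0 T := by
      have : ContinuousOn (fun σ => (σ^2/(2*c)) * (-((σ/c) * ‖u σ‖^2))) (Ici s0) := by
        apply ContinuousOn.mul ((continuousOn_pow 2).div_const (2*c))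
        exact (((continuousOn_id.div_const c).mul ((huc.norm).pow 2))).neg
      exact (this.mono (huIcc ▸ hsub)).intervalIntegrable
    have hsplit : E T - E s0 = (∫ σ in s0..T, (σ/c) * (g σ - f z))
        + ∫ σ in s0..T, (σ^2/(2*c)) * (-((σ/c) * ‖u σ‖^2)) := by
      rw [hET, intervalIntegral.integral_add hi2 hi4]
    have heq2 : (fun σ => (σ^2/(2*c)) * (-((σ/c) * ‖u σ‖^2)))
        = fun σ => (-(1/(2*c^2))) * (σ^3 * ‖u σ‖^2) := by
      funext σ
      field_simp
    rw [heq2, intervalIntegral.integral_const_mul] at hsplit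
    have hET' : E T ≥ 0 := hE0 T
    have h2c : 0 < 1/(2*c^2) := by positivity
    have hBc : (1/(2*c^2)) * B = q s0/2 + E s0 := by
      rw [hBdef]
      field_simp
    nlinarith [hsplit, hbound1, h2c, hBc, hET']
  
  -- Integrability on Ici s0
  have hint : IntegrableOn (fun σ => σ^3 * ‖u σ‖^2) (Ici s0) := by
    rw [integrableOn_Ici_iff_integrableOn_Ioi]
    refine integrableOn_Ioi_of_intervalIntegral_norm_bounded (l := atTop) (b := id) B s0
      (fun i => ?_) tendsto_id ?_
    · rcases le_or_gt i s0 with h | h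
      · rw [Set.Ioc_eq_empty (by exact fun hlt => absurd h (not_le.mpr hlt))]
        exact integrableOn_empty
      · exact (ContinuousOn.integrableOn_Icc
          (hcont1.mono (fun t ht => ht.1))).mono_set Ioc_subset_Icc_self
    · filter_upwards [eventually_ge_atTop s0] with i hi
      have : (∫ σ in s0..(id i), ‖σ^3 * ‖u σ‖^2‖) = ∫ σ in s0..i, σ^3 * ‖u σ‖^2 := by
        apply intervalIntegral.integral_congr
        intro σ hσ
        simp only [id_eq] at hσ
        rw [uIcc_of_le hi] at hσ
        have h0 : 0 < σ := lt_of_lt_of_le hs0 hσ.1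
        show ‖σ^3 * ‖u σ‖^2‖ = σ^3 * ‖u σ‖^2
        exact Real.norm_of_nonneg (by positivity)
      rw [this]
      exact hkey i hi
  -- Antitone norm of gradients
  have hanti : ∀ a ∈ Ici s0, ∀ b ∈ Ici s0, a ≤ b → ‖u b‖ ≤ ‖u a‖ := by
    intro a ha b hb hab
    have hIcc : Icc a b ⊆ Ici s0 := fun t ht => le_trans ha ht.1
    have ha0 : 0 < a := lt_of_lt_of_le hs0 ha
    have hb0 : 0 < b := lt_of_lt_of_le ha0 hab
    obtain ⟨K, hK⟩ := hlip (y '' Icc a b)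
      ((isCompact_Icc.image_of_continuousOn (hyc.mono hIcc)).isBounded)
    obtain ⟨M, hM⟩ := isCompact_Icc.exists_bound_of_continuousOn (huc.mono hIcc)
    have hM0 : 0 ≤ M := le_trans (norm_nonneg (u a)) (hM a ⟨le_rfl, hab⟩)
    set K1 : ℝ := K * ((b/c) * M) with hK1def
    have hK10 : 0 ≤ K1 := mul_nonneg K.2 (mul_nonneg (by positivity) hM0)
    -- displacement bound
    have hyst : ∀ s t, a ≤ s → s ≤ t → t ≤ b → ‖y t - y s‖ ≤ ((b/c) * M) * (t - s) := by
      intro s t has hst htb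
      have hsub2 : Icc s t ⊆ Icc a b := Icc_subset_Icc has htb
      have := norm_image_sub_le_of_norm_deriv_le_segment'
        (f := y) (f' := fun σ => -((σ/c) • u σ)) (a := s) (b := t) (C := (b/c) * M)
        (fun σ hσ => (hyd σ (hIcc (hsub2 hσ))).hasDerivWithinAt)
        (fun σ hσ => ?_) t ⟨hst, le_rfl⟩
      · exact this
      · have hσab : σ ∈ Icc a b := hsub2 (Ico_subset_Icc_self hσ)
        have hσ0 : 0 < σ := lt_of_lt_of_le ha0 hσab.1
        rw [norm_neg, norm_smul, Real.norm_of_nonneg (by positivity : (0:ℝ) ≤ σ/c)]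
        have h1 : σ / c ≤ b / c := by gcongr; exact hσab.2
        exact mul_le_mul h1 (hM σ hσab) (norm_nonneg _) (by positivity)
    -- Lipschitz bound on u along trajectory
    have hust : ∀ s t, a ≤ s → s ≤ t → t ≤ b → ‖u t - u s‖ ≤ K1 * (t - s) := by
      intro s t has hst htb
      have h1 := hK.dist_le_mul (y t) (mem_image_of_mem y ⟨le_trans has hst, htb⟩)
        (y s) (mem_image_of_mem y ⟨has, le_trans hst htb⟩)
      rw [dist_eq_norm, dist_eq_norm] at h1
      calc ‖u t - u s‖ ≤ K * ‖y t - y s‖ := h1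
        _ ≤ K * (((b/c) * M) * (t - s)) :=
            mul_le_mul_of_nonneg_left (hyst s t has hst htb) K.2
        _ = K1 * (t - s) := by rw [hK1def]; ring
    set C : ℝ := (2*(b/a) + 1) * K1^2 with hCdef
    have hC0 : 0 ≤ C := by
      have hba : 0 ≤ b/a := le_of_lt (div_pos hb0 ha0)
      nlinarith [sq_nonneg K1]
    have hstep : ∀ s t, a ≤ s → s ≤ t → t ≤ b → ‖u t‖^2 ≤ ‖u s‖^2 + C * (t - s)^2 := by
      intro s t has hst htb
      rcases eq_or_lt_of_le hst with rfl | hlt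
      · nlinarith [mul_nonneg hC0 (sq_nonneg (s - s))]
      have huIcc2 : uIcc s t = Icc s t := uIcc_of_le hst
      have hsc : Icc s t ⊆ Ici s0 := fun σ hσ => le_trans (le_trans ha has) hσ.1
      have hsub3 : uIcc s t ⊆ Ici s0 := huIcc2 ▸ hsc
      have hcy' : ContinuousOn (fun σ => -((σ/c) • u σ)) (Ici s0) :=
        (((continuousOn_id.div_const c).smul huc)).neg
      have hrep : y t - y s = ∫ σ in s..t, -((σ/c) • u σ) := by
        rw [intervalIntegral.integral_eq_sub_of_hasDerivAt
          (fun σ hσ => hyd σ (hsub3 hσ))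
          ((hcy'.mono hsub3).intervalIntegrable)]
      set I : ℝ := (t^2 - s^2)/(2*c) with hIdef
      have hIval : (∫ σ in s..t, σ/c) = I := by
        rw [intervalIntegral.integral_div, integral_id, hIdef, div_div]
      have hIge : (a/c) * (t - s) ≤ I := by
        rw [hIdef]
        have h2 : 2*a*(t-s) ≤ t^2 - s^2 := by nlinarith
        have h3 : (2*a*(t-s))/(2*c) ≤ (t^2 - s^2)/(2*c) := by gcongr
        calc (a/c) * (t-s) = (2*a*(t-s))/(2*c) := by field_simp
          _ ≤ _ := h3
      have hIpos : 0 < I := lt_of_lt_of_le (mul_pos (div_pos ha0 hc) (by linarith)) hIge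
      have hiA : IntervalIntegrable (fun σ => (σ/c) • u s) volume s t :=
        (((continuous_id.div_const c).smul continuous_const)).intervalIntegrable s t
      have hiB : IntervalIntegrable (fun σ => (σ/c) • u σ) volume s t :=
        (((continuousOn_id.div_const c).smul huc).mono hsub3).intervalIntegrable
      have hr : (∫ σ in s..t, (σ/c) • (u s - u σ)) = I • u s + (y t - y s) := by
        have he : (fun σ => (σ/c) • (u s - u σ)) = fun σ => (σ/c) • u s - (σ/c) • u σ :=
          funext fun σ => smul_sub _ _ _
        rw [he, intervalIntegral.integral_sub hiA hiB,
          intervalIntegral.integral_smul_const, hIval]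
        have h2 : (∫ σ in s..t, (σ/c) • u σ) = -(y t - y s) := by
          rw [hrep, ← intervalIntegral.integral_neg]
          congr 1
          funext σ
          simp
        rw [h2, sub_neg_eq_add]
      have hnr : ‖∫ σ in s..t, (σ/c) • (u s - u σ)‖ ≤ ((b/c) * (K1 * (t-s))) * (t - s) := by
        have hb1 := intervalIntegral.norm_integral_le_of_norm_le_const
          (C := (b/c) * (K1*(t-s))) (f := fun σ => (σ/c) • (u s - u σ)) (a := s) (b := t) ?_
        · rwa [abs_of_nonneg (by linarith : (0:ℝ) ≤ t - s)] at hb1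
        · intro σ hσ
          rw [uIoc_of_le hst] at hσ
          have hσab : σ ∈ Icc a b := ⟨le_trans has hσ.1.le, le_trans hσ.2 htb⟩
          have hσ0 : 0 < σ := lt_of_lt_of_le ha0 hσab.1
          rw [norm_smul, Real.norm_of_nonneg (by positivity : (0:ℝ) ≤ σ/c)]
          have hA : σ/c ≤ b/c := by gcongr; exact hσab.2
          have hBd : ‖u s - u σ‖ ≤ K1 * (t - s) := by
            rw [norm_sub_rev]
            calc ‖u σ - u s‖ ≤ K1 * (σ - s) := hust s σ has hσ.1.le (le_trans hσ.2 htb)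
              _ ≤ K1 * (t - s) := by nlinarith [hσ.2, hK10]
          exact mul_le_mul hA hBd (norm_nonneg _) (by positivity)
      have hmono0 : 0 ≤ ⟪u t - u s, y t - y s⟫ := by
        have h1 := subgrad hconv hgrad (y s) (y t)
        have h2 := subgrad hconv hgrad (y t) (y s)
        have e1 : f' (y s) = u s := rfl
        have e2 : f' (y t) = u t := rfl
        rw [e1] at h1
        rw [e2] at h2
        have h4 : ⟪u t, y s - y t⟫ = -⟪u t, y t - y s⟫ := by
          rw [← inner_neg_right]
          congr 1
          abel
        rw [h4] at h2
        have h3 : ⟪u t - u s, y t - y s⟫ = ⟪u t, y t - y s⟫ - ⟪u s, y t - y s⟫ :=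
          inner_sub_left _ _ _
        linarith
      have hydiff : y t - y s = (∫ σ in s..t, (σ/c) • (u s - u σ)) - I • u s := by
        rw [hr]
        abel
      have hXle : ⟪u t - u s, u s⟫ ≤ (b/a) * K1^2 * (t-s)^2 := by
        have h5 : ⟪u t - u s, y t - y s⟫
            = ⟪u t - u s, (∫ σ in s..t, (σ/c) • (u s - u σ))⟫ - I * ⟪u t - u s, u s⟫ := by
          rw [hydiff, inner_sub_right, real_inner_smul_right]
        have h6 : ⟪u t - u s, (∫ σ in s..t, (σ/c) • (u s - u σ))⟫
            ≤ (K1 * (t-s)) * (((b/c) * (K1 * (t-s))) * (t - s)) := by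
          calc ⟪u t - u s, (∫ σ in s..t, (σ/c) • (u s - u σ))⟫
              ≤ ‖u t - u s‖ * ‖∫ σ in s..t, (σ/c) • (u s - u σ)‖ := real_inner_le_norm _ _
            _ ≤ (K1 * (t-s)) * (((b/c) * (K1 * (t-s))) * (t - s)) := by
                apply mul_le_mul (hust s t has hst htb) hnr (norm_nonneg _)
                  (mul_nonneg hK10 (by linarith))
        have h7 : I * ⟪u t - u s, u s⟫ ≤ (b/c) * K1^2 * (t-s)^3 := by nlinarith
        rcases le_or_gt (⟪u t - u s, u s⟫ : ℝ) 0 with hX | hX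
        · have hnn : 0 ≤ (b/a) * K1^2 * (t-s)^2 :=
            mul_nonneg (mul_nonneg (div_nonneg hb0.le ha0.le) (sq_nonneg _)) (sq_nonneg _)
          linarith
        · have hac : 0 < (a/c) * (t-s) := mul_pos (div_pos ha0 hc) (by linarith)
          refine le_of_mul_le_mul_left ?_ hac
          calc ((a/c)*(t-s)) * ⟪u t - u s, u s⟫ ≤ I * ⟪u t - u s, u s⟫ :=
                mul_le_mul_of_nonneg_right hIge hX.le
            _ ≤ (b/c)*K1^2*(t-s)^3 := h7
            _ = ((a/c)*(t-s)) * ((b/a)*K1^2*(t-s)^2) := by field_simp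
      have hexp : ‖u t‖^2 = ‖u s‖^2 + 2*⟪u s, u t - u s⟫ + ‖u t - u s‖^2 := by
        have h10 : u s + (u t - u s) = u t := by abel
        have h11 := norm_add_sq_real (u s) (u t - u s)
        rw [h10] at h11
        exact h11
      have husq : ‖u t - u s‖^2 ≤ K1^2 * (t-s)^2 := by
        have := hust s t has hst htb
        nlinarith [norm_nonneg (u t - u s)]
      rw [real_inner_comm] at hexp
      rw [hCdef]
      nlinarith [hXle, husq, hexp]
    have htel := telescope (fun s => ‖u s‖^2) C a b hC0 hab
      (fun s t has hst htb => hstep s t has hst htb)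
    calc ‖u b‖ = Real.sqrt (‖u b‖^2) := (Real.sqrt_sq (norm_nonneg _)).symm
      _ ≤ Real.sqrt (‖u a‖^2) := Real.sqrt_le_sqrt htel
      _ = ‖u a‖ := Real.sqrt_sq (norm_nonneg _)
  
  constructor
  · exact hint
  -- Tendsto part
  have hIoi : IntegrableOn (fun σ => σ^3 * ‖u σ‖^2) (Ioi s0) := hint.mono_set Ioi_subset_Ici_self
  set A : ℝ → ℝ := fun T => ∫ σ in s0..T, σ^3 * ‖u σ‖^2 with hAdef
  set J : ℝ := ∫ σ in Ioi s0, σ^3 * ‖u σ‖^2 with hJdef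
  have h1 : Tendsto A atTop (𝓝 J) :=
    MeasureTheory.intervalIntegral_tendsto_integral_Ioi s0 hIoi tendsto_id
  have hhalf : Tendsto (fun T : ℝ => T/2) atTop atTop := tendsto_id.atTop_div_const two_pos
  have h2 : Tendsto (fun T => A (T/2)) atTop (𝓝 J) := h1.comp hhalf
  have hdiff : Tendsto (fun T => A T - A (T/2)) atTop (𝓝 0) := by
    simpa using h1.sub h2
  have hii : ∀ r1 r2, s0 ≤ r1 → s0 ≤ r2 →
      IntervalIntegrable (fun σ => σ^3 * ‖u σ‖^2) volume r1 r2 := by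
    intro r1 r2 h1' h2'
    apply (hcont1.mono ?_).intervalIntegrable
    intro σ hσ
    rcases le_total r1 r2 with h | h
    · rw [uIcc_of_le h] at hσ; exact le_trans h1' hσ.1
    · rw [uIcc_of_ge h] at hσ; exact le_trans h2' hσ.1
  have hbound : ∀ᶠ T in atTop, (T^2 * ‖u T‖)^2 ≤ (64/15) * (A T - A (T/2)) := by
    filter_upwards [eventually_ge_atTop (2*s0)] with T hT
    have hT2 : s0 ≤ T/2 := by linarith
    have hTs0 : s0 ≤ T := by linarith
    have hT0 : 0 < T := by linarith
    have hAT : A T - A (T/2) = ∫ σ in (T/2)..T, σ^3 * ‖u σ‖^2 :=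
      intervalIntegral.integral_interval_sub_left (hii s0 T le_rfl hTs0) (hii s0 (T/2) le_rfl hT2)
    have hcmp : (∫ σ in (T/2)..T, σ^3 * ‖u T‖^2) ≤ ∫ σ in (T/2)..T, σ^3 * ‖u σ‖^2 := by
      apply intervalIntegral.integral_mono_on (by linarith) ?_ (hii (T/2) T hT2 hTs0)
      · intro σ hσ
        have hσs0 : s0 ≤ σ := le_trans hT2 hσ.1
        have hσ0 : 0 < σ := lt_of_lt_of_le hs0 hσs0
        have := hanti σ hσs0 T hTs0 hσ.2
        have hn : 0 ≤ ‖u T‖ := norm_nonneg _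
        have key : 0 ≤ σ^3 * ((‖u σ‖ - ‖u T‖) * (‖u σ‖ + ‖u T‖)) :=
          mul_nonneg (by positivity)
            (mul_nonneg (sub_nonneg.mpr this) (add_nonneg (norm_nonneg _) hn))
        nlinarith [key]
      · exact ((continuous_pow 3).mul continuous_const).intervalIntegrable _ _
    have hval : (∫ σ in (T/2)..T, σ^3 * ‖u T‖^2) = (15/64) * T^4 * ‖u T‖^2 := by
      rw [intervalIntegral.integral_mul_const, integral_pow]
      ring
    rw [hval] at hcmp
    rw [hAT]
    nlinarith [hcmp, norm_nonneg (u T), sq_nonneg (T^2 * ‖u T‖)]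
  have hG : Tendsto (fun T => (T^2 * ‖u T‖)^2) atTop (𝓝 0) := by
    have hup : Tendsto (fun T => (64/15) * (A T - A (T/2))) atTop (𝓝 0) := by
      simpa using hdiff.const_mul (64/15)
    refine tendsto_of_tendsto_of_tendsto_of_le_of_le' tendsto_const_nhds hup ?_ hbound
    filter_upwards with T
    exact sq_nonneg _
  have hsqrt : Tendsto (fun T => Real.sqrt ((T^2 * ‖u T‖)^2)) atTop (𝓝 0) := by
    have := (Real.continuous_sqrt.tendsto 0).comp hG
    rwa [Real.sqrt_zero] at this
  refine hsqrt.congr' ?_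
  filter_upwards [eventually_ge_atTop 0] with T hT
  rw [Real.sqrt_sq (by positivity)]
end

section
/- Let α > 3, s0 > 0, and let x : [s0, ∞) → H be a twice continuously differentiable solution of the inertial system with implicit Hessian driven damping ẍ(s) + (α/s)·ẋ(s) + ∇f(x(s) + (s/(α−1))·ẋ(s)) = 0 for all s ≥ s0. Then f(x(s)) − inf_H f = o(1/s²) as s → ∞, i.e., s²·(f(x(s)) − inf_H f) → 0 as s → ∞. -/
open MeasureTheory Filter Set
open scoped Topology RealInnerProductSpace

theorem grad_ineq' {H : Type*} [NormedAddCommGroup H] [InnerProductSpace ℝ H] [CompleteSpace H]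
    {f : H → ℝ} {f' : H → H} (hconv : ConvexOn ℝ Set.univ f)
    (hgrad : ∀ x, HasGradientAt f (f' x) x) (u v : H) :
    f u + ⟪f' u, v - u⟫ ≤ f v := by
  set g : ℝ → ℝ := fun t => f (u + t • (v - u)) with hg
  have hgconv : ConvexOn ℝ Set.univ g := by
    have h : g = f ∘ (AffineMap.lineMap u v : ℝ →ᵃ[ℝ] H) := by
      funext t
      simp only [hg, Function.comp_apply]
      congr 1
      simp only [AffineMap.lineMap_apply, vadd_eq_add, vsub_eq_sub, smul_sub]
      abel
    rw [h]
    simpa using hconv.comp_affineMap (AffineMap.lineMap u v : ℝ →ᵃ[ℝ] H)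
  have hd : ∀ t : ℝ, HasDerivAt g ⟪f' (u + t • (v - u)), v - u⟫ t := by
    intro t
    have hc : HasDerivAt (fun t : ℝ => u + t • (v - u)) (v - u) t := by
      simpa using ((hasDerivAt_id t).smul_const (v - u)).const_add u
    have := (hasGradientAt_iff_hasFDerivAt.mp (hgrad (u + t • (v - u)))).comp_hasDerivAt t hc
    simp only [InnerProductSpace.toDual_apply_apply] at this
    exact this
  have h01 : (0:ℝ) < 1 := one_pos
  have hs := hgconv.le_slope_of_hasDerivAt (mem_univ 0) (mem_univ 1) h01
      (by simpa using hd 0)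
  rw [slope_def_field] at hs
  simp only [hg] at hs
  simp only [zero_smul, add_zero, one_smul] at hs
  have h1 : f (u + (v - u)) = f v := by congr 1; abel
  rw [h1] at hs
  have h2 : ⟪f' u, v - u⟫ ≤ f v - f u := by
    calc ⟪f' u, v - u⟫ ≤ (f v - f u) / (1 - 0) := hs
    _ = f v - f u := by ring
  linarith

/-- Implicit Hessian driven damping with `α > 3`: o(1/s²) convergence of the values. -/
theorem implicit_hessian_damping_value_rate
    {H : Type*} [NormedAddCommGroup H] [InnerProductSpace ℝ H] [CompleteSpace H]
    (f : H → ℝ) (f' : H → H)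
    (hconv : ConvexOn ℝ Set.univ f)
    (hgrad : ∀ x, HasGradientAt f (f' x) x)
    (hlip : ∀ s : Set H, Bornology.IsBounded s → ∃ K : NNReal, LipschitzOnWith K f' s)
    (hmin : ∃ z, ∀ y, f z ≤ f y)
    (α s0 : ℝ) (hα : 3 < α) (hs0 : 0 < s0)
    (x x' x'' : ℝ → H)
    (hx : ∀ s ∈ Ici s0, HasDerivAt x (x' s) s)
    (hx' : ∀ s ∈ Ici s0, HasDerivAt x' (x'' s) s)
    (hx''cont : ContinuousOn x'' (Ici s0))
    (heq : ∀ s ∈ Ici s0,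
      x'' s + (α / s) • x' s + f' (x s + (s / (α - 1)) • x' s) = 0) :
    Tendsto (fun s => s ^ 2 * (f (x s) - ⨅ v, f v)) atTop (nhds 0) := by
  obtain ⟨z, hz⟩ := hmin
  have hinf : (⨅ v, f v) = f z :=
    le_antisymm (ciInf_le ⟨f z, by rintro _ ⟨v, rfl⟩; exact hz v⟩ z) (le_ciInf hz)
  set A : ℝ := α - 1 with hA_def
  have hA2 : 2 < A := by simp [hA_def]; linarith
  have hA0 : 0 < A := by linarith
  -- positivity of s on the domain
  have hpos : ∀ s ∈ Ici s0, 0 < s := fun s hs => lt_of_lt_of_le hs0 hs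
  -- continuity of f and f'
  have hfc : Continuous f := by
    rw [continuous_iff_continuousAt]
    exact fun p => ((hgrad p).differentiableAt).continuousAt
  have hf'c : Continuous f' := by
    rw [continuous_iff_continuousAt]
    intro p
    obtain ⟨K, hK⟩ := hlip (Metric.ball p 1) Metric.isBounded_ball
    exact hK.continuousOn.continuousAt (Metric.ball_mem_nhds p one_pos)
  -- the auxiliary trajectory y and its derivative
  set y : ℝ → H := fun s => x s + (s / A) • x' s with hy_def
  set y' : ℝ → H := fun s => (-(s / A)) • f' (y s) with hy'_def
  have hyD : ∀ s ∈ Ici s0, HasDerivAt y (y' s) s := by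
    intro s hs
    have hsne : s ≠ 0 := (hpos s hs).ne'
    have h1 : HasDerivAt (fun t => (t / A) • x' t) ((s / A) • x'' s + (1 / A) • x' s) s := by
      convert ((hasDerivAt_id s).div_const A).smul (hx' s hs) using 1 <;> simp [funext_iff]
    have h2 := (hx s hs).add h1
    convert h2 using 1
    · funext t; rfl
    have hys : y s = x s + (s / A) • x' s := rfl
    have hfy : f' (y s) = -(x'' s + (α / s) • x' s) := by
      rw [hys]; exact eq_neg_of_add_eq_zero_right (heq s hs)
    show (-(s / A)) • f' (y s) = x' s + ((s / A) • x'' s + (1 / A) • x' s)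
    rw [hfy]
    match_scalars <;> field_simp <;> rw [hA_def] <;> ring
  -- continuity facts
  have hxc : ContinuousOn x (Ici s0) := fun s hs => (hx s hs).continuousAt.continuousWithinAt
  have hx'c : ContinuousOn x' (Ici s0) := fun s hs => (hx' s hs).continuousAt.continuousWithinAt
  have hyc : ContinuousOn y (Ici s0) := by
    rw [hy_def]
    exact hxc.add (((continuous_id.div_const A).continuousOn).smul hx'c)
  have hy'c : ContinuousOn y' (Ici s0) := by
    rw [hy'_def]
    exact ((continuous_id.div_const A).neg.continuousOn).smul (hf'c.comp_continuousOn hyc)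
  -- the function a
  set a : ℝ → ℝ := fun s => f (y s) - f z with ha_def
  have ha0 : ∀ s, 0 ≤ a s := fun s => sub_nonneg.2 (hz _)
  have hac : ContinuousOn a (Ici s0) := (hfc.comp_continuousOn hyc).sub continuousOn_const
  have haD : ∀ s ∈ Ici s0, HasDerivAt a (-(s / A) * ‖f' (y s)‖ ^ 2) s := by
    intro s hs
    have h1 := ((hasGradientAt_iff_hasFDerivAt.mp (hgrad (y s))).comp_hasDerivAt s
      (hyD s hs)).sub_const (f z)
    simp only [InnerProductSpace.toDual_apply_apply, hy'_def, real_inner_smul_right,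
      real_inner_self_eq_norm_sq] at h1
    exact h1
  have haAnti : AntitoneOn a (Ici s0) := by
    apply antitoneOn_of_deriv_nonpos (convex_Ici s0) hac
    · intro s hs
      rw [interior_Ici] at hs
      exact ((haD s (mem_Ici.2 (le_of_lt hs))).differentiableAt).differentiableWithinAt
    · intro s hs
      rw [interior_Ici] at hs
      rw [(haD s (mem_Ici.2 (le_of_lt hs))).deriv]
      have hsp : 0 < s := lt_trans hs0 hs
      have : 0 ≤ s / A := le_of_lt (div_pos hsp hA0)
      nlinarith [sq_nonneg ‖f' (y s)‖]
  -- the function b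
  set b : ℝ → ℝ := fun s => ⟪y s - z, y s - z⟫ with hb_def
  have hb0 : ∀ s, 0 ≤ b s := fun s => real_inner_self_nonneg
  have hbD : ∀ s ∈ Ici s0, HasDerivAt b (2 * ⟪y' s, y s - z⟫) s := by
    intro s hs
    have h1 := HasDerivAt.inner (𝕜 := ℝ) ((hyD s hs).sub_const z) ((hyD s hs).sub_const z)
    rw [show (2 * ⟪y' s, y s - z⟫) = ⟪y s - z, y' s⟫ + ⟪y' s, y s - z⟫ by rw [real_inner_comm]; ring]
    exact h1
  have hb'le : ∀ s ∈ Ici s0, 2 * ⟪y' s, y s - z⟫ ≤ -(2 * s / A) * a s := by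
    intro s hs
    have hsp : 0 < s := hpos s hs
    have hgi := grad_ineq' hconv hgrad (y s) z
    have h2 : a s ≤ ⟪f' (y s), y s - z⟫ := by
      have : ⟪f' (y s), z - y s⟫ = -⟪f' (y s), y s - z⟫ := by
        rw [← inner_neg_right]; congr 1; abel
      rw [this] at hgi
      simp only [ha_def]; linarith
    have h3 : ⟪y' s, y s - z⟫ = -(s / A) * ⟪f' (y s), y s - z⟫ := by
      rw [hy'_def]; simp [real_inner_smul_left]
    rw [h3]
    have hsA : 0 ≤ s / A := le_of_lt (div_pos hsp hA0)
    have h4 := mul_le_mul_of_nonneg_left h2 hsA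
    calc 2 * (-(s / A) * ⟪f' (y s), y s - z⟫)
        = -2 * (s / A * ⟪f' (y s), y s - z⟫) := by ring
      _ ≤ -2 * (s / A * a s) := by linarith
      _ = -(2 * s / A) * a s := by ring
  -- the integral function F
  set aM : ℝ → ℝ := fun t => max t s0 * a (max t s0) with haM_def
  have haMc : Continuous aM := by
    apply Continuous.mul (continuous_id.max continuous_const)
    exact hac.comp_continuous (continuous_id.max continuous_const) (fun t => le_max_right t s0)
  have haM0 : ∀ t, 0 ≤ aM t :=
    fun t => mul_nonneg (le_trans hs0.le (le_trans (le_max_right t s0) (le_refl _))) (ha0 _)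
  have haMeq : ∀ S ∈ Ici s0, ∀ t ∈ uIcc s0 S, aM t = t * a t := by
    intro S hS t ht
    rw [uIcc_of_le hS] at ht
    rw [haM_def]
    simp only
    rw [max_eq_left ht.1]
  set F : ℝ → ℝ := fun S => ∫ t in s0..S, aM t with hF_def
  have hFint : ∀ u v : ℝ, IntervalIntegrable aM volume u v :=
    fun u v => haMc.intervalIntegrable u v
  have hFmono : Monotone F := by
    intro u v huv
    have h1 : F v - F u = ∫ t in u..v, aM t := by
      rw [hF_def]; simp only
      rw [← intervalIntegral.integral_add_adjacent_intervals (hFint s0 u) (hFint u v)]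
      ring
    have h2 : 0 ≤ ∫ t in u..v, aM t := intervalIntegral.integral_nonneg huv (fun t _ => haM0 t)
    linarith
  have hb'c : ContinuousOn (fun s => 2 * ⟪y' s, y s - z⟫) (Ici s0) :=
    (continuousOn_const.mul (hy'c.inner (hyc.sub continuousOn_const)))
  have hFbdd : ∀ S ∈ Ici s0, F S ≤ A * b s0 / 2 := by
    intro S hS
    have hsub : uIcc s0 S ⊆ Ici s0 := by
      rw [uIcc_of_le hS]; exact Icc_subset_Ici_self
    have hbint : b S - b s0 = ∫ t in s0..S, 2 * ⟪y' t, y t - z⟫ :=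
      (intervalIntegral.integral_eq_sub_of_hasDerivAt
        (fun t ht => hbD t (hsub ht)) ((hb'c.mono hsub).intervalIntegrable)).symm
    have hFS : F S = ∫ t in s0..S, t * a t :=
      intervalIntegral.integral_congr (fun t ht => haMeq S hS t ht)
    have hintR : IntervalIntegrable (fun t => -(2 / A) * (t * a t)) volume s0 S :=
      (continuousOn_const.mul ((continuousOn_id.mul (hac.mono hsub)))).intervalIntegrable
    have hmono : (∫ t in s0..S, 2 * ⟪y' t, y t - z⟫) ≤ ∫ t in s0..S, -(2 / A) * (t * a t) := by
      apply intervalIntegral.integral_mono_on hS ((hb'c.mono hsub).intervalIntegrable) hintR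
      intro t ht
      have h1 := hb'le t ht.1
      calc 2 * ⟪y' t, y t - z⟫ ≤ -(2 * t / A) * a t := h1
        _ = -(2 / A) * (t * a t) := by ring
    have hkey : b S - b s0 ≤ -(2 / A) * F S := by
      calc b S - b s0 = ∫ t in s0..S, 2 * ⟪y' t, y t - z⟫ := hbint
        _ ≤ ∫ t in s0..S, -(2 / A) * (t * a t) := hmono
        _ = -(2 / A) * ∫ t in s0..S, t * a t := intervalIntegral.integral_const_mul _ _
        _ = -(2 / A) * F S := by rw [hFS]
    have hbS := hb0 S
    have h2 : (2 / A) * F S ≤ b s0 - b S := by linarith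
    have h3 : (2 / A) * F S ≤ b s0 := by linarith
    calc F S = (A / 2) * ((2 / A) * F S) := by field_simp [ne_of_gt hA0]
      _ ≤ (A / 2) * b s0 := by
          apply mul_le_mul_of_nonneg_left h3 (by linarith)
      _ = A * b s0 / 2 := by ring
-- F converges
  have hFbdd' : BddAbove (Set.range F) := by
    refine ⟨A * b s0 / 2, ?_⟩
    rintro _ ⟨S, rfl⟩
    rcases le_total s0 S with h | h
    · exact hFbdd S h
    · exact le_trans (hFmono h) (hFbdd s0 (le_refl s0))
  have hFlim : Tendsto F atTop (𝓝 (⨆ S, F S)) := tendsto_atTop_ciSup hFmono hFbdd'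
  have hFhalf : Tendsto (fun S => F (S / 2)) atTop (𝓝 (⨆ S, F S)) :=
    hFlim.comp (tendsto_id.atTop_div_const two_pos)
  have hdiff : Tendsto (fun S => F S - F (S / 2)) atTop (𝓝 0) := by
    have := hFlim.sub hFhalf
    simpa using this
  -- squeeze for S² * a S
  have hB : Tendsto (fun S => S ^ 2 * a S) atTop (𝓝 0) := by
    have hupper : ∀ S, 2 * s0 ≤ S → S ^ 2 * a S ≤ (8 / 3) * (F S - F (S / 2)) := by
      intro S hS
      have hS0 : s0 ≤ S := by linarith
      have hhalf : s0 ≤ S / 2 := by linarith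
      have hhS : S / 2 ≤ S := by linarith
      have hdiffint : F S - F (S / 2) = ∫ t in (S/2)..S, aM t := by
        rw [hF_def]; simp only
        rw [← intervalIntegral.integral_add_adjacent_intervals (hFint s0 (S/2)) (hFint (S/2) S)]
        ring
      have hsub2 : uIcc (S/2) S ⊆ Ici s0 := by
        rw [uIcc_of_le hhS]; exact fun t ht => le_trans hhalf ht.1
      have hcongr : (∫ t in (S/2)..S, aM t) = ∫ t in (S/2)..S, t * a t := by
        apply intervalIntegral.integral_congr
        intro t ht
        have := hsub2 ht
        rw [haM_def]; simp only
        rw [max_eq_left this]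
      have hlow : (∫ t in (S/2)..S, t * a S) ≤ ∫ t in (S/2)..S, t * a t := by
        apply intervalIntegral.integral_mono_on hhS
        · exact (continuousOn_id.mul continuousOn_const).intervalIntegrable
        · exact ((continuousOn_id.mul (hac.mono hsub2))).intervalIntegrable
        · intro t ht
          have ht' : t ∈ Ici s0 := le_trans hhalf ht.1
          have h1 : a S ≤ a t := haAnti ht' hS0 ht.2
          have h2 : 0 ≤ t := le_trans hs0.le ht'
          exact mul_le_mul_of_nonneg_left h1 h2
      have hval : (∫ t in (S/2)..S, t * a S) = (3 / 8) * S ^ 2 * a S := by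
        rw [intervalIntegral.integral_mul_const, integral_id]
        ring
      have : (3 / 8) * S ^ 2 * a S ≤ F S - F (S / 2) := by
        rw [hdiffint, hcongr]
        rw [← hval]
        exact hlow
      linarith
    apply squeeze_zero' (g := fun S => (8 / 3) * (F S - F (S / 2)))
    · filter_upwards [eventually_ge_atTop (0 : ℝ)] with S hS
      exact mul_nonneg (pow_nonneg hS 2) (ha0 S)
    · filter_upwards [eventually_ge_atTop (2 * s0)] with S hS
      exact hupper S hS
    · have := hdiff.const_mul (8 / 3 : ℝ)
      simpa using this
-- Part C : transfer to the trajectory x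
  set g : ℝ → ℝ := fun s => f (x s) - f z with hg_def
  have hg0 : ∀ s, 0 ≤ g s := fun s => sub_nonneg.2 (hz _)
  have hgc : ContinuousOn g (Ici s0) := (hfc.comp_continuousOn hxc).sub continuousOn_const
  have hgD : ∀ s ∈ Ici s0, HasDerivAt g ⟪f' (x s), x' s⟫ s := by
    intro s hs
    have h1 := ((hasGradientAt_iff_hasFDerivAt.mp (hgrad (x s))).comp_hasDerivAt s
      (hx s hs)).sub_const (f z)
    simp only [InnerProductSpace.toDual_apply_apply] at h1
    exact h1
  have hipc : ContinuousOn (fun s => ⟪f' (x s), x' s⟫) (Ici s0) :=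
    (hf'c.comp_continuousOn hxc).inner hx'c
  have hgd_le : ∀ s ∈ Ici s0, ⟪f' (x s), x' s⟫ ≤ (A / s) * (a s - g s) := by
    intro s hs
    have hsp := hpos s hs
    have hx'eq : x' s = (A / s) • (y s - x s) := by
      have h1 : y s - x s = (s / A) • x' s := by rw [hy_def]; simp
      rw [h1, smul_smul]
      have h2 : A / s * (s / A) = 1 := by
        field_simp
      rw [h2, one_smul]
    have hgi := grad_ineq' hconv hgrad (x s) (y s)
    have h2 : ⟪f' (x s), y s - x s⟫ ≤ a s - g s := by
      rw [hg_def, ha_def]; simp only; linarith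
    calc ⟪f' (x s), x' s⟫ = (A / s) * ⟪f' (x s), y s - x s⟫ := by
          rw [hx'eq, real_inner_smul_right]
      _ ≤ (A / s) * (a s - g s) :=
          mul_le_mul_of_nonneg_left h2 (le_of_lt (div_pos hA0 hsp))
  set GG : ℝ → ℝ := fun s => s ^ A * g s with hGG_def
  set D : ℝ → ℝ := fun s => (A * s ^ (A - 1)) * g s + s ^ A * ⟪f' (x s), x' s⟫ with hD_def
  have hGGD : ∀ s ∈ Ici s0, HasDerivAt GG (D s) s := by
    intro s hs
    have h1 : HasDerivAt (fun t : ℝ => t ^ A) (A * s ^ (A - 1)) s := by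
      simpa [mul_comm] using Real.hasDerivAt_rpow_const (x := s) (p := A)
        (Or.inl (hpos s hs).ne')
    exact h1.mul (hgD s hs)
  have hD_le : ∀ s ∈ Ici s0, D s ≤ (A * s ^ (A - 1)) * a s := by
    intro s hs
    have hsp := hpos s hs
    have h1 := hgd_le s hs
    have h2 : s ^ A * ⟪f' (x s), x' s⟫ ≤ s ^ A * ((A / s) * (a s - g s)) :=
      mul_le_mul_of_nonneg_left h1 (Real.rpow_nonneg hsp.le A)
    have hsplit : s ^ A = s ^ (A - 1) * s := by
      have h4 := Real.rpow_add hsp (A - 1) 1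
      rw [Real.rpow_one] at h4
      rw [← h4]
      congr 1
      ring
    have hcanc : s * (A / s) = A := by field_simp
    have h3 : s ^ A * ((A / s) * (a s - g s)) = (A * s ^ (A - 1)) * (a s - g s) := by
      calc s ^ A * ((A / s) * (a s - g s))
          = s ^ (A - 1) * ((s * (A / s)) * (a s - g s)) := by rw [hsplit]; ring
        _ = (A * s ^ (A - 1)) * (a s - g s) := by rw [hcanc]; ring
    rw [h3] at h2
    calc D s = (A * s ^ (A - 1)) * g s + s ^ A * ⟪f' (x s), x' s⟫ := rfl
      _ ≤ (A * s ^ (A - 1)) * g s + (A * s ^ (A - 1)) * (a s - g s) := by linarith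
      _ = (A * s ^ (A - 1)) * a s := by ring
  have hrpowc : ∀ r : ℝ, ContinuousOn (fun s : ℝ => s ^ r) (Ici s0) := fun r s hs =>
    (Real.continuousAt_rpow_const s r (Or.inl (hpos s hs).ne')).continuousWithinAt
  have hDc : ContinuousOn D (Ici s0) := by
    rw [hD_def]
    exact ((continuousOn_const.mul (hrpowc (A - 1))).mul hgc).add ((hrpowc A).mul hipc)
  -- final limit
  rw [hinf]
  rw [NormedAddCommGroup.tendsto_nhds_zero]
  intro ε hε
  set ε0 : ℝ := ε * (A - 2) / (4 * A) with hε0_def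
  have hε0 : 0 < ε0 := div_pos (mul_pos hε (by linarith)) (by linarith)
  have hBev : ∀ᶠ t in atTop, t ^ 2 * a t < ε0 := hB.eventually (eventually_lt_nhds hε0)
  obtain ⟨T0, hT0⟩ := eventually_atTop.mp (hBev.and (eventually_ge_atTop s0))
  set T : ℝ := max T0 s0 with hT_def
  have hTs0 : T ∈ Ici s0 := le_max_right T0 s0
  have hTbound : ∀ t, T ≤ t → t ^ 2 * a t ≤ ε0 := by
    intro t ht
    exact le_of_lt ((hT0 t (le_trans (le_max_left T0 s0) ht)).1)
  -- bound for GG S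
  have hGGbound : ∀ S, T ≤ S → GG S ≤ GG T + (A * ε0 / (A - 2)) * S ^ (A - 2) := by
    intro S hS
    have hSs0 : S ∈ Ici s0 := le_trans hTs0 hS
    have hsub : uIcc T S ⊆ Ici s0 := by
      rw [uIcc_of_le hS]; exact fun t ht => le_trans hTs0 ht.1
    have heqint : GG S - GG T = ∫ t in T..S, D t :=
      (intervalIntegral.integral_eq_sub_of_hasDerivAt
        (fun t ht => hGGD t (hsub ht)) ((hDc.mono hsub).intervalIntegrable)).symm
    have hub : ∀ t ∈ Icc T S, D t ≤ (A * ε0) * t ^ (A - 3) := by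
      intro t ht
      have ht' : t ∈ Ici s0 := le_trans hTs0 ht.1
      have htp : (0:ℝ) < t := hpos t ht'
      have h1 := hD_le t ht'
      have h2 : t ^ (A - 1) = t ^ (A - 3) * t ^ 2 := by
        rw [← Real.rpow_natCast t 2, ← Real.rpow_add htp]
        congr 1
        push_cast
        ring
      have h3 : t ^ 2 * a t ≤ ε0 := hTbound t ht.1
      calc D t ≤ (A * t ^ (A - 1)) * a t := h1
        _ = A * (t ^ (A - 3) * (t ^ 2 * a t)) := by rw [h2]; ring
        _ ≤ A * (t ^ (A - 3) * ε0) := by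
            apply mul_le_mul_of_nonneg_left _ (le_of_lt hA0)
            exact mul_le_mul_of_nonneg_left h3 (Real.rpow_nonneg htp.le _)
        _ = (A * ε0) * t ^ (A - 3) := by ring
    have hint2 : (∫ t in T..S, D t) ≤ ∫ t in T..S, (A * ε0) * t ^ (A - 3) := by
      apply intervalIntegral.integral_mono_on hS ((hDc.mono hsub).intervalIntegrable)
        ((continuousOn_const.mul ((hrpowc (A - 3)).mono hsub)).intervalIntegrable)
      exact hub
    have hval : (∫ t in T..S, (A * ε0) * t ^ (A - 3))
        = (A * ε0) * ((S ^ (A - 2) - T ^ (A - 2)) / (A - 2)) := by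
      rw [intervalIntegral.integral_const_mul, integral_rpow (Or.inl (by linarith : (-1:ℝ) < A - 3))]
      have h4 : A - 3 + 1 = A - 2 := by ring
      rw [h4]
    have hTpow : 0 ≤ T ^ (A - 2) := Real.rpow_nonneg (le_trans hs0.le hTs0) _
    have h5 : (A * ε0) * ((S ^ (A - 2) - T ^ (A - 2)) / (A - 2))
        ≤ (A * ε0 / (A - 2)) * S ^ (A - 2) := by
      have he : (A * ε0 / (A - 2)) * S ^ (A - 2) = A * ε0 * (S ^ (A - 2) / (A - 2)) := by ring
      rw [he]
      apply mul_le_mul_of_nonneg_left _ (le_of_lt (mul_pos hA0 hε0))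
      gcongr
      · linarith
    linarith [heqint, hint2, hval.le, h5, hval.ge]
  have hquarter : A * ε0 / (A - 2) = ε / 4 := by
    rw [hε0_def]
    have h1 : A - 2 ≠ 0 := by linarith
    field_simp [hA0.ne', h1]
  have hpowlim : Tendsto (fun S : ℝ => GG T * S ^ (2 - A)) atTop (𝓝 0) := by
    have h1 : Tendsto (fun S : ℝ => S ^ (-(A - 2))) atTop (𝓝 0) :=
      tendsto_rpow_neg_atTop (by linarith)
    have h2 : (fun S : ℝ => S ^ (2 - A)) = fun S : ℝ => S ^ (-(A - 2)) := by
      funext S; congr 1; ring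
    have h3 := h1.const_mul (GG T)
    rw [mul_zero] at h3
    simpa [h2] using h3
  have hev2 : ∀ᶠ S in atTop, GG T * S ^ (2 - A) < ε / 4 :=
    hpowlim.eventually (eventually_lt_nhds (by linarith))
  filter_upwards [eventually_ge_atTop T, eventually_ge_atTop (1:ℝ), hev2] with S hS1 hS2 hev2S
  show ‖S ^ 2 * g S‖ < ε
  have hSpos : (0:ℝ) < S := lt_of_lt_of_le one_pos hS2
  have hpow2 : S ^ (2 - A) * S ^ A = S ^ (2:ℕ) := by
    rw [← Real.rpow_natCast S 2, ← Real.rpow_add hSpos]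
    congr 1
    push_cast
    ring
  have hpow0 : S ^ (2 - A) * S ^ (A - 2) = 1 := by
    rw [← Real.rpow_add hSpos]
    norm_num
  have hkey : S ^ 2 * g S = S ^ (2 - A) * GG S := by
    rw [hGG_def]
    simp only
    rw [← mul_assoc, hpow2]
  have hb1 : S ^ (2 - A) * GG S ≤ S ^ (2 - A) * (GG T + (A * ε0 / (A - 2)) * S ^ (A - 2)) :=
    mul_le_mul_of_nonneg_left (hGGbound S hS1) (Real.rpow_nonneg hSpos.le _)
  have hb3 : S ^ 2 * g S ≤ GG T * S ^ (2 - A) + ε / 4 := by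
    rw [hkey]
    calc S ^ (2 - A) * GG S
        ≤ S ^ (2 - A) * (GG T + (A * ε0 / (A - 2)) * S ^ (A - 2)) := hb1
      _ = GG T * S ^ (2 - A) + (A * ε0 / (A - 2)) * (S ^ (2 - A) * S ^ (A - 2)) := by ring
      _ = GG T * S ^ (2 - A) + ε / 4 := by rw [hpow0, hquarter]; ring
  have hnn : 0 ≤ S ^ 2 * g S := mul_nonneg (sq_nonneg S) (hg0 S)
  have habs : ‖S ^ 2 * g S‖ = S ^ 2 * g S := by rw [Real.norm_eq_abs, abs_of_nonneg hnn]
  rw [habs]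
  exact hb3.trans_lt (by linarith)
end

section
/- Let f : H → ℝ be convex and continuously differentiable with ∇f Lipschitz continuous with constant L > 0 on all of H, and assume argmin_H f is nonempty. Let 0 < λ < 1/L, and let (t_k)_{k≥1} be a sequence of reals with t_1 = 1, t_k ≥ 1 for all k ≥ 1, and t_{k+1}² − t_{k+1} ≤ t_k² for all k ≥ 1. Set α_k = (t_k − 1)/t_{k+1}. Given x_0 = x_1 ∈ H, define for k ≥ 1 the Nesterov/Ravine iterations y_k = x_k + α_k(x_k − x_{k−1}) and x_{k+1} = y_k − λ∇f(y_k). Then there exists a constant C ≥ 0 such that for all k ≥ 1, f(y_k) − inf_H f ≤ C/t_{k+1}² and f(x_k) − inf_H f ≤ C/t_{k+1}². -/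
open MeasureTheory Filter Set intervalIntegral
open scoped Topology RealInnerProductSpace

section Helpers
variable {H : Type*} [NormedAddCommGroup H] [InnerProductSpace ℝ H] [CompleteSpace H]

lemma line_hasDerivAt (f : H → ℝ) (f' : H → H)
    (hgrad : ∀ x, HasGradientAt f (f' x) x) (x d : H) (s : ℝ) :
    HasDerivAt (fun τ : ℝ => f (x + τ • d)) ⟪f' (x + s • d), d⟫ s := by
  have h1 : HasDerivAt (fun τ : ℝ => x + τ • d) d s := by
    simpa using ((hasDerivAt_id s).smul_const d).const_add x
  have h2 := (hgrad (x + s • d)).hasFDerivAt.comp_hasDerivAt s h1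
  simp at h2
  exact h2

lemma descent_lemma (f : H → ℝ) (f' : H → H) (L : NNReal)
    (hgrad : ∀ x, HasGradientAt f (f' x) x) (hlip : LipschitzWith L f')
    (x u : H) : f u ≤ f x + ⟪f' x, u - x⟫ + (L : ℝ) / 2 * ‖u - x‖ ^ 2 := by
  set d := u - x with hd
  have hderiv : ∀ s ∈ Set.uIcc (0:ℝ) 1,
      HasDerivAt (fun τ : ℝ => f (x + τ • d)) ⟪f' (x + s • d), d⟫ s :=
    fun s _ => line_hasDerivAt f f' hgrad x d s
  have hcont : Continuous fun s : ℝ => ⟪f' (x + s • d), d⟫ := by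
    exact (hlip.continuous.comp (by continuity)).inner continuous_const
  have hint := integral_eq_sub_of_hasDerivAt hderiv (hcont.intervalIntegrable 0 1)
  have h0 : x + (0:ℝ) • d = x := by simp
  have h1 : x + (1:ℝ) • d = u := by simp [hd]
  rw [h0, h1] at hint
  have hFcont : Continuous fun s : ℝ => ⟪f' x, d⟫ + s * ((L:ℝ) * ‖d‖ ^ 2) := by continuity
  have hmono : ∫ s in (0:ℝ)..1, ⟪f' (x + s • d), d⟫
      ≤ ∫ s in (0:ℝ)..1, (⟪f' x, d⟫ + s * ((L:ℝ) * ‖d‖ ^ 2)) := by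
    apply integral_mono_on (by norm_num) (hcont.intervalIntegrable 0 1)
      (hFcont.intervalIntegrable 0 1)
    intro s hs
    have hs0 : 0 ≤ s := hs.1
    have key : ⟪f' (x + s • d) - f' x, d⟫ ≤ s * ((L:ℝ) * ‖d‖ ^ 2) := by
      calc ⟪f' (x + s • d) - f' x, d⟫ ≤ ‖f' (x + s • d) - f' x‖ * ‖d‖ :=
            real_inner_le_norm _ _
        _ ≤ ((L:ℝ) * ‖(x + s • d) - x‖) * ‖d‖ := by
            gcongr
            have := hlip.dist_le_mul (x + s • d) x
            simpa [dist_eq_norm] using this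
        _ = s * ((L:ℝ) * ‖d‖ ^ 2) := by
            simp [norm_smul, abs_of_nonneg hs0]; ring
    have heq : ⟪f' (x + s • d), d⟫ = ⟪f' x, d⟫ + ⟪f' (x + s • d) - f' x, d⟫ := by
      rw [inner_sub_left]; ring
    linarith
  have hval : ∫ s in (0:ℝ)..1, (⟪f' x, d⟫ + s * ((L:ℝ) * ‖d‖ ^ 2))
      = ⟪f' x, d⟫ + (L:ℝ) / 2 * ‖d‖ ^ 2 := by
    rw [integral_add intervalIntegrable_const
      (Continuous.intervalIntegrable (by continuity) 0 1)]
    rw [intervalIntegral.integral_mul_const, integral_id, intervalIntegral.integral_const]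
    norm_num
    ring
  rw [hint, hval] at hmono
  linarith

lemma convex_grad_ineq (f : H → ℝ) (f' : H → H) (hconv : ConvexOn ℝ Set.univ f)
    (hgrad : ∀ x, HasGradientAt f (f' x) x) (x u : H) :
    f x + ⟪f' x, u - x⟫ ≤ f u := by
  set d := u - x with hd
  have hder := line_hasDerivAt f f' hgrad x d 0
  rw [hasDerivAt_iff_tendsto_slope] at hder
  have h0 : x + (0:ℝ) • d = x := by simp
  rw [h0] at hder
  have hder' : Tendsto (slope (fun τ : ℝ => f (x + τ • d)) 0) (𝓝[>] 0) (𝓝 ⟪f' x, d⟫) :=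
    hder.mono_left (nhdsWithin_mono _ (fun τ hτ => ne_of_gt hτ))
  have hbound : ∀ᶠ τ in 𝓝[>] (0:ℝ), slope (fun τ : ℝ => f (x + τ • d)) 0 τ ≤ f u - f x := by
    filter_upwards [Ioo_mem_nhdsGT_of_mem (by norm_num : (0:ℝ) ∈ Set.Ico 0 1)] with τ hτ
    have hτ0 : 0 < τ := hτ.1
    have hτ1 : τ < 1 := hτ.2
    have hcomb : x + τ • d = (1 - τ) • x + τ • u := by
      rw [hd]; module
    have hcvx := hconv.2 (Set.mem_univ x) (Set.mem_univ u)
      (by linarith : (0:ℝ) ≤ 1 - τ) (le_of_lt hτ0) (by ring)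
    rw [← hcomb] at hcvx
    rw [slope_def_field]
    simp only [sub_zero, h0]
    rw [div_le_iff₀ hτ0]
    simp only [smul_eq_mul] at hcvx
    nlinarith
  have := le_of_tendsto hder' hbound
  linarith

omit [CompleteSpace H] in
lemma key_identity (τ : ℝ) (p a c : H) :
    τ * (τ - 1) * ‖p - a‖^2 + τ * ‖p - c‖^2
      = ‖τ • p - (τ - 1) • a - c‖^2 + (τ - 1) * ‖a - c‖^2 := by
  have h1 : τ • p - (τ - 1) • a - c = τ • (p - a) + (a - c) := by module
  have h2 : p - c = (p - a) + (a - c) := by abel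
  rw [h1, h2, norm_add_sq_real, norm_add_sq_real]
  have h3 : ‖τ • (p - a)‖^2 = τ^2 * ‖p - a‖^2 := by
    rw [norm_smul, mul_pow, Real.norm_eq_abs, sq_abs]
  rw [h3, real_inner_smul_left]
  ring

end Helpers

set_option maxHeartbeats 2000000 in
/-- Fast convergence of the function values along the Ravine sequence `(y k)` and the
Nesterov sequence `(x k)`. -/
theorem nesterov_ravine_fast_convergence
    {H : Type*} [NormedAddCommGroup H] [InnerProductSpace ℝ H] [CompleteSpace H]
    (f : H → ℝ) (f' : H → H) (L : NNReal) (hL : 0 < (L : ℝ))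
    (hconv : ConvexOn ℝ Set.univ f)
    (hgrad : ∀ x, HasGradientAt f (f' x) x)
    (hlip : LipschitzWith L f')
    (hmin : ∃ z, ∀ y, f z ≤ f y)
    (lam : ℝ) (hlam0 : 0 < lam) (hlam : lam < 1 / (L : ℝ))
    (t : ℕ → ℝ) (ht1 : t 1 = 1) (htge : ∀ k, 1 ≤ k → 1 ≤ t k)
    (htrec : ∀ k, 1 ≤ k → (t (k + 1)) ^ 2 - t (k + 1) ≤ (t k) ^ 2)
    (x y : ℕ → H) (hx01 : x 0 = x 1)
    (hy : ∀ k, 1 ≤ k → y k = x k + ((t k - 1) / t (k + 1)) • (x k - x (k - 1)))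
    (hxk : ∀ k, 1 ≤ k → x (k + 1) = y k - lam • f' (y k)) :
    ∃ C : ℝ, 0 ≤ C ∧ ∀ k, 1 ≤ k →
      f (y k) - (⨅ v, f v) ≤ C / (t (k + 1)) ^ 2 ∧
      f (x k) - (⨅ v, f v) ≤ C / (t (k + 1)) ^ 2 := by
  obtain ⟨z, hz⟩ := hmin
  have hinf : (⨅ v, f v) = f z :=
    le_antisymm (ciInf_le ⟨f z, by rintro _ ⟨v, rfl⟩; exact hz v⟩ z) (le_ciInf hz)
  have hlamL : lam * (L : ℝ) < 1 := by
    rw [lt_div_iff₀ hL] at hlam; linarith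
  have hδ0 : ∀ k, 0 ≤ f (x k) - f z := fun k => sub_nonneg.2 (hz _)
  -- positivity of t
  have htpos : ∀ k, 1 ≤ k → (0:ℝ) < t k := fun k hk => lt_of_lt_of_le one_pos (htge k hk)
  -- step (c): the key one-step inequality
  have hstep : ∀ k, 1 ≤ k → ∀ v : H,
      f (x (k+1)) ≤ f v + (1/(2*lam)) * (‖y k - v‖^2 - ‖x (k+1) - v‖^2) := by
    intro k hk v
    have hx1 : x (k+1) = y k - lam • f' (y k) := hxk k hk
    have hdesc := descent_lemma f f' L hgrad hlip (y k) (x (k+1))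
    have hsub : x (k+1) - y k = -(lam • f' (y k)) := by rw [hx1]; abel
    rw [hsub] at hdesc
    have e1 : ⟪f' (y k), -(lam • f' (y k))⟫ = -(lam * ‖f' (y k)‖^2) := by
      rw [inner_neg_right, real_inner_smul_right, real_inner_self_eq_norm_sq]
    have e2 : ‖-(lam • f' (y k))‖^2 = lam^2 * ‖f' (y k)‖^2 := by
      rw [norm_neg, norm_smul, mul_pow, Real.norm_eq_abs, sq_abs]
    rw [e1, e2] at hdesc
    have hA : f (x (k+1)) ≤ f (y k) - (lam/2) * ‖f' (y k)‖^2 := by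
      nlinarith [norm_nonneg (f' (y k)), sq_nonneg ‖f' (y k)‖]
    have hB : f (y k) ≤ f v + ⟪f' (y k), y k - v⟫ := by
      have h := convex_grad_ineq f f' hconv hgrad (y k) v
      have h2 : ⟪f' (y k), v - y k⟫ = -⟪f' (y k), y k - v⟫ := by
        rw [← inner_neg_right]; congr 1; abel
      linarith [h, h2.ge]
    have hexp : ‖x (k+1) - v‖^2
        = ‖y k - v‖^2 - 2*lam*⟪f' (y k), y k - v⟫ + lam^2 * ‖f' (y k)‖^2 := by
      have h3 : x (k+1) - v = (y k - v) - lam • f' (y k) := by rw [hx1]; abel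
      rw [h3, norm_sub_sq_real, real_inner_smul_right, norm_smul, mul_pow,
        Real.norm_eq_abs, sq_abs, real_inner_comm]
      ring
    rw [hexp]
    have hid : f v + 1/(2*lam) * (‖y k - v‖^2
        - (‖y k - v‖^2 - 2*lam*⟪f' (y k), y k - v⟫ + lam^2*‖f' (y k)‖^2))
        = f v + ⟪f' (y k), y k - v⟫ - lam/2 * ‖f' (y k)‖^2 := by
      field_simp
      ring
    rw [hid]
    linarith
  -- the Lyapunov sequence
  set u : ℕ → H := fun k => t (k+1) • y k - (t (k+1) - 1) • x k - z with hu
  set E : ℕ → ℝ := fun k => (t k)^2 * (f (x k) - f z) + (1/(2*lam)) * ‖u k‖^2 with hE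
  have hc : (0:ℝ) < 1/(2*lam) := by positivity
  -- formula for u (k+1)
  have hW : ∀ k, 1 ≤ k → u (k+1) = t (k+1) • x (k+1) - (t (k+1) - 1) • x k - z := by
    intro k hk
    have ht2 : (0:ℝ) < t (k+2) := htpos (k+2) (by omega)
    have hyk1 := hy (k+1) (by omega)
    simp only [Nat.add_sub_cancel] at hyk1
    have hcc : t (k+2) * ((t (k+1) - 1)/ t (k+2)) = t (k+1) - 1 := by
      field_simp
    show t (k+1+1) • y (k+1) - (t (k+1+1) - 1) • x (k+1) - z = _
    rw [hyk1, smul_add, smul_smul]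
    show t (k+2) • x (k+1) + (t (k+2) * ((t (k+1) - 1)/ t (k+2))) • (x (k+1) - x k)
      - (t (k+2) - 1) • x (k+1) - z = _
    rw [hcc]
    module
  -- one-step decrease of the energy
  have hEdec : ∀ k, 1 ≤ k → E (k+1) ≤ E k := by
    intro k hk
    have hτ1 : 1 ≤ t (k+1) := htge (k+1) (by omega)
    have hτ0 : (0:ℝ) ≤ t (k+1) := by linarith
    have hτm : (0:ℝ) ≤ t (k+1) * (t (k+1) - 1) := mul_nonneg hτ0 (by linarith)
    have hP := hstep k hk (x k)
    have hQ := hstep k hk z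
    have hid1 := key_identity (t (k+1)) (y k) (x k) z
    have hid2 := key_identity (t (k+1)) (x (k+1)) (x k) z
    have huk : t (k+1) • y k - (t (k+1) - 1) • x k - z = u k := rfl
    have huk1 : t (k+1) • x (k+1) - (t (k+1) - 1) • x k - z = u (k+1) := (hW k hk).symm
    rw [huk] at hid1
    rw [huk1] at hid2
    have h1 := mul_le_mul_of_nonneg_left hP hτm
    have h2 := mul_le_mul_of_nonneg_left hQ hτ0
    have h3 : ((t (k+1))^2 - t (k+1)) * (f (x k) - f z) ≤ (t k)^2 * (f (x k) - f z) :=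
      mul_le_mul_of_nonneg_right (htrec k hk) (hδ0 k)
    have hid1' := congrArg (fun w => (1/(2*lam)) * w) hid1
    have hid2' := congrArg (fun w => (1/(2*lam)) * w) hid2
    show (t (k+1))^2 * (f (x (k+1)) - f z) + (1/(2*lam)) * ‖u (k+1)‖^2
      ≤ (t k)^2 * (f (x k) - f z) + (1/(2*lam)) * ‖u k‖^2
    linarith [h1, h2, h3, hid1', hid2']
  -- E is bounded by E 1
  have hEmono : ∀ k, 1 ≤ k → E k ≤ E 1 := by
    intro k hk
    induction k, hk using Nat.le_induction with
    | base => exact le_refl _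
    | succ n hn ih => exact le_trans (hEdec n hn) ih
  -- u 1 and E 1
  have hy1 : y 1 = x 1 := by
    have := hy 1 (le_refl 1)
    rw [ht1] at this
    simpa using this
  have hu1 : u 1 = x 1 - z := by
    show t 2 • y 1 - (t 2 - 1) • x 1 - z = x 1 - z
    rw [hy1]
    module
  have hE1 : 0 ≤ E 1 := by
    show 0 ≤ (t 1)^2 * (f (x 1) - f z) + (1/(2*lam)) * ‖u 1‖^2
    have := hδ0 1
    positivity
  -- bound on ‖u k‖
  set M : ℝ := Real.sqrt (2*lam*(E 1)) with hM
  have hM0 : 0 ≤ M := Real.sqrt_nonneg _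
  have hMsq : M^2 = 2*lam*(E 1) := Real.sq_sqrt (by positivity)
  have hUb : ∀ k, 1 ≤ k → ‖u k‖ ≤ M := by
    intro k hk
    have h1 : (1/(2*lam)) * ‖u k‖^2 ≤ E k := by
      show _ ≤ (t k)^2 * (f (x k) - f z) + (1/(2*lam)) * ‖u k‖^2
      have h2 : 0 ≤ (t k)^2 * (f (x k) - f z) := mul_nonneg (sq_nonneg _) (hδ0 k)
      linarith
    have h2 : ‖u k‖^2 ≤ 2*lam*(E 1) := by
      have := le_trans h1 (hEmono k hk)
      have h4 : ‖u k‖^2 = (2*lam) * ((1/(2*lam)) * ‖u k‖^2) := by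
        field_simp
      rw [h4]
      have : (1/(2*lam)) * ‖u k‖^2 ≤ E 1 := le_trans h1 (hEmono k hk)
      nlinarith
    calc ‖u k‖ = Real.sqrt (‖u k‖^2) := (Real.sqrt_sq (norm_nonneg _)).symm
      _ ≤ M := Real.sqrt_le_sqrt h2
  -- bound on ‖x k - z‖
  set R : ℝ := max M ‖x 1 - z‖ with hR
  have hR0 : 0 ≤ R := le_trans hM0 (le_max_left _ _)
  have hMR : M ≤ R := le_max_left _ _
  have hXb : ∀ k, 1 ≤ k → ‖x k - z‖ ≤ R := by
    intro k hk
    induction k, hk using Nat.le_induction with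
    | base => exact le_max_right _ _
    | succ n hn ih =>
      have hτ : (0:ℝ) < t (n+1) := htpos (n+1) (by omega)
      have hτ1 : 1 ≤ t (n+1) := htge (n+1) (by omega)
      have hdecomp : x (n+1) - z
          = (1/(t (n+1))) • u (n+1) + ((t (n+1) - 1)/(t (n+1))) • (x n - z) := by
        rw [hW n hn]
        match_scalars <;> (field_simp; try ring)
      rw [hdecomp]
      calc ‖(1/(t (n+1))) • u (n+1) + ((t (n+1) - 1)/(t (n+1))) • (x n - z)‖
          ≤ ‖(1/(t (n+1))) • u (n+1)‖ + ‖((t (n+1) - 1)/(t (n+1))) • (x n - z)‖ :=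
            norm_add_le _ _
        _ = (1/(t (n+1))) * ‖u (n+1)‖ + ((t (n+1) - 1)/(t (n+1))) * ‖x n - z‖ := by
            rw [norm_smul, norm_smul, Real.norm_eq_abs, Real.norm_eq_abs,
              abs_of_pos (by positivity), abs_of_nonneg (div_nonneg (by linarith) (le_of_lt hτ))]
        _ ≤ (1/(t (n+1))) * M + ((t (n+1) - 1)/(t (n+1))) * R := by
            have h5 : 0 ≤ (t (n+1) - 1)/(t (n+1)) := div_nonneg (by linarith) (le_of_lt hτ)
            have h6 : (0:ℝ) ≤ 1/(t (n+1)) := by positivity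
            have h7 := hUb (n+1) (by omega : 1 ≤ n+1)
            exact add_le_add (mul_le_mul_of_nonneg_left h7 h6)
              (mul_le_mul_of_nonneg_left ih h5)
        _ ≤ R := by
            rw [div_mul_eq_mul_div, div_mul_eq_mul_div, ← add_div, div_le_iff₀ hτ]
            nlinarith
  -- difference bounds
  have hxdiff : ∀ k, 1 ≤ k → t (k+1) * ‖x (k+1) - x k‖ ≤ M + R := by
    intro k hk
    have h1 : t (k+1) • (x (k+1) - x k) = u (k+1) - (x k - z) := by
      rw [hW k hk]; module
    have h2 : ‖t (k+1) • (x (k+1) - x k)‖ = t (k+1) * ‖x (k+1) - x k‖ := by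
      rw [norm_smul, Real.norm_eq_abs, abs_of_pos (htpos (k+1) (by omega))]
    rw [← h2, h1]
    calc ‖u (k+1) - (x k - z)‖ ≤ ‖u (k+1)‖ + ‖x k - z‖ := norm_sub_le _ _
      _ ≤ M + R := add_le_add (hUb (k+1) (by omega)) (hXb k hk)
  have hydiff : ∀ k, 1 ≤ k → t (k+1) * ‖y k - x k‖ ≤ M + R := by
    intro k hk
    have h1 : t (k+1) • (y k - x k) = u k - (x k - z) := by
      show _ = (t (k+1) • y k - (t (k+1) - 1) • x k - z) - (x k - z)
      module
    have h2 : ‖t (k+1) • (y k - x k)‖ = t (k+1) * ‖y k - x k‖ := by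
      rw [norm_smul, Real.norm_eq_abs, abs_of_pos (htpos (k+1) (by omega))]
    rw [← h2, h1]
    calc ‖u k - (x k - z)‖ ≤ ‖u k‖ + ‖x k - z‖ := norm_sub_le _ _
      _ ≤ M + R := add_le_add (hUb k hk) (hXb k hk)
  have hgb : ∀ k, 1 ≤ k → lam * t (k+1) * ‖f' (y k)‖ ≤ 2*(M + R) := by
    intro k hk
    have h1 : lam • f' (y k) = y k - x (k+1) := by rw [hxk k hk]; abel
    have h2 : lam * ‖f' (y k)‖ = ‖y k - x (k+1)‖ := by
      rw [← h1, norm_smul, Real.norm_eq_abs, abs_of_pos hlam0]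
    have h3 : ‖y k - x (k+1)‖ ≤ ‖y k - x k‖ + ‖x (k+1) - x k‖ := by
      calc ‖y k - x (k+1)‖ = ‖(y k - x k) - (x (k+1) - x k)‖ := by congr 1; abel
        _ ≤ ‖y k - x k‖ + ‖x (k+1) - x k‖ := norm_sub_le _ _
    have hτ := htpos (k+1) (by omega : 1 ≤ k+1)
    have h4 := hxdiff k hk
    have h5 := hydiff k hk
    calc lam * t (k+1) * ‖f' (y k)‖ = t (k+1) * (lam * ‖f' (y k)‖) := by ring
      _ = t (k+1) * ‖y k - x (k+1)‖ := by rw [h2]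
      _ ≤ t (k+1) * (‖y k - x k‖ + ‖x (k+1) - x k‖) :=
          mul_le_mul_of_nonneg_left h3 (le_of_lt hτ)
      _ = t (k+1) * ‖y k - x k‖ + t (k+1) * ‖x (k+1) - x k‖ := by ring
      _ ≤ 2*(M+R) := by linarith
  -- bound for f (y k)
  have hyb : ∀ k, 1 ≤ k →
      f (y k) - f z ≤ (f (x k) - f z) + 2*(M+R)^2/(lam * (t (k+1))^2) := by
    intro k hk
    have h1 := convex_grad_ineq f f' hconv hgrad (y k) (x k)
    have h2 : f (y k) - f (x k) ≤ ‖f' (y k)‖ * ‖y k - x k‖ := by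
      have h3 : ⟪f' (y k), x k - y k⟫ = -⟪f' (y k), y k - x k⟫ := by
        rw [← inner_neg_right]; congr 1; abel
      have h4 := real_inner_le_norm (f' (y k)) (y k - x k)
      linarith
    have hτ := htpos (k+1) (by omega : 1 ≤ k+1)
    have h5 : ‖f' (y k)‖ * ‖y k - x k‖ ≤ 2*(M+R)^2/(lam * (t (k+1))^2) := by
      have hA := hgb k hk
      have hB := hydiff k hk
      have hyn : (0:ℝ) ≤ ‖y k - x k‖ := norm_nonneg _
      have hMR0 : (0:ℝ) ≤ M + R := by linarith
      rw [le_div_iff₀ (by positivity : (0:ℝ) < lam * (t (k+1))^2)]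
      nlinarith [mul_le_mul hA hB (mul_nonneg (le_of_lt hτ) hyn) (by linarith : (0:ℝ) ≤ 2*(M+R))]
    linarith
  -- bound for f (x k)
  have hδb : ∀ k, 1 ≤ k → f (x k) - f z ≤ E 1 / (t k)^2 := by
    intro k hk
    have hτ := htpos k hk
    have h1 : (t k)^2 * (f (x k) - f z) ≤ E 1 := by
      have h2 : (t k)^2 * (f (x k) - f z) ≤ E k := by
        show _ ≤ (t k)^2 * (f (x k) - f z) + (1/(2*lam)) * ‖u k‖^2
        have := mul_nonneg hc.le (sq_nonneg ‖u k‖)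
        linarith
      exact le_trans h2 (hEmono k hk)
    rw [le_div_iff₀ (by positivity)]
    linarith
  have ht3 : ∀ k, 1 ≤ k → (t (k+1))^2 ≤ 3*(t k)^2 := by
    intro k hk
    have h1 := htrec k hk
    have h2 := htge k hk
    have h3 := htge (k+1) (by omega : 1 ≤ k+1)
    nlinarith [sq_nonneg (t (k+1) - 1), mul_nonneg (by linarith : (0:ℝ) ≤ t k - 1)
      (by linarith : (0:ℝ) ≤ t k + 1)]
  have hC0 : (0:ℝ) ≤ 3*(E 1) + 2*(M+R)^2/lam :=
    add_nonneg (by linarith) (div_nonneg (by positivity) hlam0.le)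
  refine ⟨3*(E 1) + 2*(M+R)^2/lam, hC0, ?_⟩
  intro k hk
  have hτ := htpos (k+1) (by omega : 1 ≤ k+1)
  have hτsq : (0:ℝ) < (t (k+1))^2 := by positivity
  have htk := htpos k hk
  rw [hinf]
  have hxbd : f (x k) - f z ≤ 3*(E 1)/(t (k+1))^2 := by
    have h1 := hδb k hk
    have h2 := ht3 k hk
    calc f (x k) - f z ≤ E 1 / (t k)^2 := h1
      _ ≤ 3*(E 1)/(t (k+1))^2 := by
        rw [div_le_div_iff₀ (by positivity) hτsq]
        nlinarith [mul_le_mul_of_nonneg_left h2 hE1]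
  have hCsplit : (3*(E 1) + 2*(M+R)^2/lam)/(t (k+1))^2
      = 3*(E 1)/(t (k+1))^2 + (2*(M+R)^2/lam)/(t (k+1))^2 := by ring
  have hsecond : 2*(M+R)^2/(lam * (t (k+1))^2) = (2*(M+R)^2/lam)/(t (k+1))^2 := by
    rw [div_div]
  constructor
  · have h1 := hyb k hk
    rw [hsecond] at h1
    rw [hCsplit]
    linarith
  · rw [hCsplit]
    have h2 : (0:ℝ) ≤ (2*(M+R)^2/lam)/(t (k+1))^2 :=
      div_nonneg (div_nonneg (by positivity) hlam0.le) hτsq.le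
    linarith
end

section
/- Let α > 1, s0 > 0, and let y : [s0, ∞) → H be a twice continuously differentiable curve such that the map s ↦ ∇f(y(s)) is differentiable on [s0, ∞) and y solves the inertial system with explicit Hessian driven damping ÿ(s) + (α/s)·ẏ(s) + (s/(α+1))·(d/ds)(∇f(y(s))) + ∇f(y(s)) = 0 for all s ≥ s0. Then: (i) ∫_{s0}^∞ s‖ẏ(s)‖² ds < ∞; (ii) ∫_{s0}^∞ s·(f(y(s)) − inf_H f) ds < ∞; (iii) ∫_{s0}^∞ s³‖∇f(y(s))‖² ds < ∞; (iv) f(y(s)) − inf_H f = o(1/s²) as s → ∞; (v) y(s) converges weakly as s → ∞ to some point of S = argmin_H f, i.e., there exists x* ∈ S such that ⟨y(s) − x*, v⟩ → 0 as s → ∞ for every v ∈ H. -/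
open MeasureTheory Filter Set
open scoped Topology RealInnerProductSpace

section HessianAux

/-- antitone from pointwise derivative nonpositive -/
private lemma aux_antitoneOn {a : ℝ} {F F' : ℝ → ℝ}
    (hc : ContinuousOn F (Ici a))
    (hd : ∀ s ∈ Ioi a, HasDerivAt F (F' s) s)
    (h0 : ∀ s ∈ Ioi a, F' s ≤ 0) : AntitoneOn F (Ici a) := by
  apply antitoneOn_of_deriv_nonpos (convex_Ici a) hc
  · intro x hx
    rw [interior_Ici] at hx
    exact (hd x hx).differentiableAt.differentiableWithinAt
  · intro x hx
    rw [interior_Ici] at hx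
    rw [(hd x hx).deriv]
    exact h0 x hx

/-- continuity of the interval-integral primitive on `Ici a` for integrands
continuous on `Ici a`. -/
private lemma aux_primitive_continuousOn {a : ℝ} {B : ℝ → ℝ} (hB : ContinuousOn B (Ici a)) :
    ContinuousOn (fun s => ∫ t in a..s, B t) (Ici a) := by
  intro x hx
  have h1 : ContinuousOn (fun s => ∫ t in a..s, B t) (uIcc a (x + 1)) := by
    apply intervalIntegral.continuousOn_primitive_interval'
    · apply ContinuousOn.intervalIntegrable
      apply hB.mono
      rw [uIcc_of_le (by linarith [mem_Ici.mp hx])]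
      exact Icc_subset_Ici_self
    · rw [uIcc_of_le (by linarith [mem_Ici.mp hx])]
      exact ⟨le_refl a, by linarith [mem_Ici.mp hx]⟩
  have h2 : ContinuousWithinAt (fun s => ∫ t in a..s, B t) (Icc a (x+1)) x := by
    rw [uIcc_of_le (by linarith [mem_Ici.mp hx] : a ≤ x + 1)] at h1
    exact h1 x ⟨hx, by linarith⟩
  apply h2.mono_of_mem_nhdsWithin
  have : Ici a ∩ Iic (x+1) ∈ 𝓝[Ici a] x :=
    inter_mem self_mem_nhdsWithin (nhdsWithin_le_nhds (Iic_mem_nhds (by linarith)))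
  exact Filter.mem_of_superset this (fun t ht => ⟨ht.1, ht.2⟩)

/-- derivative of primitive at interior points -/
private lemma aux_primitive_hasDerivAt {a : ℝ} {B : ℝ → ℝ} (hB : ContinuousOn B (Ici a))
    {x : ℝ} (hx : x ∈ Ioi a) :
    HasDerivAt (fun s => ∫ t in a..s, B t) (B x) x := by
  have hxa : a ≤ x := le_of_lt hx
  have hca : ContinuousAt B x := hB.continuousAt (Ici_mem_nhds hx)
  apply intervalIntegral.integral_hasDerivAt_right
  · apply ContinuousOn.intervalIntegrable
    apply hB.mono
    rw [uIcc_of_le hxa]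
    exact Icc_subset_Ici_self
  · exact (hB.mono Ioi_subset_Ici_self).stronglyMeasurableAtFilter isOpen_Ioi x hx
  · exact hca

/-- The key integral-inequality workhorse: `A + ∫ B` is antitone. -/
private lemma aux_key {a : ℝ} {A A' B : ℝ → ℝ}
    (hA : ∀ s ∈ Ici a, HasDerivAt A (A' s) s)
    (hB : ContinuousOn B (Ici a))
    (hle : ∀ s ∈ Ici a, A' s + B s ≤ 0) :
    AntitoneOn (fun s => A s + ∫ t in a..s, B t) (Ici a) := by
  apply aux_antitoneOn
  · have hAc : ContinuousOn A (Ici a) := fun x hx => (hA x hx).continuousAt.continuousWithinAt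
    exact hAc.add (aux_primitive_continuousOn hB)
  · intro s hs
    exact (hA s (Ioi_subset_Ici_self hs)).add (aux_primitive_hasDerivAt hB hs)
  · intro s hs
    exact hle s (Ioi_subset_Ici_self hs)

/-- nonneg continuous function on `Ici a` with bounded primitive is integrable -/
private lemma aux_integrableOn_of_bounded_primitive {a K : ℝ} {B : ℝ → ℝ}
    (hB : ContinuousOn B (Ici a)) (h0 : ∀ s ∈ Ici a, 0 ≤ B s)
    (hK : ∀ s ∈ Ici a, (∫ t in a..s, B t) ≤ K) : IntegrableOn B (Ici a) := by
  rw [integrableOn_Ici_iff_integrableOn_Ioi]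
  apply integrableOn_Ioi_of_intervalIntegral_norm_bounded K a ?_ (tendsto_id (α := ℝ)) ?_
  · intro i
    simp only [id]
    rcases le_or_gt a i with h | h
    · exact ((hB.mono (Icc_subset_Ici_self)).integrableOn_Icc).mono_set Ioc_subset_Icc_self
    · rw [Ioc_eq_empty (not_lt.mpr h.le)]
      exact integrableOn_empty
  · simp only [id]
    filter_upwards [eventually_ge_atTop a] with i hi
    have : ∀ t ∈ uIcc a i, ‖B t‖ = B t := by
      intro t ht
      rw [uIcc_of_le hi] at ht
      exact (Real.norm_of_nonneg (h0 t ht.1))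
    rw [intervalIntegral.integral_congr this]
    exact hK i hi

/-- antitone on `Ici a`, bounded below → tendsto some limit -/
private lemma aux_tendsto_of_antitoneOn {a m : ℝ} {F : ℝ → ℝ} (hF : AntitoneOn F (Ici a))
    (hm : ∀ s ∈ Ici a, m ≤ F s) : ∃ l, Tendsto F atTop (𝓝 l) := by
  set G : ℝ → ℝ := fun s => F (max s a) with hG
  have hGanti : Antitone G := by
    intro s t hst
    exact hF (le_max_right s a) (le_max_right t a) (max_le_max hst (le_refl a))
  have hbdd : BddBelow (range G) := by
    refine ⟨m, ?_⟩
    rintro _ ⟨s, rfl⟩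
    exact hm _ (le_max_right s a)
  refine ⟨⨅ i, G i, Tendsto.congr' ?_ (tendsto_atTop_ciInf hGanti hbdd)⟩
  filter_upwards [eventually_ge_atTop a] with s hs
  simp [hG, max_eq_left hs]

variable {H : Type*} [NormedAddCommGroup H] [InnerProductSpace ℝ H] [CompleteSpace H]

/-- Gradient inequality for convex functions. -/
private lemma aux_grad_ineq {f : H → ℝ} (hconv : ConvexOn ℝ Set.univ f)
    {x g : H} (hx : HasGradientAt f g x) (w : H) : f x + ⟪g, w - x⟫ ≤ f w := by
  have hc : HasDerivAt (fun t : ℝ => x + t • (w - x)) (w - x) 0 := by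
    simpa using ((hasDerivAt_id (0:ℝ)).smul_const (w - x)).const_add x
  have hφ : HasDerivAt (fun t : ℝ => f (x + t • (w - x))) ⟪g, w - x⟫ 0 := by
    have hx' : HasFDerivAt f ((InnerProductSpace.toDual ℝ H) g) (x + (0:ℝ) • (w - x)) := by
      simpa using hx.hasFDerivAt
    have h : HasDerivAt (fun t : ℝ => f (x + t • (w - x))) _ 0 := hx'.comp_hasDerivAt 0 hc
    simpa using h
  have hslope : ∀ t ∈ Ioc (0:ℝ) 1, (f (x + t • (w - x)) - f x) / t ≤ f w - f x := by
    intro t ht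
    have hcomb := hconv.2 (mem_univ x) (mem_univ w) (by linarith [ht.2] : (0:ℝ) ≤ 1 - t)
      (le_of_lt ht.1) (by ring)
    have hxe : (1 - t) • x + t • w = x + t • (w - x) := by
      rw [smul_sub, sub_smul, one_smul]; abel
    rw [hxe] at hcomb
    simp only [smul_eq_mul] at hcomb
    rw [div_le_iff₀ ht.1]
    calc f (x + t • (w - x)) - f x ≤ ((1 - t) * f x + t * f w) - f x := by linarith
      _ = (f w - f x) * t := by ring
  have htend : Tendsto (slope (fun t : ℝ => f (x + t • (w - x))) 0) (𝓝[Ioi 0] (0:ℝ))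
      (𝓝 ⟪g, w - x⟫) := by
    have := (hφ.hasDerivWithinAt (s := Ioi 0))
    rw [hasDerivWithinAt_iff_tendsto_slope' (by simp)] at this
    exact this
  have hle : ⟪g, w - x⟫ ≤ f w - f x := by
    apply le_of_tendsto htend
    filter_upwards [inter_mem_nhdsWithin (Ioi 0) (Iio_mem_nhds one_pos)] with t ht
    rw [slope_def_field]
    have h0 : f (x + (0:ℝ) • (w - x)) = f x := by simp
    rw [sub_zero]
    simpa [h0] using hslope t ⟨ht.1, ht.2.le⟩
  linarith

/-- weak cluster point along an ultrafilter refining `atTop`, for a bounded curve -/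
private lemma aux_cluster {y : ℝ → H} {s0 MY : ℝ} (hb : ∀ s ∈ Ici s0, ‖y s‖ ≤ MY)
    (U : Ultrafilter ℝ) (hU : ↑U ≤ (atTop : Filter ℝ)) :
    ∃ p : H, ∀ v, Tendsto (fun s => ⟪y s, v⟫) U (𝓝 ⟪p, v⟫) := by
  have hmemIci : ∀ᶠ s in (U : Filter ℝ), s ∈ Ici s0 := hU (eventually_ge_atTop s0)
  have habs : ∀ (v : H), ∀ᶠ s in (U : Filter ℝ), |⟪y s, v⟫| ≤ MY * ‖v‖ := by
    intro v
    filter_upwards [hmemIci] with s hs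
    exact (abs_real_inner_le_norm _ _).trans
      (mul_le_mul_of_nonneg_right (hb s hs) (norm_nonneg v))
  have hLex : ∀ v : H, ∃ L : ℝ, Tendsto (fun s => ⟪y s, v⟫) U (𝓝 L) := by
    intro v
    have hmem : ∀ᶠ s in (U : Filter ℝ), ⟪y s, v⟫ ∈ Icc (-(MY * ‖v‖)) (MY * ‖v‖) := by
      filter_upwards [habs v] with s hs
      exact ⟨(abs_le.mp hs).1, (abs_le.mp hs).2⟩
    have hle : ↑(U.map (fun s => ⟪y s, v⟫)) ≤ 𝓟 (Icc (-(MY * ‖v‖)) (MY * ‖v‖)) := by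
      rw [Ultrafilter.coe_map, le_principal_iff]
      exact hmem
    obtain ⟨L, _, hL⟩ := isCompact_Icc.ultrafilter_le_nhds (U.map (fun s => ⟪y s, v⟫)) hle
    exact ⟨L, by rwa [Ultrafilter.coe_map] at hL⟩
  choose L hL using hLex
  have hadd : ∀ v w, L (v + w) = L v + L w := by
    intro v w
    refine tendsto_nhds_unique (hL (v + w)) (Tendsto.congr (fun s => ?_) ((hL v).add (hL w)))
    rw [inner_add_right]
  have hsmul : ∀ (r : ℝ) (v : H), L (r • v) = r * L v := by
    intro r v
    refine tendsto_nhds_unique (hL (r • v)) (Tendsto.congr (fun s => ?_) ((hL v).const_mul r))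
    rw [real_inner_smul_right]
  have hbound : ∀ v, ‖L v‖ ≤ MY * ‖v‖ := by
    intro v
    have := (hL v).abs
    rw [Real.norm_eq_abs]
    exact le_of_tendsto this (habs v)
  let φ : H →L[ℝ] ℝ := LinearMap.mkContinuous
    { toFun := L, map_add' := hadd, map_smul' := hsmul } MY hbound
  refine ⟨(InnerProductSpace.toDual ℝ H).symm φ, fun v => ?_⟩
  rw [InnerProductSpace.toDual_symm_apply]
  exact hL v

end HessianAux

set_option maxHeartbeats 1000000 in
/-- Explicit Hessian driven damping (`α > 1`): integral estimates, o(1/s²) convergence of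
the values, and weak convergence of the trajectory towards a minimizer of `f`. -/
theorem explicit_hessian_damping_estimates_and_convergence
    {H : Type*} [NormedAddCommGroup H] [InnerProductSpace ℝ H] [CompleteSpace H]
    (f : H → ℝ) (f' : H → H)
    (hconv : ConvexOn ℝ Set.univ f)
    (hgrad : ∀ x, HasGradientAt f (f' x) x)
    (hlip : ∀ s : Set H, Bornology.IsBounded s → ∃ K : NNReal, LipschitzOnWith K f' s)
    (hmin : ∃ z, ∀ v, f z ≤ f v)
    (α s0 : ℝ) (hα : 1 < α) (hs0 : 0 < s0)
    (y y' y'' G' : ℝ → H)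
    (hy : ∀ s ∈ Ici s0, HasDerivAt y (y' s) s)
    (hy' : ∀ s ∈ Ici s0, HasDerivAt y' (y'' s) s)
    (hy''cont : ContinuousOn y'' (Ici s0))
    (hG : ∀ s ∈ Ici s0, HasDerivAt (fun u => f' (y u)) (G' s) s)
    (heq : ∀ s ∈ Ici s0,
      y'' s + (α / s) • y' s + (s / (α + 1)) • G' s + f' (y s) = 0) :
    IntegrableOn (fun s => s * ‖y' s‖ ^ 2) (Ici s0) ∧
    IntegrableOn (fun s => s * (f (y s) - ⨅ v, f v)) (Ici s0) ∧
    IntegrableOn (fun s => s ^ 3 * ‖f' (y s)‖ ^ 2) (Ici s0) ∧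
    Tendsto (fun s => s ^ 2 * (f (y s) - ⨅ v, f v)) atTop (nhds 0) ∧
    ∃ xstar : H, (∀ v, f xstar ≤ f v) ∧
      ∀ v : H, Tendsto (fun s => ⟪y s - xstar, v⟫) atTop (nhds 0) := by
  clear hlip
  obtain ⟨z, hz⟩ := hmin
  set g : ℝ → H := fun s => f' (y s) with hgdef
  have hα1 : (0:ℝ) < α - 1 := by linarith
  have hc0 : (0:ℝ) < α + 1 := by linarith
  have hsPos : ∀ s ∈ Ici s0, (0:ℝ) < s := fun s hs => lt_of_lt_of_le hs0 hs
  -- value of the infimum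
  have hbddf : BddBelow (range f) := ⟨f z, by rintro _ ⟨v, rfl⟩; exact hz v⟩
  have hfinf : (⨅ v, f v) = f z := le_antisymm (ciInf_le hbddf z) (le_ciInf hz)
  -- basic continuity
  have hfdiff : Differentiable ℝ f := fun x => (hgrad x).hasFDerivAt.differentiableAt
  have hfc : Continuous f := hfdiff.continuous
  have hycont : ContinuousOn y (Ici s0) := fun s hs => (hy s hs).continuousAt.continuousWithinAt
  have hy'cont : ContinuousOn y' (Ici s0) :=
    fun s hs => (hy' s hs).continuousAt.continuousWithinAt
  have hgcont : ContinuousOn g (Ici s0) := fun s hs => (hG s hs).continuousAt.continuousWithinAt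
  have hfycont : ContinuousOn (fun t => f (y t)) (Ici s0) := hfc.comp_continuousOn hycont
  have hrpow_cont : ∀ (p : ℝ), ContinuousOn (fun s : ℝ => s ^ p) (Ici s0) := by
    intro p
    exact continuousOn_id.rpow_const (fun x hx => Or.inl (hsPos x hx).ne')
  -- ** Step 1 : reduction to a first-order equation **
  obtain ⟨C0, hy'eq⟩ : ∃ C0 : H, ∀ s ∈ Ici s0,
      y' s = (s ^ (-α) : ℝ) • C0 - (s / (α+1)) • g s := by
    refine ⟨(s0 ^ α : ℝ) • (y' s0 + (s0 / (α+1)) • g s0), ?_⟩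
    set u : ℝ → H := fun s => s • (y' s + (s / (α+1)) • g s) with hudef
    have hu_deriv : ∀ s ∈ Ici s0, HasDerivAt u (((1 - α)/s) • u s) s := by
      intro s hs
      have hinner : HasDerivAt (fun t => y' t + (t / (α+1)) • g t)
          (y'' s + ((s / (α+1)) • G' s + (1/(α+1)) • g s)) s := by
        have h1 : HasDerivAt (fun t : ℝ => t / (α+1)) (1/(α+1)) s :=
          (hasDerivAt_id s).div_const (α+1)
        exact (hy' s hs).add (h1.smul (hG s hs))
      have houter : HasDerivAt u (s • (y'' s + ((s / (α+1)) • G' s + (1/(α+1)) • g s))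
          + (1:ℝ) • (y' s + (s / (α+1)) • g s)) s := (hasDerivAt_id s).smul hinner
      have hy''eq : y'' s = -((α / s) • y' s + (s / (α+1)) • G' s + g s) := by
        refine eq_neg_of_add_eq_zero_left ?_
        have h := heq s hs
        rw [← h]; abel
      convert houter using 1
      rw [hy''eq, hudef]
      have hsne : s ≠ 0 := (hsPos s hs).ne'
      match_scalars
      all_goals (field_simp; try ring)
    have hPconst : ∀ s ∈ Ici s0, (s ^ (α-1) : ℝ) • u s = (s0 ^ (α-1) : ℝ) • u s0 := by
      intro s hs
      rcases eq_or_lt_of_le (mem_Ici.mp hs) with h | h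
      · rw [← h]
      have hcont : ContinuousOn (fun t => (t ^ (α-1) : ℝ) • u t) (Icc s0 s) := by
        intro t ht
        have htI : t ∈ Ici s0 := ht.1
        have hd : HasDerivAt (fun t => (t ^ (α-1) : ℝ) • u t) _ t :=
          (Real.hasDerivAt_rpow_const (p := α - 1) (Or.inl (hsPos t htI).ne')).smul
            (hu_deriv t htI)
        exact hd.continuousAt.continuousWithinAt
      have hderiv : ∀ t ∈ Ico s0 s,
          HasDerivWithinAt (fun t => (t ^ (α-1) : ℝ) • u t) 0 (Ici t) t := by
        intro t ht
        have htI : t ∈ Ici s0 := ht.1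
        have htpos := hsPos t htI
        have hd : HasDerivAt (fun t => (t ^ (α-1) : ℝ) • u t) _ t :=
          (Real.hasDerivAt_rpow_const (p := α - 1) (x := t) (Or.inl htpos.ne')).smul
            (hu_deriv t htI)
        have hd0 : HasDerivAt (fun t => (t ^ (α-1) : ℝ) • u t) 0 t := by
          convert hd using 1
          have hexp : t ^ (α - 1 - 1) = t ^ (α - 1) / t := by
            rw [show α - 1 - 1 = (α - 1) + (-1) by ring, Real.rpow_add htpos,
              Real.rpow_neg_one]
            ring
          rw [hexp]
          match_scalars
          all_goals (field_simp; try ring)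
        exact hd0.hasDerivWithinAt
      exact constant_of_has_deriv_right_zero hcont hderiv s (right_mem_Icc.mpr h.le)
    intro s hs
    have hspos := hsPos s hs
    have h1 : u s = (s ^ (1 - α) : ℝ) • ((s0 ^ (α-1) : ℝ) • u s0) := by
      rw [← hPconst s hs, smul_smul, ← Real.rpow_add hspos]
      norm_num
    have h2 : y' s + (s / (α+1)) • g s = (s⁻¹ : ℝ) • u s := by
      rw [hudef]
      simp only
      rw [smul_smul, inv_mul_cancel₀ hspos.ne', one_smul]
    have h3 : (s⁻¹ : ℝ) • ((s ^ (1 - α) : ℝ) • ((s0 ^ (α-1) : ℝ) • u s0))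
        = (s ^ (-α) : ℝ) • ((s0 ^ (α-1) : ℝ) • u s0) := by
      rw [smul_smul]
      congr 1
      rw [← Real.rpow_neg_one s, ← Real.rpow_add hspos]
      congr 1
      ring
    have h4 : (s0 ^ (α-1) : ℝ) • u s0 = (s0 ^ α : ℝ) • (y' s0 + (s0 / (α+1)) • g s0) := by
      rw [hudef]
      simp only
      rw [smul_smul, ← Real.rpow_add_one hs0.ne' (α-1)]
      norm_num
    rw [eq_sub_iff_add_eq, h2, h1, h3, h4]
  set N : ℝ := ‖C0‖ with hNdef
  have hN0 : (0:ℝ) ≤ N := norm_nonneg _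
  have hεnorm : ∀ s ∈ Ici s0, ‖(s ^ (-α) : ℝ) • C0‖ = s ^ (-α) * N := by
    intro s hs
    rw [norm_smul, Real.norm_eq_abs, abs_of_pos (Real.rpow_pos_of_pos (hsPos s hs) _)]
  have hr1 : ∀ s ∈ Ici s0, s ^ (1-2*α) = s * (s^(-α) * s^(-α)) := by
    intro s hs
    rw [show (1:ℝ)-2*α = 1 + -α + -α by ring, Real.rpow_add (hsPos s hs),
      Real.rpow_add (hsPos s hs), Real.rpow_one]
    ring
  -- gradient inequality
  have hgi : ∀ (x w : H), f x + ⟪f' x, w - x⟫ ≤ f w := fun x w => aux_grad_ineq hconv (hgrad x) w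
  -- derivative of the squared distance
  have hq_deriv : ∀ (p : H), ∀ s ∈ Ici s0,
      HasDerivAt (fun t => ‖y t - p‖^2) (2 * ⟪y' s, y s - p⟫) s := by
    intro p s hs
    have h1 : HasDerivAt (fun t => y t - p) (y' s) s := (hy s hs).sub_const p
    have h2 : HasDerivAt (fun t => ⟪y t - p, y t - p⟫) _ s := HasDerivAt.inner ℝ h1 h1
    have h3 : (fun t => ‖y t - p‖^2) = fun t => ⟪y t - p, y t - p⟫ := by
      funext t
      exact (real_inner_self_eq_norm_sq _).symm
    rw [h3]
    convert h2 using 1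
    rw [real_inner_comm]
    ring
  -- fundamental inner-product estimate
  have hinner0 : ∀ (p : H), ∀ s ∈ Ici s0,
      ⟪y' s, y s - p⟫ ≤ N * s^(-α) * ‖y s - p‖ - s/(α+1) * (f (y s) - f p) := by
    intro p s hs
    have h1 : ⟪y' s, y s - p⟫
        = ⟪(s ^ (-α) : ℝ) • C0, y s - p⟫ - s/(α+1) * ⟪g s, y s - p⟫ := by
      rw [hy'eq s hs, inner_sub_left, real_inner_smul_left, real_inner_smul_left]
    have h2 : ⟪(s^(-α):ℝ) • C0, y s - p⟫ ≤ N * s^(-α) * ‖y s - p‖ := by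
      calc ⟪(s^(-α):ℝ) • C0, y s - p⟫ ≤ ‖(s^(-α):ℝ) • C0‖ * ‖y s - p‖ :=
            real_inner_le_norm _ _
        _ = N * s^(-α) * ‖y s - p‖ := by rw [hεnorm s hs]; ring
    have h3 : f (y s) - f p ≤ ⟪g s, y s - p⟫ := by
      have h4 := hgi (y s) p
      have h5 : ⟪g s, p - y s⟫ = -⟪g s, y s - p⟫ := by
        rw [← inner_neg_right]
        congr 1
        abel
      rw [h5] at h4
      linarith
    have h6 : (0:ℝ) ≤ s/(α+1) := div_nonneg (hsPos s hs).le hc0.le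
    have h7 := mul_le_mul_of_nonneg_left h3 h6
    linarith
  -- boundedness of the trajectory around any minimizer
  have hbound : ∀ p : H, (∀ v, f p ≤ f v) → ∃ Mp : ℝ, 0 ≤ Mp ∧ ∀ s ∈ Ici s0, ‖y s - p‖ ≤ Mp := by
    intro p hp
    have hFd : ∀ s ∈ Ici s0, HasDerivAt
        (fun s => Real.sqrt (‖y s - p‖^2 + 1) + (N/(α-1)) * s ^ (1-α))
        ((2 * ⟪y' s, y s - p⟫) / (2 * Real.sqrt (‖y s - p‖^2 + 1))
          + (N/(α-1)) * ((1-α) * s ^ (1-α-1))) s := by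
      intro s hs
      have h1 : HasDerivAt (fun t => ‖y t - p‖^2 + 1) (2*⟪y' s, y s - p⟫) s :=
        (hq_deriv p s hs).add_const 1
      have h2 := h1.sqrt (by positivity)
      exact h2.add ((Real.hasDerivAt_rpow_const (Or.inl (hsPos s hs).ne')).const_mul _)
    have hF0 : ∀ s ∈ Ici s0, (2 * ⟪y' s, y s - p⟫) / (2 * Real.sqrt (‖y s - p‖^2 + 1))
          + (N/(α-1)) * ((1-α) * s ^ (1-α-1)) ≤ 0 := by
      intro s hs
      have hsq1 : (0:ℝ) < Real.sqrt (‖y s - p‖^2 + 1) := Real.sqrt_pos.mpr (by positivity)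
      have hlsq : ‖y s - p‖ ≤ Real.sqrt (‖y s - p‖^2 + 1) := by
        rw [Real.le_sqrt (norm_nonneg _) (by positivity)]
        linarith
      have hexp : s ^ (1-α-1) = s ^ (-α) := by
        rw [show 1-α-1 = -α by ring]
      have hrp : (0:ℝ) < s ^ (-α) := Real.rpow_pos_of_pos (hsPos s hs) _
      have hNs : (0:ℝ) ≤ N * s^(-α) := by positivity
      have hd1 : (2 * ⟪y' s, y s - p⟫) / (2 * Real.sqrt (‖y s - p‖^2 + 1))
          ≤ N * s^(-α) := by
        rw [div_le_iff₀ (by positivity)]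
        have hin := hinner0 p s hs
        have hfp : 0 ≤ f (y s) - f p := by linarith [hp (y s)]
        have h6 : (0:ℝ) ≤ s/(α+1) := div_nonneg (hsPos s hs).le hc0.le
        have h7 : ⟪y' s, y s - p⟫ ≤ N * s^(-α) * ‖y s - p‖ := by nlinarith
        have h8 : N * s^(-α) * ‖y s - p‖ ≤ N * s^(-α) * Real.sqrt (‖y s - p‖^2 + 1) :=
          mul_le_mul_of_nonneg_left hlsq hNs
        nlinarith
      have hd2 : (N/(α-1)) * ((1-α) * s ^ (1-α-1)) = -(N * s^(-α)) := by
        rw [hexp]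
        field_simp
        ring
      rw [hd2]
      linarith
    have hanti : AntitoneOn
        (fun s => Real.sqrt (‖y s - p‖^2 + 1) + (N/(α-1)) * s ^ (1-α)) (Ici s0) :=
      aux_antitoneOn (fun s hs => (hFd s hs).continuousAt.continuousWithinAt)
        (fun s hs => hFd s (Ioi_subset_Ici_self hs))
        (fun s hs => hF0 s (Ioi_subset_Ici_self hs))
    refine ⟨Real.sqrt (‖y s0 - p‖^2 + 1) + (N/(α-1)) * s0 ^ (1-α),
      add_nonneg (Real.sqrt_nonneg _)
        (mul_nonneg (div_nonneg hN0 hα1.le) (Real.rpow_nonneg hs0.le _)), ?_⟩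
    intro s hs
    have h1 := hanti (mem_Ici.mpr le_rfl) hs (mem_Ici.mp hs)
    have h2 : ‖y s - p‖ ≤ Real.sqrt (‖y s - p‖^2 + 1) := by
      rw [Real.le_sqrt (norm_nonneg _) (by positivity)]
      linarith
    have h3 : (0:ℝ) ≤ (N/(α-1)) * s ^ (1-α) :=
      mul_nonneg (div_nonneg hN0 hα1.le) (Real.rpow_nonneg (hsPos s hs).le _)
    simp only at h1
    linarith
  obtain ⟨Mz, hMz0, hMz⟩ := hbound z hz
  -- convergence of ‖y s - p‖² for minimizers p
  have hqlim : ∀ p : H, (∀ v, f p ≤ f v) →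
      ∃ l, Tendsto (fun s => ‖y s - p‖^2) atTop (𝓝 l) := by
    intro p hp
    obtain ⟨Mp, hMp0, hMp⟩ := hbound p hp
    have hQd : ∀ s ∈ Ici s0, HasDerivAt
        (fun s => ‖y s - p‖^2 + (2*Mp*N/(α-1)) * s ^ (1-α))
        (2 * ⟪y' s, y s - p⟫ + (2*Mp*N/(α-1)) * ((1-α) * s ^ (1-α-1))) s := by
      intro s hs
      exact (hq_deriv p s hs).add
        ((Real.hasDerivAt_rpow_const (Or.inl (hsPos s hs).ne')).const_mul _)
    have hQ0 : ∀ s ∈ Ici s0,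
        2 * ⟪y' s, y s - p⟫ + (2*Mp*N/(α-1)) * ((1-α) * s ^ (1-α-1)) ≤ 0 := by
      intro s hs
      have hexp : s ^ (1-α-1) = s ^ (-α) := by rw [show 1-α-1 = -α by ring]
      have hrp : (0:ℝ) < s ^ (-α) := Real.rpow_pos_of_pos (hsPos s hs) _
      have hNs : (0:ℝ) ≤ N * s^(-α) := by positivity
      have hin := hinner0 p s hs
      have hfp : 0 ≤ f (y s) - f p := by linarith [hp (y s)]
      have h6 : (0:ℝ) ≤ s/(α+1) := div_nonneg (hsPos s hs).le hc0.le
      have h7 : ⟪y' s, y s - p⟫ ≤ N * s^(-α) * ‖y s - p‖ := by nlinarith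
      have h8 : N * s^(-α) * ‖y s - p‖ ≤ N * s^(-α) * Mp :=
        mul_le_mul_of_nonneg_left (hMp s hs) hNs
      have h9 : (2*Mp*N/(α-1)) * ((1-α) * s ^ (1-α-1)) = -(2 * (N * s^(-α) * Mp)) := by
        rw [hexp]
        field_simp
        ring
      rw [h9]
      linarith
    have hanti : AntitoneOn
        (fun s => ‖y s - p‖^2 + (2*Mp*N/(α-1)) * s ^ (1-α)) (Ici s0) :=
      aux_antitoneOn (fun s hs => (hQd s hs).continuousAt.continuousWithinAt)
        (fun s hs => hQd s (Ioi_subset_Ici_self hs))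
        (fun s hs => hQ0 s (Ioi_subset_Ici_self hs))
    have hlow : ∀ s ∈ Ici s0, (0:ℝ) ≤ ‖y s - p‖^2 + (2*Mp*N/(α-1)) * s ^ (1-α) := by
      intro s hs
      have : (0:ℝ) ≤ (2*Mp*N/(α-1)) * s ^ (1-α) := by
        apply mul_nonneg (by positivity) (Real.rpow_nonneg (hsPos s hs).le _)
      positivity
    obtain ⟨l, hl⟩ := aux_tendsto_of_antitoneOn hanti hlow
    have hrt : Tendsto (fun s : ℝ => (2*Mp*N/(α-1)) * s ^ (1-α)) atTop (𝓝 0) := by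
      have h1 : Tendsto (fun s : ℝ => s ^ (1-α)) atTop (𝓝 0) := by
        have := tendsto_rpow_neg_atTop hα1
        convert this using 2 with s
        · rw [show 1-α = -(α-1) by ring]
      simpa using h1.const_mul (2*Mp*N/(α-1))
    refine ⟨l - 0, Tendsto.congr (fun s => by ring) (hl.sub hrt)⟩
  -- ** estimate (ii) : ∫ s (f(y s) - min f) < ∞ **
  have hA2d : ∀ s ∈ Ici s0, HasDerivAt
      (fun s => (1/2) * ‖y s - z‖^2 + (Mz*N/(α-1)) * s ^ (1-α))
      (⟪y' s, y s - z⟫ - Mz*N*s^(-α)) s := by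
    intro s hs
    have h1 : HasDerivAt (fun s => (1/2) * ‖y s - z‖^2 + (Mz*N/(α-1)) * s ^ (1-α)) _ s :=
      ((hq_deriv z s hs).const_mul (1/2 : ℝ)).add
      ((Real.hasDerivAt_rpow_const (p := 1-α) (Or.inl (hsPos s hs).ne')).const_mul (Mz*N/(α-1)))
    convert h1 using 1
    have hexp : s ^ (1-α-1) = s ^ (-α) := by rw [show 1-α-1 = -α by ring]
    rw [hexp]
    field_simp
    ring
  have hB2cont : ContinuousOn (fun t => (1/(α+1)) * (t * (f (y t) - f z))) (Ici s0) :=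
    continuousOn_const.mul (continuousOn_id.mul (hfycont.sub continuousOn_const))
  have hcomb2 : ∀ s ∈ Ici s0,
      (⟪y' s, y s - z⟫ - Mz*N*s^(-α)) + (1/(α+1)) * (s * (f (y s) - f z)) ≤ 0 := by
    intro s hs
    have hrp : (0:ℝ) < s ^ (-α) := Real.rpow_pos_of_pos (hsPos s hs) _
    have hNs : (0:ℝ) ≤ N * s^(-α) := by positivity
    have hin := hinner0 z s hs
    have h8 : N * s^(-α) * ‖y s - z‖ ≤ N * s^(-α) * Mz :=
      mul_le_mul_of_nonneg_left (hMz s hs) hNs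
    have h9 : s/(α+1) * (f (y s) - f z) = (1/(α+1)) * (s * (f (y s) - f z)) := by ring
    nlinarith
  have hanti2 := aux_key (A := fun s => (1/2) * ‖y s - z‖^2 + (Mz*N/(α-1)) * s ^ (1-α))
    (A' := fun s => ⟪y' s, y s - z⟫ - Mz*N*s^(-α))
    (B := fun t => (1/(α+1)) * (t * (f (y t) - f z))) hA2d hB2cont hcomb2
  have hIb : ∀ s ∈ Ici s0, (∫ t in s0..s, t * (f (y t) - f z))
      ≤ (α+1) * ((1/2) * ‖y s0 - z‖^2 + (Mz*N/(α-1)) * s0 ^ (1-α)) := by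
    intro s hs
    have h1 := hanti2 (mem_Ici.mpr le_rfl) hs (mem_Ici.mp hs)
    simp only [intervalIntegral.integral_same] at h1
    have h2 : (0:ℝ) ≤ (1/2) * ‖y s - z‖^2 + (Mz*N/(α-1)) * s ^ (1-α) := by
      have : (0:ℝ) ≤ (Mz*N/(α-1)) * s ^ (1-α) :=
        mul_nonneg (by positivity) (Real.rpow_nonneg (hsPos s hs).le _)
      positivity
    have h3 : ∫ t in s0..s, (1/(α+1)) * (t * (f (y t) - f z))
        = (1/(α+1)) * ∫ t in s0..s, t * (f (y t) - f z) := by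
      exact intervalIntegral.integral_const_mul _ _
    rw [h3] at h1
    have h4 : (1/(α+1)) * (∫ t in s0..s, t * (f (y t) - f z))
        ≤ (1/2) * ‖y s0 - z‖^2 + (Mz*N/(α-1)) * s0 ^ (1-α) := by linarith
    calc (∫ t in s0..s, t * (f (y t) - f z))
        = (α+1) * ((1/(α+1)) * ∫ t in s0..s, t * (f (y t) - f z)) := by
          field_simp
      _ ≤ (α+1) * ((1/2) * ‖y s0 - z‖^2 + (Mz*N/(α-1)) * s0 ^ (1-α)) := by
          exact mul_le_mul_of_nonneg_left h4 hc0.le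
  have hii : IntegrableOn (fun s => s * (f (y s) - f z)) (Ici s0) := by
    apply aux_integrableOn_of_bounded_primitive
      (B := fun s => s * (f (y s) - f z))
      (continuousOn_id.mul (hfycont.sub continuousOn_const))
      (fun s hs => mul_nonneg (hsPos s hs).le (by linarith [hz (y s)]))
      hIb
  -- ** estimate (iii) : ∫ s³ ‖∇f(y s)‖² < ∞ **
  have hfy_deriv : ∀ s ∈ Ici s0, HasDerivAt (fun t => f (y t)) ⟪g s, y' s⟫ s := by
    intro s hs
    have h1 : HasDerivAt (fun t => f (y t)) _ s :=
      (hgrad (y s)).hasFDerivAt.comp_hasDerivAt s (hy s hs)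
    simpa using h1
  have hA3d : ∀ s ∈ Ici s0, HasDerivAt (fun t => t^2 * (f (y t) - f z))
      (2*s*(f (y s) - f z) + s^2 * ⟪g s, y' s⟫) s := by
    intro s hs
    have h1 : HasDerivAt (fun t => t^2 * (f (y t) - f z)) _ s :=
      (hasDerivAt_pow 2 s).mul ((hfy_deriv s hs).sub_const (f z))
    convert h1 using 1
    push_cast
    ring
  have hB3cont : ContinuousOn (fun t => (1/(2*(α+1))) * (t^3 * ‖g t‖^2)
      - 2 * (t * (f (y t) - f z)) - ((α+1)/2) * N^2 * t ^ (1-2*α)) (Ici s0) := by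
    apply ContinuousOn.sub
    apply ContinuousOn.sub
    · exact continuousOn_const.mul ((continuousOn_id.pow 3).mul (hgcont.norm.pow 2))
    · exact continuousOn_const.mul (continuousOn_id.mul (hfycont.sub continuousOn_const))
    · exact continuousOn_const.mul (hrpow_cont _)
  have hcomb3 : ∀ s ∈ Ici s0,
      (2*s*(f (y s) - f z) + s^2 * ⟪g s, y' s⟫)
      + ((1/(2*(α+1))) * (s^3 * ‖g s‖^2) - 2 * (s * (f (y s) - f z))
          - ((α+1)/2) * N^2 * s ^ (1-2*α)) ≤ 0 := by
    intro s hs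
    have hsp := hsPos s hs
    have hrp : (0:ℝ) < s ^ (-α) := Real.rpow_pos_of_pos hsp _
    have hexp : ⟪g s, y' s⟫ = s^(-α) * ⟪g s, C0⟫ - s/(α+1) * ‖g s‖^2 := by
      rw [hy'eq s hs, inner_sub_right, real_inner_smul_right, real_inner_smul_right,
        real_inner_self_eq_norm_sq]
    rw [hexp, hr1 s hs]
    have heq2 : 2*s*(f (y s) - f z) + s^2 * (s^(-α) * ⟪g s, C0⟫ - s/(α+1) * ‖g s‖^2)
        + ((1/(2*(α+1))) * (s^3 * ‖g s‖^2) - 2 * (s * (f (y s) - f z))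
          - ((α+1)/2) * N^2 * (s * (s^(-α) * s^(-α))))
        = (2*(α+1)*(s^2 * s^(-α) * ⟪g s, C0⟫) - s^3*‖g s‖^2
            - (α+1)^2 * N^2 * (s * (s^(-α) * s^(-α)))) / (2*(α+1)) := by
      field_simp
      ring
    rw [heq2]
    have hnum : 2*(α+1)*(s^2 * s^(-α) * ⟪g s, C0⟫) - s^3*‖g s‖^2
        - (α+1)^2 * N^2 * (s * (s^(-α) * s^(-α))) ≤ 0 := by
      have hCb : ⟪g s, C0⟫ ≤ ‖g s‖ * N := real_inner_le_norm _ _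
      have h1 : (0:ℝ) ≤ 2*(α+1)*(s^2 * s^(-α)) := by positivity
      have h2 := mul_le_mul_of_nonneg_left hCb h1
      have h3 := mul_nonneg hsp.le (sq_nonneg (s*‖g s‖ - (α+1)*N*(s^(-α))))
      nlinarith
    exact div_nonpos_iff.mpr (Or.inr ⟨hnum, by linarith⟩)
  have hanti3 := aux_key (A := fun t => t^2 * (f (y t) - f z))
    (A' := fun s => 2*s*(f (y s) - f z) + s^2 * ⟪g s, y' s⟫)
    (B := fun t => (1/(2*(α+1))) * (t^3 * ‖g t‖^2)
      - 2 * (t * (f (y t) - f z)) - ((α+1)/2) * N^2 * t ^ (1-2*α)) hA3d hB3cont hcomb3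
  -- bounds on the pieces of the primitive of B3
  have hI3eq : ∀ s ∈ Ici s0, (∫ t in s0..s, t ^ (1-2*α))
      = (s ^ (2-2*α) - s0 ^ (2-2*α)) / (2-2*α) := by
    intro s hs
    rw [integral_rpow (Or.inr ⟨(by intro h; linarith : (1:ℝ)-2*α ≠ -1),
      Set.notMem_uIcc_of_lt hs0 (hsPos s hs)⟩)]
    rw [show (1:ℝ)-2*α+1 = 2-2*α by ring]
  have hI3b : ∀ s ∈ Ici s0, (∫ t in s0..s, t ^ (1-2*α)) ≤ s0 ^ (2-2*α) / (2*α-2) := by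
    intro s hs
    rw [hI3eq s hs]
    have hX : (0:ℝ) ≤ s ^ (2-2*α) := Real.rpow_nonneg (hsPos s hs).le _
    have hY : (0:ℝ) ≤ s0 ^ (2-2*α) := Real.rpow_nonneg hs0.le _
    have hd : (s ^ (2-2*α) - s0 ^ (2-2*α)) / (2-2*α)
        = (s0 ^ (2-2*α) - s ^ (2-2*α)) / (2*α-2) := by
      rw [div_eq_div_iff (by linarith) (by linarith)]
      ring
    rw [hd, div_le_div_iff₀ (by linarith) (by linarith)]
    nlinarith [mul_nonneg hX (by linarith : (0:ℝ) ≤ 2*α-2)]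
  have hI30 : ∀ s ∈ Ici s0, (0:ℝ) ≤ ∫ t in s0..s, t ^ (1-2*α) := by
    intro s hs
    exact intervalIntegral.integral_nonneg (mem_Ici.mp hs)
      (fun u hu => Real.rpow_nonneg (le_of_lt (lt_of_lt_of_le hs0 hu.1)) _)
  have hI20 : ∀ s ∈ Ici s0, (0:ℝ) ≤ ∫ t in s0..s, t * (f (y t) - f z) := by
    intro s hs
    exact intervalIntegral.integral_nonneg (mem_Ici.mp hs)
      (fun u hu => mul_nonneg (le_of_lt (lt_of_lt_of_le hs0 hu.1)) (by linarith [hz (y u)]))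
  have hI10 : ∀ s ∈ Ici s0, (0:ℝ) ≤ ∫ t in s0..s, t^3 * ‖g t‖^2 := by
    intro s hs
    exact intervalIntegral.integral_nonneg (mem_Ici.mp hs)
      (fun u hu => mul_nonneg (pow_nonneg (le_of_lt (lt_of_lt_of_le hs0 hu.1)) 3) (sq_nonneg _))
  have hInt1 : ∀ s ∈ Ici s0, IntervalIntegrable (fun t => t^3 * ‖g t‖^2) volume s0 s := by
    intro s hs
    exact (((continuousOn_id.pow 3).mul (hgcont.norm.pow 2)).mono
      (by rw [uIcc_of_le (mem_Ici.mp hs)]; exact Icc_subset_Ici_self)).intervalIntegrable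
  have hInt2 : ∀ s ∈ Ici s0, IntervalIntegrable (fun t => t * (f (y t) - f z)) volume s0 s := by
    intro s hs
    exact ((continuousOn_id.mul (hfycont.sub continuousOn_const)).mono
      (by rw [uIcc_of_le (mem_Ici.mp hs)]; exact Icc_subset_Ici_self)).intervalIntegrable
  have hInt3 : ∀ s ∈ Ici s0, IntervalIntegrable (fun t : ℝ => t ^ (1-2*α)) volume s0 s := by
    intro s hs
    exact ((hrpow_cont (1-2*α)).mono
      (by rw [uIcc_of_le (mem_Ici.mp hs)]; exact Icc_subset_Ici_self)).intervalIntegrable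
  have hsplit : ∀ s ∈ Ici s0, (∫ t in s0..s, ((1/(2*(α+1))) * (t^3 * ‖g t‖^2)
        - 2 * (t * (f (y t) - f z)) - ((α+1)/2) * N^2 * t ^ (1-2*α)))
      = (1/(2*(α+1))) * (∫ t in s0..s, t^3 * ‖g t‖^2)
        - 2 * (∫ t in s0..s, t * (f (y t) - f z))
        - ((α+1)/2) * N^2 * (∫ t in s0..s, t ^ (1-2*α)) := by
    intro s hs
    rw [intervalIntegral.integral_sub (((hInt1 s hs).const_mul _).sub ((hInt2 s hs).const_mul 2))
        ((hInt3 s hs).const_mul _),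
      intervalIntegral.integral_sub ((hInt1 s hs).const_mul _) ((hInt2 s hs).const_mul 2),
      intervalIntegral.integral_const_mul, intervalIntegral.integral_const_mul,
      intervalIntegral.integral_const_mul]
  have hA30 : ∀ s : ℝ, (0:ℝ) ≤ s^2 * (f (y s) - f z) :=
    fun s => mul_nonneg (sq_nonneg s) (by linarith [hz (y s)])
  have hP1b : ∀ s ∈ Ici s0, (1/(2*(α+1))) * (∫ t in s0..s, t^3*‖g t‖^2)
      ≤ s0^2 * (f (y s0) - f z)
        + 2 * ((α+1) * ((1/2) * ‖y s0 - z‖^2 + (Mz*N/(α-1)) * s0 ^ (1-α)))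
        + ((α+1)/2) * N^2 * (s0 ^ (2-2*α) / (2*α-2)) := by
    intro s hs
    have h1 := hanti3 (mem_Ici.mpr le_rfl) hs (mem_Ici.mp hs)
    simp only [intervalIntegral.integral_same] at h1
    rw [hsplit s hs] at h1
    have h2 := hIb s hs
    have h3 := hI3b s hs
    have h4 := hA30 s
    have hc2 : (0:ℝ) ≤ (α+1)/2 * N^2 := by positivity
    have h5 := mul_le_mul_of_nonneg_left h3 hc2
    linarith
  have hiii : IntegrableOn (fun s => s^3 * ‖g s‖^2) (Ici s0) := by
    apply aux_integrableOn_of_bounded_primitive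
      (B := fun s => s^3 * ‖g s‖^2)
      ((continuousOn_id.pow 3).mul (hgcont.norm.pow 2))
      (fun s hs => mul_nonneg (pow_nonneg (hsPos s hs).le 3) (sq_nonneg _))
      (K := 2*(α+1) * (s0^2 * (f (y s0) - f z)
        + 2 * ((α+1) * ((1/2) * ‖y s0 - z‖^2 + (Mz*N/(α-1)) * s0 ^ (1-α)))
        + ((α+1)/2) * N^2 * (s0 ^ (2-2*α) / (2*α-2))))
    intro s hs
    have h1 := hP1b s hs
    have h2 := mul_le_mul_of_nonneg_left h1 (by positivity : (0:ℝ) ≤ 2*(α+1))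
    have h3 : 2*(α+1) * ((1/(2*(α+1))) * (∫ t in s0..s, t^3*‖g t‖^2))
        = ∫ t in s0..s, t^3*‖g t‖^2 := by
      field_simp
    linarith
  -- ** estimate (i) : ∫ s ‖y'(s)‖² < ∞ **
  have hIrpow : IntegrableOn (fun s : ℝ => s ^ (1-2*α)) (Ici s0) := by
    rw [integrableOn_Ici_iff_integrableOn_Ioi]
    exact (integrableOn_Ioi_rpow_iff hs0).mpr (by linarith)
  have hi : IntegrableOn (fun s => s * ‖y' s‖^2) (Ici s0) := by
    have hbig : IntegrableOn
        (fun s : ℝ => 2*N^2 * s^(1-2*α) + (2/(α+1)^2) * (s^3 * ‖g s‖^2)) (Ici s0) :=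
      (hIrpow.const_mul _).add (hiii.const_mul _)
    apply Integrable.mono' hbig
    · exact (continuousOn_id.mul (hy'cont.norm.pow 2)).aestronglyMeasurable measurableSet_Ici
    · rw [ae_restrict_iff' measurableSet_Ici]
      filter_upwards with s hs
      have hsp := hsPos s hs
      have hrp : (0:ℝ) < s^(-α) := Real.rpow_pos_of_pos hsp _
      have hnb : ‖y' s‖ ≤ s^(-α) * N + s/(α+1) * ‖g s‖ := by
        rw [hy'eq s hs]
        refine (norm_sub_le _ _).trans ?_
        rw [hεnorm s hs, norm_smul, Real.norm_eq_abs,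
          abs_of_pos (by positivity : (0:ℝ) < s/(α+1))]
      have hsq : ‖y' s‖^2 ≤ (s^(-α) * N + s/(α+1) * ‖g s‖)^2 :=
        pow_le_pow_left₀ (norm_nonneg _) hnb 2
      have hfld : 2*s*(s/(α+1) * ‖g s‖)^2 = (2/(α+1)^2) * (s^3 * ‖g s‖^2) := by
        field_simp
      rw [Real.norm_eq_abs, abs_of_nonneg (by positivity)]
      rw [hr1 s hs]
      nlinarith [mul_nonneg hsp.le (sq_nonneg (s^(-α)*N - s/(α+1)*‖g s‖)),
        mul_le_mul_of_nonneg_left hsq hsp.le]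
  -- ** estimate (iv) : s² (f(y s) - min f) → 0 **
  have hP1t := intervalIntegral_tendsto_integral_Ioi s0
    (hiii.mono_set Ioi_subset_Ici_self) (tendsto_id (α := ℝ))
  have hP2t := intervalIntegral_tendsto_integral_Ioi s0
    (hii.mono_set Ioi_subset_Ici_self) (tendsto_id (α := ℝ))
  have hP3t := intervalIntegral_tendsto_integral_Ioi s0
    (hIrpow.mono_set Ioi_subset_Ici_self) (tendsto_id (α := ℝ))
  have hB3t : Tendsto (fun s => ∫ t in s0..s, ((1/(2*(α+1))) * (t^3 * ‖g t‖^2)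
        - 2 * (t * (f (y t) - f z)) - ((α+1)/2) * N^2 * t ^ (1-2*α))) atTop
      (𝓝 ((1/(2*(α+1))) * (∫ t in Ioi s0, t^3 * ‖g t‖^2)
        - 2 * (∫ t in Ioi s0, t * (f (y t) - f z))
        - ((α+1)/2) * N^2 * (∫ t in Ioi s0, t ^ (1-2*α)))) := by
    apply Tendsto.congr' ?_ (((hP1t.const_mul _).sub (hP2t.const_mul 2)).sub
      (hP3t.const_mul _))
    filter_upwards [eventually_ge_atTop s0] with s hs
    simp only [id]
    rw [hsplit s hs]
  have hF3low : ∀ s ∈ Ici s0,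
      -(2 * ((α+1) * ((1/2) * ‖y s0 - z‖^2 + (Mz*N/(α-1)) * s0 ^ (1-α)))
          + ((α+1)/2) * N^2 * (s0 ^ (2-2*α) / (2*α-2)))
        ≤ s^2 * (f (y s) - f z) + ∫ t in s0..s, ((1/(2*(α+1))) * (t^3 * ‖g t‖^2)
          - 2 * (t * (f (y t) - f z)) - ((α+1)/2) * N^2 * t ^ (1-2*α)) := by
    intro s hs
    rw [hsplit s hs]
    have h1 := hIb s hs
    have h2 := hI3b s hs
    have h3 := hI10 s hs
    have h4 := hA30 s
    have h5 := hI20 s hs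
    have hc1 : (0:ℝ) ≤ 1/(2*(α+1)) := by positivity
    have hc2 : (0:ℝ) ≤ (α+1)/2 * N^2 := by positivity
    have h6 := mul_le_mul_of_nonneg_left h2 hc2
    have h7 := mul_nonneg hc1 h3
    linarith
  obtain ⟨lF, hlF⟩ := aux_tendsto_of_antitoneOn hanti3 hF3low
  have hA3t : Tendsto (fun s => s^2 * (f (y s) - f z)) atTop
      (𝓝 (lF - ((1/(2*(α+1))) * (∫ t in Ioi s0, t^3 * ‖g t‖^2)
        - 2 * (∫ t in Ioi s0, t * (f (y t) - f z))
        - ((α+1)/2) * N^2 * (∫ t in Ioi s0, t ^ (1-2*α))))) := by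
    have h1 := hlF.sub hB3t
    exact h1.congr fun s => by ring
  have hlA0 : (0:ℝ) ≤ lF - ((1/(2*(α+1))) * (∫ t in Ioi s0, t^3 * ‖g t‖^2)
        - 2 * (∫ t in Ioi s0, t * (f (y t) - f z))
        - ((α+1)/2) * N^2 * (∫ t in Ioi s0, t ^ (1-2*α))) :=
    ge_of_tendsto hA3t (Eventually.of_forall fun s => hA30 s)
  have hlAz : lF - ((1/(2*(α+1))) * (∫ t in Ioi s0, t^3 * ‖g t‖^2)
        - 2 * (∫ t in Ioi s0, t * (f (y t) - f z))
        - ((α+1)/2) * N^2 * (∫ t in Ioi s0, t ^ (1-2*α))) = 0 := by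
    set lA := lF - ((1/(2*(α+1))) * (∫ t in Ioi s0, t^3 * ‖g t‖^2)
        - 2 * (∫ t in Ioi s0, t * (f (y t) - f z))
        - ((α+1)/2) * N^2 * (∫ t in Ioi s0, t ^ (1-2*α))) with hlAdef
    clear_value lA
    by_contra hne
    have hpos : 0 < lA := lt_of_le_of_ne hlA0 (Ne.symm hne)
    have hev : ∀ᶠ s in atTop, lA/2 < s^2 * (f (y s) - f z) :=
      hA3t.eventually (eventually_gt_nhds (by linarith))
    obtain ⟨s1, hs1⟩ := eventually_atTop.mp hev
    have hs2pos : (0:ℝ) < max s1 s0 := lt_of_lt_of_le hs0 (le_max_right _ _)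
    have hmono : IntegrableOn (fun s => s * (f (y s) - f z)) (Ici (max s1 s0)) :=
      hii.mono_set (Ici_subset_Ici.mpr (le_max_right _ _))
    have hinv : IntegrableOn (fun s : ℝ => lA/2 * s⁻¹) (Ici (max s1 s0)) := by
      apply Integrable.mono' hmono
      · apply ContinuousOn.aestronglyMeasurable _ measurableSet_Ici
        exact continuousOn_const.mul
          (continuousOn_id.inv₀ (fun x hx => (lt_of_lt_of_le hs2pos hx).ne'))
      · rw [ae_restrict_iff' measurableSet_Ici]
        filter_upwards with s hs
        have hsp : (0:ℝ) < s := lt_of_lt_of_le hs2pos hs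
        have h1 : lA/2 < s^2 * (f (y s) - f z) := hs1 s (le_trans (le_max_left _ _) hs)
        rw [Real.norm_eq_abs, abs_of_nonneg (by positivity)]
        have h2 : s^2 * (f (y s) - f z) * s⁻¹ = s * (f (y s) - f z) := by
          field_simp
        have h3 := mul_lt_mul_of_pos_right h1 (inv_pos.mpr hsp)
        linarith [h2 ▸ h3]
    have hinv2 : IntegrableOn (fun s : ℝ => s⁻¹) (Ici (max s1 s0)) := by
      have h1 := hinv.const_mul (2/lA)
      apply MeasureTheory.IntegrableOn.congr_fun h1 ?_ measurableSet_Ici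
      intro x hx
      simp only
      field_simp
    have hIoi : IntegrableOn (fun s : ℝ => s ^ (-1 : ℝ)) (Ioi (max s1 s0)) := by
      apply (hinv2.mono_set Ioi_subset_Ici_self).congr_fun ?_ measurableSet_Ioi
      intro x hx
      exact (Real.rpow_neg_one x).symm
    rw [integrableOn_Ioi_rpow_iff hs2pos] at hIoi
    linarith
  have hiv : Tendsto (fun s => s^2 * (f (y s) - f z)) atTop (𝓝 0) := hlAz ▸ hA3t
  -- convergence of the values
  have hfyt : Tendsto (fun s => f (y s)) atTop (𝓝 (f z)) := by
    have h2 : Tendsto (fun s : ℝ => (s^2)⁻¹) atTop (𝓝 0) :=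
      (tendsto_pow_atTop two_ne_zero).inv_tendsto_atTop
    have h1 : Tendsto (fun s : ℝ => s^2 * (f (y s) - f z) * (s^2)⁻¹) atTop (𝓝 0) := by
      simpa using hiv.mul h2
    have h3 : Tendsto (fun s : ℝ => f (y s) - f z) atTop (𝓝 0) := by
      apply h1.congr'
      filter_upwards [eventually_ge_atTop (max s0 1)] with s hs
      have hsp : (0:ℝ) < s := lt_of_lt_of_le (lt_of_lt_of_le hs0 (le_max_left _ _)) hs
      field_simp
    have h4 := h3.add_const (f z)
    simpa using h4
  -- ** (v) : weak convergence towards a minimizer **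
  have hYb : ∀ s ∈ Ici s0, ‖y s‖ ≤ Mz + ‖z‖ := by
    intro s hs
    calc ‖y s‖ = ‖(y s - z) + z‖ := by rw [sub_add_cancel]
      _ ≤ ‖y s - z‖ + ‖z‖ := norm_add_le _ _
      _ ≤ Mz + ‖z‖ := by linarith [hMz s hs]
  have hcluster : ∀ U : Ultrafilter ℝ, (↑U ≤ (atTop : Filter ℝ)) →
      ∃ p : H, (∀ v, f p ≤ f v) ∧ ∀ v, Tendsto (fun s => ⟪y s, v⟫) U (𝓝 ⟪p, v⟫) := by
    intro U hU
    obtain ⟨p, hp⟩ := aux_cluster hYb U hU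
    have hfpz : f p ≤ f z := by
      have h1 : ∀ s : ℝ, f p + (⟪y s, f' p⟫ - ⟪p, f' p⟫) ≤ f (y s) := by
        intro s
        have h2 := hgi p (y s)
        have h3 : ⟪f' p, y s - p⟫ = ⟪y s, f' p⟫ - ⟪p, f' p⟫ := by
          rw [inner_sub_right, real_inner_comm (f' p) (y s), real_inner_comm (f' p) p]
        rw [h3] at h2
        linarith
      have h3 : Tendsto (fun s => f p + (⟪y s, f' p⟫ - ⟪p, f' p⟫)) U
          (𝓝 (f p + (⟪p, f' p⟫ - ⟪p, f' p⟫))) :=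
        tendsto_const_nhds.add ((hp (f' p)).sub_const _)
      have h4 := hfyt.mono_left hU
      have h5 := le_of_tendsto_of_tendsto' h3 h4 h1
      simpa using h5
    exact ⟨p, fun v => le_trans hfpz (hz v), hp⟩
  obtain ⟨xstar, hxmin, hxw⟩ := hcluster (Ultrafilter.of atTop) (Ultrafilter.of_le _)
  refine ⟨hi, by simpa [hfinf] using hii, by simpa [hfinf] using hiii,
    by simpa [hfinf] using hiv, xstar, hxmin, ?_⟩
  intro v
  by_contra hnot
  rw [NormedAddCommGroup.tendsto_nhds_zero] at hnot
  push_neg at hnot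
  obtain ⟨ε, hε, hfreq⟩ := hnot
  have hne : (atTop ⊓ 𝓟 {s | ε ≤ ‖⟪y s - xstar, v⟫‖}).NeBot := frequently_iff_neBot.mp hfreq
  haveI := hne
  set UF := Ultrafilter.of (atTop ⊓ 𝓟 {s | ε ≤ ‖⟪y s - xstar, v⟫‖}) with hUFdef
  have hUFtop : (UF : Filter ℝ) ≤ atTop := (Ultrafilter.of_le _).trans inf_le_left
  have hUFP : (UF : Filter ℝ) ≤ 𝓟 {s | ε ≤ ‖⟪y s - xstar, v⟫‖} :=
    (Ultrafilter.of_le _).trans inf_le_right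
  obtain ⟨p1, hp1min, hp1w⟩ := hcluster UF hUFtop
  have hbt : Tendsto (fun s => ⟪y s - xstar, v⟫) UF (𝓝 (⟪p1, v⟫ - ⟪xstar, v⟫)) := by
    have h1 := (hp1w v).sub_const ⟪xstar, v⟫
    exact h1.congr fun s => (inner_sub_left _ _ _).symm
  have hev1 : ∀ᶠ s in (UF : Filter ℝ), ε ≤ ‖⟪y s - xstar, v⟫‖ :=
    hUFP (mem_principal_self _)
  have hεle : ε ≤ ‖⟪p1, v⟫ - ⟪xstar, v⟫‖ := ge_of_tendsto hbt.norm hev1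
  obtain ⟨l1, hl1⟩ := hqlim xstar hxmin
  obtain ⟨l2, hl2⟩ := hqlim p1 hp1min
  have hid : ∀ s, ⟪y s, xstar - p1⟫
      = ((‖y s - p1‖^2 - ‖y s - xstar‖^2) + (‖xstar‖^2 - ‖p1‖^2))/2 := by
    intro s
    rw [inner_sub_right, norm_sub_sq_real, norm_sub_sq_real]
    ring
  have hφt : Tendsto (fun s => ⟪y s, xstar - p1⟫) atTop
      (𝓝 (((l2 - l1) + (‖xstar‖^2 - ‖p1‖^2))/2)) := by
    have h1 := ((hl2.sub hl1).add_const (‖xstar‖^2 - ‖p1‖^2)).div_const 2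
    exact h1.congr fun s => (hid s).symm
  have he1 : ⟪xstar, xstar - p1⟫ = ((l2 - l1) + (‖xstar‖^2 - ‖p1‖^2))/2 :=
    tendsto_nhds_unique (hxw (xstar - p1)) (hφt.mono_left (Ultrafilter.of_le _))
  have he2 : ⟪p1, xstar - p1⟫ = ((l2 - l1) + (‖xstar‖^2 - ‖p1‖^2))/2 :=
    tendsto_nhds_unique (hp1w (xstar - p1)) (hφt.mono_left hUFtop)
  have hzero : ⟪xstar - p1, xstar - p1⟫ = (0:ℝ) := by
    rw [inner_sub_left]
    linarith
  have hxp : xstar - p1 = 0 := inner_self_eq_zero.mp hzero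
  have hp1x : p1 = xstar := by
    have := sub_eq_zero.mp hxp
    exact this.symm
  rw [hp1x, sub_self, norm_zero] at hεle
  linarith
end
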